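/- arXiv:0804.0542 — 5 statements merged into one kernel-verified Lean document; each statement's English description precedes it below -/
import Mathlib

section
/- Let g : [0,∞) → ℝⁿ be continuous and bounded with g(x) → 0 as x → ∞, and suppose the orthogonality condition ∫₀^{∞} (P₅+P₆)Y(s;x₀)⁻¹ g(s) ds = 0 holds (this integral converges absolutely). Then for every v ∈ ℝⁿ with P₁v = v, the function y(x) := Y(x;x₀)v + ∫₀^{∞} G(x,s) g(s) ds is well defined for every x > 0 (the integral converges absolutely), solves y′ = (A/x + B(x))y + g(x) on (0,∞), satisfies ‖y(x)‖ = O(x) as x → 0⁺ (in particular y(x) → 0 as x → 0⁺), and y(x) → 0 as x → ∞. -/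
open MeasureTheory Set Filter
open scoped Topology

/-- The Green function `G(x,s)` of the boundary value problem, built from the evolution
operator `Y(·;x₀)` and the six projectors `P₁, …, P₆`. -/
noncomputable def greenG {n : ℕ}
    (Y : ℝ → EuclideanSpace ℝ (Fin n) →L[ℝ] EuclideanSpace ℝ (Fin n)) (x₀ : ℝ)
    (P₁ P₂ P₃ P₄ P₅ P₆ : EuclideanSpace ℝ (Fin n) →L[ℝ] EuclideanSpace ℝ (Fin n))
    (x s : ℝ) : EuclideanSpace ℝ (Fin n) →L[ℝ] EuclideanSpace ℝ (Fin n) :=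
  if x₀ ≤ s ∧ s ≤ x then Y x ∘L (P₁ + P₂ + P₃) ∘L Ring.inverse (Y s)
  else if s ≤ x ∧ s < x₀ then Y x ∘L (P₂ + P₃) ∘L Ring.inverse (Y s)
  else if x < s ∧ s < x₀ then -(Y x ∘L (P₁ + P₄ + P₅ + P₆) ∘L Ring.inverse (Y s))
  else -(Y x ∘L (P₄ + P₅ + P₆) ∘L Ring.inverse (Y s))


section bvpHelpers
open MeasureTheory Set Filter

variable {E' : Type*} [NormedAddCommGroup E']

lemma aesm_ite_le {c : ℝ} {f₁ f₂ : ℝ → E'} {μ : MeasureTheory.Measure ℝ}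
    (h1 : AEStronglyMeasurable f₁ μ) (h2 : AEStronglyMeasurable f₂ μ) :
    AEStronglyMeasurable (fun s => if s ≤ c then f₁ s else f₂ s) μ := by
  classical
  have h : (fun s => if s ≤ c then f₁ s else f₂ s) = (Iic c).piecewise f₁ f₂ := by
    funext s; by_cases h : s ≤ c <;> simp [Set.piecewise, h]
  rw [h]
  exact AEStronglyMeasurable.piecewise measurableSet_Iic h1.restrict h2.restrict

lemma aesm_ite_lt {c : ℝ} {f₁ f₂ : ℝ → E'} {μ : MeasureTheory.Measure ℝ}
    (h1 : AEStronglyMeasurable f₁ μ) (h2 : AEStronglyMeasurable f₂ μ) :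
    AEStronglyMeasurable (fun s => if s < c then f₁ s else f₂ s) μ := by
  classical
  have h : (fun s => if s < c then f₁ s else f₂ s) = (Iio c).piecewise f₁ f₂ := by
    funext s; by_cases h : s < c <;> simp [Set.piecewise, h]
  rw [h]
  exact AEStronglyMeasurable.piecewise measurableSet_Iio h1.restrict h2.restrict

end bvpHelpers

lemma expdecay_integrableOn (γ c a : ℝ) (hγ : 0 < γ) :
    MeasureTheory.IntegrableOn (fun s => Real.exp (-(γ * (s - c)))) (Set.Ioi a) := by
  have h : MeasureTheory.IntegrableOn (fun s => Real.exp (γ * c) * Real.exp (-γ * s))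
      (Set.Ioi a) := (exp_neg_integrableOn_Ioi a hγ).const_mul (Real.exp (γ * c))
  refine h.congr_fun (fun s _ => ?_) measurableSet_Ioi
  dsimp only; rw [← Real.exp_add]; ring_nf

lemma expdecay_integral (γ c a : ℝ) (hγ : 0 < γ) :
    ∫ s in Set.Ioi a, Real.exp (-(γ * (s - c))) = Real.exp (-(γ * (a - c))) / γ := by
  have hderiv : ∀ x : ℝ, HasDerivAt (fun s => -(Real.exp (-(γ * (s - c))) / γ))
      (Real.exp (-(γ * (x - c)))) x := by
    intro x
    have hu : HasDerivAt (fun s : ℝ => -(γ * (s - c))) (-γ) x := by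
      have := ((hasDerivAt_id x).sub_const c).const_mul (-γ)
      simpa [neg_mul] using this
    have h2 := ((hu.exp).div_const γ).neg
    refine h2.congr_deriv ?_
    field_simp
  have htend : Filter.Tendsto (fun s => -(Real.exp (-(γ * (s - c))) / γ))
      Filter.atTop (nhds 0) := by
    have h1 : Filter.Tendsto (fun s : ℝ => -(γ * (s - c))) Filter.atTop Filter.atBot := by
      apply tendsto_neg_atTop_atBot.comp
      exact (tendsto_atTop_add_const_right Filter.atTop (-c) tendsto_id).const_mul_atTop hγ
        |>.congr (fun s => by simp only [id_eq]; ring)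
    have h2 := (Real.tendsto_exp_atBot.comp h1).div_const γ |>.neg
    simpa using h2
  have h3 := MeasureTheory.integral_Ioi_of_hasDerivAt_of_tendsto
    (f := fun s => -(Real.exp (-(γ * (s - c))) / γ))
    (f' := fun s => Real.exp (-(γ * (s - c))))
    ((hderiv a).continuousAt.continuousWithinAt) (fun x _ => hderiv x)
    (expdecay_integrableOn γ c a hγ) htend
  rw [h3]; ring

lemma expgrow_integral (γ x a b : ℝ) (hγ : 0 < γ) (hab : a ≤ b) :
    ∫ s in Set.Ioc a b, Real.exp (-(γ * (x - s)))
      = (Real.exp (-(γ * (x - b))) - Real.exp (-(γ * (x - a)))) / γ := by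
  have hderiv : ∀ t : ℝ, HasDerivAt (fun s => Real.exp (-(γ * (x - s))) / γ)
      (Real.exp (-(γ * (x - t)))) t := by
    intro t
    have hu : HasDerivAt (fun s : ℝ => -(γ * (x - s))) γ t := by
      have := ((hasDerivAt_id t).const_sub x).const_mul (-γ)
      simpa [neg_mul] using this
    have h2 := (hu.exp).div_const γ
    refine h2.congr_deriv ?_
    field_simp
  have hint : ∫ s in a..b, Real.exp (-(γ * (x - s)))
      = Real.exp (-(γ * (x - b))) / γ - Real.exp (-(γ * (x - a))) / γ := by
    refine intervalIntegral.integral_eq_sub_of_hasDerivAt (fun t _ => hderiv t) ?_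
    exact (Real.continuous_exp.comp (by continuity)).intervalIntegrable a b
  rw [← intervalIntegral.integral_of_le hab, hint]; ring

lemma expgrow_integral_Icc (γ x a b : ℝ) (hγ : 0 < γ) (hab : a ≤ b) :
    ∫ s in Set.Icc a b, Real.exp (-(γ * (x - s)))
      = (Real.exp (-(γ * (x - b))) - Real.exp (-(γ * (x - a)))) / γ := by
  rw [← expgrow_integral γ x a b hγ hab]
  exact MeasureTheory.integral_Icc_eq_integral_Ioc

set_option maxHeartbeats 2000000 in
/-- under the orthogonality condition
`∫₀^∞ (P₅+P₆) Y(s;x₀)⁻¹ g(s) ds = 0`, for every `v` with `P₁ v = v` the function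
`y(x) = Y(x;x₀) v + ∫₀^∞ G(x,s) g(s) ds` is well defined, solves the non-homogeneous
system, is `O(x)` as `x → 0⁺` (in particular tends to `0`), and tends to `0` at `∞`. -/
theorem solution_of_homogeneous_bvp (n : ℕ)
    (A : EuclideanSpace ℝ (Fin n) →L[ℝ] EuclideanSpace ℝ (Fin n))
    (B : ℝ → EuclideanSpace ℝ (Fin n) →L[ℝ] EuclideanSpace ℝ (Fin n))
    (hBcont : ContinuousOn B (Set.Ioi 0)) (hBbdd : ∃ M, ∀ x > (0 : ℝ), ‖B x‖ ≤ M)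
    (x₀ : ℝ) (hx₀ : 0 < x₀)
    (Y : ℝ → EuclideanSpace ℝ (Fin n) →L[ℝ] EuclideanSpace ℝ (Fin n))
    (hYd : ∀ x > (0 : ℝ), HasDerivAt Y ((x⁻¹ • A + B x) ∘L Y x) x)
    (hYx₀ : Y x₀ = 1) (hYu : ∀ x > (0 : ℝ), IsUnit (Y x))
    (P₁ P₂ P₃ P₄ P₅ P₆ : EuclideanSpace ℝ (Fin n) →L[ℝ] EuclideanSpace ℝ (Fin n))
    (hsum : P₁ + P₂ + P₃ + P₄ + P₅ + P₆ = 1)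
    (hidem : ∀ i, ![P₁, P₂, P₃, P₄, P₅, P₆] i ∘L ![P₁, P₂, P₃, P₄, P₅, P₆] i
      = ![P₁, P₂, P₃, P₄, P₅, P₆] i)
    (hdisj : ∀ i j, i ≠ j →
      ![P₁, P₂, P₃, P₄, P₅, P₆] i ∘L ![P₁, P₂, P₃, P₄, P₅, P₆] j = 0)
    (C₀ α : ℝ) (hC₀ : 0 < C₀) (hα : 0 < α)
    (hQp : ∀ x s : ℝ, 0 < x → x ≤ s → s ≤ x₀ →
      ‖Y x ∘L (P₁ + P₄) ∘L Ring.inverse (Y s)‖ ≤ C₀ * (x / s) ^ (1 + α))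
    (hQm : ∀ x s : ℝ, 0 < s → s ≤ x → x ≤ x₀ →
      ‖Y x ∘L (P₂ + P₃ + P₅ + P₆) ∘L Ring.inverse (Y s)‖ ≤ C₀ * (x / s) ^ (1 - α))
    (Cs γ : ℝ) (hCs : 0 < Cs) (hγ : 0 < γ)
    (hPm : ∀ x s : ℝ, x₀ ≤ s → s ≤ x →
      ‖Y x ∘L (P₁ + P₂ + P₃) ∘L Ring.inverse (Y s)‖ ≤ Cs * Real.exp (-(γ * (x - s))))
    (hPp : ∀ x s : ℝ, x₀ ≤ x → x ≤ s →
      ‖Y x ∘L (P₄ + P₅ + P₆) ∘L Ring.inverse (Y s)‖ ≤ Cs * Real.exp (-(γ * (s - x))))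
    -- the inhomogeneity g
    (g : ℝ → EuclideanSpace ℝ (Fin n))
    (hgcont : ContinuousOn g (Set.Ici 0)) (hgbdd : ∃ M, ∀ x ≥ (0 : ℝ), ‖g x‖ ≤ M)
    (hg0 : Tendsto g atTop (𝓝 0))
    -- the orthogonality condition
    (horthInt : IntegrableOn
      (fun s => ((P₅ + P₆) ∘L Ring.inverse (Y s)) (g s)) (Set.Ioi 0))
    (horth : ∫ s in Set.Ioi (0 : ℝ), ((P₅ + P₆) ∘L Ring.inverse (Y s)) (g s) = 0) :
    ∀ v : EuclideanSpace ℝ (Fin n), P₁ v = v →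
      ∀ y : ℝ → EuclideanSpace ℝ (Fin n),
        (∀ x, y x = Y x v
          + ∫ s in Set.Ioi (0 : ℝ), (greenG Y x₀ P₁ P₂ P₃ P₄ P₅ P₆ x s) (g s)) →
        -- well-definedness
        (∀ x > (0 : ℝ), IntegrableOn
          (fun s => (greenG Y x₀ P₁ P₂ P₃ P₄ P₅ P₆ x s) (g s)) (Set.Ioi 0)) ∧
        -- y solves the non-homogeneous system on (0, ∞)
        (∀ x > (0 : ℝ), HasDerivAt y (x⁻¹ • A (y x) + B x (y x) + g x) x) ∧
        -- ‖y(x)‖ = O(x) as x → 0⁺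
        ((fun x => y x) =O[𝓝[>] (0 : ℝ)] fun x => x) ∧
        Tendsto y (𝓝[>] 0) (𝓝 0) ∧
        -- y(x) → 0 as x → ∞
        Tendsto y atTop (𝓝 0) := by
    classical
  have p11 : P₁ ∘L P₁ = P₁ := by simpa using hidem 0
  have p22 : P₂ ∘L P₂ = P₂ := by simpa using hidem 1
  have p33 : P₃ ∘L P₃ = P₃ := by simpa using hidem 2
  have p44 : P₄ ∘L P₄ = P₄ := by simpa using hidem 3
  have p55 : P₅ ∘L P₅ = P₅ := by simpa using hidem 4
  have p66 : P₆ ∘L P₆ = P₆ := by simpa using hidem 5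
  have d12 : P₁ ∘L P₂ = 0 := by simpa using hdisj 0 1 (by decide)
  have d13 : P₁ ∘L P₃ = 0 := by simpa using hdisj 0 2 (by decide)
  have d14 : P₁ ∘L P₄ = 0 := by simpa using hdisj 0 3 (by decide)
  have d15 : P₁ ∘L P₅ = 0 := by simpa using hdisj 0 4 (by decide)
  have d16 : P₁ ∘L P₆ = 0 := by simpa using hdisj 0 5 (by decide)
  have d21 : P₂ ∘L P₁ = 0 := by simpa using hdisj 1 0 (by decide)
  have d23 : P₂ ∘L P₃ = 0 := by simpa using hdisj 1 2 (by decide)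
  have d25 : P₂ ∘L P₅ = 0 := by simpa using hdisj 1 4 (by decide)
  have d26 : P₂ ∘L P₆ = 0 := by simpa using hdisj 1 5 (by decide)
  have d31 : P₃ ∘L P₁ = 0 := by simpa using hdisj 2 0 (by decide)
  have d32 : P₃ ∘L P₂ = 0 := by simpa using hdisj 2 1 (by decide)
  have d35 : P₃ ∘L P₅ = 0 := by simpa using hdisj 2 4 (by decide)
  have d36 : P₃ ∘L P₆ = 0 := by simpa using hdisj 2 5 (by decide)
  have d41 : P₄ ∘L P₁ = 0 := by simpa using hdisj 3 0 (by decide)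
  have d45 : P₄ ∘L P₅ = 0 := by simpa using hdisj 3 4 (by decide)
  have d46 : P₄ ∘L P₆ = 0 := by simpa using hdisj 3 5 (by decide)
  have d52 : P₅ ∘L P₂ = 0 := by simpa using hdisj 4 1 (by decide)
  have d53 : P₅ ∘L P₃ = 0 := by simpa using hdisj 4 2 (by decide)
  have d56 : P₅ ∘L P₆ = 0 := by simpa using hdisj 4 5 (by decide)
  have d62 : P₆ ∘L P₂ = 0 := by simpa using hdisj 5 1 (by decide)
  have d63 : P₆ ∘L P₃ = 0 := by simpa using hdisj 5 2 (by decide)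
  have d65 : P₆ ∘L P₅ = 0 := by simpa using hdisj 5 4 (by decide)
  have c1 : (P₂ + P₃) ∘L (P₂ + P₃ + P₅ + P₆) = P₂ + P₃ := by
    simp only [ContinuousLinearMap.add_comp, ContinuousLinearMap.comp_add,
      p22, p33, d23, d32, d25, d35, d26, d36, add_zero, zero_add]
  have c2 : (P₅ + P₆) ∘L (P₂ + P₃ + P₅ + P₆) = P₅ + P₆ := by
    simp only [ContinuousLinearMap.add_comp, ContinuousLinearMap.comp_add,
      p55, p66, d52, d53, d56, d62, d63, d65, add_zero, zero_add]
  have c3 : (P₁ + P₄) ∘L P₁ = P₁ := by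
    simp only [ContinuousLinearMap.add_comp, p11, d41, add_zero]
  have c4 : (P₁ + P₄) ∘L (P₄ + P₅ + P₆) = P₄ := by
    simp only [ContinuousLinearMap.add_comp, ContinuousLinearMap.comp_add,
      p44, d14, d15, d16, d45, d46, add_zero, zero_add]
  have c5 : (P₁ + P₂ + P₃) ∘L P₁ = P₁ := by
    simp only [ContinuousLinearMap.add_comp, p11, d21, d31, add_zero]
  have c6 : (P₁ + P₂ + P₃) ∘L (P₂ + P₃) = P₂ + P₃ := by
    simp only [ContinuousLinearMap.add_comp, ContinuousLinearMap.comp_add,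
      p22, p33, d12, d13, d23, d32, add_zero, zero_add]
  have hsum1 : (P₂ + P₃) + (P₁ + P₄ + P₅ + P₆)
      = (1 : EuclideanSpace ℝ (Fin n) →L[ℝ] EuclideanSpace ℝ (Fin n)) := by
    rw [← hsum]; abel
  have hsum2 : (P₁ + P₂ + P₃) + (P₄ + P₅ + P₆)
      = (1 : EuclideanSpace ℝ (Fin n) →L[ℝ] EuclideanSpace ℝ (Fin n)) := by
    rw [← hsum]; abel
  have habel1 : -(P₁ + P₄ + P₅ + P₆) + (P₅ + P₆)
      = -((P₁ + P₄) : EuclideanSpace ℝ (Fin n) →L[ℝ] EuclideanSpace ℝ (Fin n)) := by abel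
  have habel2 : -(P₄ + P₅ + P₆) + (P₅ + P₆)
      = -(P₄ : EuclideanSpace ℝ (Fin n) →L[ℝ] EuclideanSpace ℝ (Fin n)) := by abel
  have habel3 : (P₂ + P₃) + (P₅ + P₆)
      = ((P₂ + P₃ + P₅ + P₆) : EuclideanSpace ℝ (Fin n) →L[ℝ] EuclideanSpace ℝ (Fin n)) := by
    abel
  obtain ⟨Mg, hMg⟩ := hgbdd
  have hMg0 : 0 ≤ Mg := le_trans (norm_nonneg _) (hMg 0 le_rfl)
  intro v hv y hy
  set Z : ℝ → EuclideanSpace ℝ (Fin n) →L[ℝ] EuclideanSpace ℝ (Fin n) :=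
    fun s => Ring.inverse (Y s) with hZdef
  set hh : ℝ → EuclideanSpace ℝ (Fin n) := fun s => Z s (g s) with hhdef
  set k₁ : ℝ → EuclideanSpace ℝ (Fin n) :=
    fun s => if s < x₀ then (P₂ + P₃) (hh s) else (P₁ + P₂ + P₃) (hh s) with hk₁def
  set k₂ : ℝ → EuclideanSpace ℝ (Fin n) :=
    fun s => if s < x₀ then -((P₁ + P₄ + P₅ + P₆) (hh s)) else -((P₄ + P₅ + P₆) (hh s))
    with hk₂def
  set J : ℝ → ℝ → EuclideanSpace ℝ (Fin n) := fun x s => if s ≤ x then k₁ s else k₂ s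
    with hJdef
  -- applying the identity `Y x₀ = 1`
  have happly : ∀ (P : EuclideanSpace ℝ (Fin n) →L[ℝ] EuclideanSpace ℝ (Fin n)) (s : ℝ),
      (Y x₀ ∘L P ∘L Ring.inverse (Y s)) (g s) = P (hh s) := by
    intro P s
    rw [hYx₀]
    simp [hhdef, hZdef]
  -- pointwise identification of the Green function with `Y x ∘ J x`
  have hGapp : ∀ x s : ℝ, greenG Y x₀ P₁ P₂ P₃ P₄ P₅ P₆ x s (g s) = Y x (J x s) := by
    intro x s
    unfold greenG
    rcases le_or_gt s x with hsx | hsx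
    · rcases lt_or_ge s x₀ with hsx0 | hsx0
      · rw [if_neg (by rintro ⟨h1, -⟩; exact absurd h1 (not_le.2 hsx0)), if_pos ⟨hsx, hsx0⟩]
        simp [hJdef, hk₁def, hsx, hsx0, hhdef, hZdef]
      · rw [if_pos ⟨hsx0, hsx⟩]
        simp [hJdef, hk₁def, hsx, not_lt.2 hsx0, hhdef, hZdef]
    · rcases lt_or_ge s x₀ with hsx0 | hsx0
      · rw [if_neg (by rintro ⟨-, h2⟩; exact absurd h2 (not_le.2 hsx)),
          if_neg (by rintro ⟨h1, -⟩; exact absurd h1 (not_le.2 hsx)), if_pos ⟨hsx, hsx0⟩]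
        simp [hJdef, hk₂def, not_le.2 hsx, hsx0, hhdef, hZdef]
      · rw [if_neg (by rintro ⟨-, h2⟩; exact absurd h2 (not_le.2 hsx)),
          if_neg (by rintro ⟨h1, -⟩; exact absurd h1 (not_le.2 hsx)),
          if_neg (by rintro ⟨-, h2⟩; exact absurd h2 (not_lt.2 hsx0))]
        simp [hJdef, hk₂def, not_le.2 hsx, not_lt.2 hsx0, hhdef, hZdef]
  -- continuity facts
  have hYcont : ContinuousOn Y (Ioi 0) := fun t ht => (hYd t ht).continuousAt.continuousWithinAt
  have hZcont : ContinuousOn Z (Ioi 0) := by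
    intro t ht
    have h1 : ContinuousAt Ring.inverse (Y t) := by
      have h2 := NormedRing.inverse_continuousAt (hYu t ht).unit
      simpa [IsUnit.unit_spec] using h2
    exact h1.comp_continuousWithinAt (hYcont t ht)
  have hgcont' : ContinuousOn g (Ioi 0) := hgcont.mono Set.Ioi_subset_Ici_self
  have hhcont : ContinuousOn hh (Ioi 0) := hZcont.clm_apply hgcont'
  have hhmeas : AEStronglyMeasurable hh (volume.restrict (Ioi 0)) :=
    hhcont.aestronglyMeasurable measurableSet_Ioi
  have hk₁meas : AEStronglyMeasurable k₁ (volume.restrict (Ioi 0)) :=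
    aesm_ite_lt ((P₂ + P₃).continuous.comp_aestronglyMeasurable hhmeas)
      ((P₁ + P₂ + P₃).continuous.comp_aestronglyMeasurable hhmeas)
  have hk₂meas : AEStronglyMeasurable k₂ (volume.restrict (Ioi 0)) :=
    aesm_ite_lt (((P₁ + P₄ + P₅ + P₆).continuous.comp_aestronglyMeasurable hhmeas).neg)
      (((P₄ + P₅ + P₆).continuous.comp_aestronglyMeasurable hhmeas).neg)
  have hJmeas : ∀ x : ℝ, AEStronglyMeasurable (J x) (volume.restrict (Ioi 0)) :=
    fun x => aesm_ite_le hk₁meas hk₂meas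
  -- basic norm bounds
  have hopapp : ∀ (T : EuclideanSpace ℝ (Fin n) →L[ℝ] EuclideanSpace ℝ (Fin n))
      (c : ℝ) (s : ℝ), 0 ≤ s → ‖T‖ ≤ c → ‖T (g s)‖ ≤ c * Mg := by
    intro T c s hs hT
    calc ‖T (g s)‖ ≤ ‖T‖ * ‖g s‖ := T.le_opNorm _
      _ ≤ c * Mg := mul_le_mul hT (hMg s hs) (norm_nonneg _) (le_trans (norm_nonneg _) hT)
  -- bound for `P (hh s)` when `P ∘L Q₋ = P`, on `0 < s ≤ x₀`
  have hQmb : ∀ (P : EuclideanSpace ℝ (Fin n) →L[ℝ] EuclideanSpace ℝ (Fin n)),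
      P ∘L (P₂ + P₃ + P₅ + P₆) = P → ∀ s : ℝ, 0 < s → s ≤ x₀ →
      ‖P (hh s)‖ ≤ ‖P‖ * C₀ * Mg * (x₀ / s) ^ (1 - α) := by
    intro P hP s hs hs0
    have key : P (hh s) = P ((Y x₀ ∘L (P₂ + P₃ + P₅ + P₆) ∘L Ring.inverse (Y s)) (g s)) := by
      rw [happly]
      have h2 := DFunLike.congr_fun hP (hh s)
      simp only [ContinuousLinearMap.comp_apply] at h2
      exact h2.symm
    rw [key]
    calc ‖P ((Y x₀ ∘L (P₂ + P₃ + P₅ + P₆) ∘L Ring.inverse (Y s)) (g s))‖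
        ≤ ‖P‖ * ‖(Y x₀ ∘L (P₂ + P₃ + P₅ + P₆) ∘L Ring.inverse (Y s)) (g s)‖ := P.le_opNorm _
      _ ≤ ‖P‖ * (C₀ * (x₀ / s) ^ (1 - α) * Mg) := by
          refine mul_le_mul_of_nonneg_left ?_ (norm_nonneg _)
          exact hopapp _ _ s hs.le (hQm x₀ s hs hs0 le_rfl)
      _ = ‖P‖ * C₀ * Mg * (x₀ / s) ^ (1 - α) := by ring
  -- bound for `(P₄+P₅+P₆) (hh s)` on `x₀ ≤ s`
  have hPpb : ∀ s : ℝ, x₀ ≤ s →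
      ‖(P₄ + P₅ + P₆) (hh s)‖ ≤ Cs * Mg * Real.exp (-(γ * (s - x₀))) := by
    intro s hs
    rw [← happly (P₄ + P₅ + P₆) s]
    calc ‖(Y x₀ ∘L (P₄ + P₅ + P₆) ∘L Ring.inverse (Y s)) (g s)‖
        ≤ Cs * Real.exp (-(γ * (s - x₀))) * Mg :=
          hopapp _ _ s (le_trans hx₀.le hs) (hPp x₀ s le_rfl hs)
      _ = Cs * Mg * Real.exp (-(γ * (s - x₀))) := by ring
  -- integrability of `J x` on `(0, ∞)`
  have hJint : ∀ x : ℝ, 0 < x → IntegrableOn (J x) (Ioi 0) := by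
    intro x hx
    have hm0 : 0 < min x x₀ := lt_min hx hx₀
    have hmT : min x x₀ ≤ max x x₀ := le_trans (min_le_left _ _) (le_max_left _ _)
    have hsub : Ioi (0:ℝ) ⊆ Ioo 0 (min x x₀) ∪ (Icc (min x x₀) (max x x₀) ∪ Ioi (max x x₀)) := by
      intro s hs
      rcases lt_or_ge s (min x x₀) with h | h
      · exact Or.inl ⟨hs, h⟩
      · rcases le_or_gt s (max x x₀) with h2 | h2
        · exact Or.inr (Or.inl ⟨h, h2⟩)
        · exact Or.inr (Or.inr h2)
    refine IntegrableOn.mono_set (IntegrableOn.union ?_ (IntegrableOn.union ?_ ?_)) hsub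
    · -- on (0, min x x₀): J x = (P₂+P₃) ∘ hh
      have hEq : EqOn (fun s => (P₂ + P₃) (hh s)) (J x) (Ioo 0 (min x x₀)) := by
        intro s hs
        have h1 : s ≤ x := le_of_lt (lt_of_lt_of_le hs.2 (min_le_left _ _))
        have h2 : s < x₀ := lt_of_lt_of_le hs.2 (min_le_right _ _)
        simp [hJdef, hk₁def, h1, h2]
      refine IntegrableOn.congr_fun ?_ hEq measurableSet_Ioo
      have hrint : IntegrableOn (fun s : ℝ => s ^ (α - 1)) (Ioo 0 (min x x₀)) := by
        have h1 := intervalIntegral.intervalIntegrable_rpow' (a := 0) (b := min x x₀)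
          (r := α - 1) (by linarith)
        exact ((intervalIntegrable_iff_integrableOn_Ioc_of_le hm0.le).1
          h1).mono_set Set.Ioo_subset_Ioc_self
      have hbint : IntegrableOn
          (fun s : ℝ => ‖P₂ + P₃‖ * C₀ * Mg * (x₀ / s) ^ (1 - α)) (Ioo 0 (min x x₀)) := by
        have h2 : IntegrableOn
            (fun s : ℝ => ‖P₂ + P₃‖ * C₀ * Mg * x₀ ^ (1 - α) * s ^ (α - 1))
            (Ioo 0 (min x x₀)) := hrint.const_mul (‖P₂ + P₃‖ * C₀ * Mg * x₀ ^ (1 - α))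
        refine h2.congr_fun (fun s hs => ?_) measurableSet_Ioo
        have hs0 : (0:ℝ) < s := hs.1
        beta_reduce
        rw [Real.div_rpow hx₀.le hs0.le, show α - 1 = -(1 - α) by ring,
          Real.rpow_neg hs0.le, div_eq_mul_inv]
        ring
      refine hbint.mono' ?_ ?_
      · exact (((P₂ + P₃).continuous.comp_continuousOn
          (hhcont.mono (fun s hs => hs.1))).aestronglyMeasurable measurableSet_Ioo)
      · refine (ae_restrict_iff' measurableSet_Ioo).2 (Eventually.of_forall fun s hs => ?_)
        exact hQmb (P₂ + P₃) c1 s hs.1 (le_of_lt (lt_of_lt_of_le hs.2 (min_le_right _ _)))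
    · -- on [min, max]: bounded
      have hsubset : Icc (min x x₀) (max x x₀) ⊆ Ioi (0:ℝ) :=
        fun s hs => lt_of_lt_of_le hm0 hs.1
      obtain ⟨Ch, hCh⟩ := (isCompact_Icc).exists_bound_of_continuousOn (hhcont.mono hsubset)
      have hJb : ∀ s ∈ Icc (min x x₀) (max x x₀), ‖J x s‖ ≤
          (‖P₂ + P₃‖ + ‖P₁ + P₂ + P₃‖ + ‖P₁ + P₄ + P₅ + P₆‖ + ‖P₄ + P₅ + P₆‖) * Ch := by
        intro s hs
        have hhs := hCh s hs
        have h0 : (0:ℝ) ≤ ‖hh s‖ := norm_nonneg _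
        have hb : ∀ P : EuclideanSpace ℝ (Fin n) →L[ℝ] EuclideanSpace ℝ (Fin n),
            ‖P‖ ≤ ‖P₂ + P₃‖ + ‖P₁ + P₂ + P₃‖ + ‖P₁ + P₄ + P₅ + P₆‖ + ‖P₄ + P₅ + P₆‖ →
            ‖P (hh s)‖ ≤
            (‖P₂ + P₃‖ + ‖P₁ + P₂ + P₃‖ + ‖P₁ + P₄ + P₅ + P₆‖ + ‖P₄ + P₅ + P₆‖) * Ch := by
          intro P hP
          calc ‖P (hh s)‖ ≤ ‖P‖ * ‖hh s‖ := P.le_opNorm _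
            _ ≤ _ := mul_le_mul hP hhs h0 (le_trans (norm_nonneg _) hP)
        have n1 := norm_nonneg (P₂ + P₃)
        have n2 := norm_nonneg (P₁ + P₂ + P₃)
        have n3 := norm_nonneg (P₁ + P₄ + P₅ + P₆)
        have n4 := norm_nonneg (P₄ + P₅ + P₆)
        rcases le_or_gt s x with h1 | h1
        · rcases lt_or_ge s x₀ with h2 | h2
          · have hJ2 : J x s = (P₂ + P₃) (hh s) := by
              simp only [hJdef, hk₁def]; rw [if_pos h1, if_pos h2]
            rw [hJ2]; exact hb (P₂ + P₃) (by linarith)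
          · have hJ2 : J x s = (P₁ + P₂ + P₃) (hh s) := by
              simp only [hJdef, hk₁def]; rw [if_pos h1, if_neg (not_lt.2 h2)]
            rw [hJ2]; exact hb (P₁ + P₂ + P₃) (by linarith)
        · rcases lt_or_ge s x₀ with h2 | h2
          · have hJ2 : J x s = -((P₁ + P₄ + P₅ + P₆) (hh s)) := by
              simp only [hJdef, hk₂def]; rw [if_neg (not_le.2 h1), if_pos h2]
            rw [hJ2, norm_neg]; exact hb (P₁ + P₄ + P₅ + P₆) (by linarith)
          · have hJ2 : J x s = -((P₄ + P₅ + P₆) (hh s)) := by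
              simp only [hJdef, hk₂def]; rw [if_neg (not_le.2 h1), if_neg (not_lt.2 h2)]
            rw [hJ2, norm_neg]; exact hb (P₄ + P₅ + P₆) (by linarith)
      have hconst : IntegrableOn
          (fun _ : ℝ => (‖P₂ + P₃‖ + ‖P₁ + P₂ + P₃‖ + ‖P₁ + P₄ + P₅ + P₆‖ + ‖P₄ + P₅ + P₆‖) * Ch)
          (Icc (min x x₀) (max x x₀)) := integrableOn_const measure_Icc_lt_top.ne
      refine Integrable.mono' hconst ?_ ?_
      · exact (hJmeas x).mono_measure (Measure.restrict_mono hsubset le_rfl)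
      · exact (ae_restrict_iff' measurableSet_Icc).2 (Eventually.of_forall hJb)
    · -- on (max x x₀, ∞): J x = -(P₄+P₅+P₆) ∘ hh
      have hEq : EqOn (fun s => -((P₄ + P₅ + P₆) (hh s))) (J x) (Ioi (max x x₀)) := by
        intro s hs
        have h1 : ¬ s ≤ x := not_le.2 (lt_of_le_of_lt (le_max_left _ _) hs)
        have h2 : ¬ s < x₀ := not_lt.2 (le_of_lt (lt_of_le_of_lt (le_max_right _ _) hs))
        simp [hJdef, hk₂def, h1, h2]
      refine IntegrableOn.congr_fun ?_ hEq measurableSet_Ioi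
      have hbint : IntegrableOn (fun s : ℝ => Cs * Mg * Real.exp (-(γ * (s - x₀))))
          (Ioi (max x x₀)) := (expdecay_integrableOn γ x₀ (max x x₀) hγ).const_mul (Cs * Mg)
      refine hbint.mono' ?_ ?_
      · refine ((((P₄ + P₅ + P₆).continuous.comp_continuousOn
          (hhcont.mono (fun s hs => lt_trans hm0 (lt_of_le_of_lt hmT hs)))).neg).aestronglyMeasurable
          measurableSet_Ioi)
      · refine (ae_restrict_iff' measurableSet_Ioi).2 (Eventually.of_forall fun s hs => ?_)
        rw [norm_neg]
        exact hPpb s (le_of_lt (lt_of_le_of_lt (le_max_right _ _) hs))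
  -- the Green integrand is integrable
  have hFint : ∀ x : ℝ, 0 < x → IntegrableOn
      (fun s => (greenG Y x₀ P₁ P₂ P₃ P₄ P₅ P₆ x s) (g s)) (Ioi 0) := by
    intro x hx
    have h2 : Integrable (fun s => Y x (J x s)) (volume.restrict (Ioi 0)) :=
      (Y x).integrable_comp (hJint x hx)
    exact h2.congr (Eventually.of_forall (fun s => (hGapp x s).symm))
  -- the integral as `Y x` applied to a vector integral
  set u : ℝ → EuclideanSpace ℝ (Fin n) := fun x => ∫ s in Ioi (0:ℝ), J x s with hudef
  have hGint_eq : ∀ x : ℝ, 0 < x →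
      (∫ s in Ioi (0:ℝ), (greenG Y x₀ P₁ P₂ P₃ P₄ P₅ P₆ x s) (g s)) = Y x (u x) := by
    intro x hx
    rw [show (fun s => (greenG Y x₀ P₁ P₂ P₃ P₄ P₅ P₆ x s) (g s))
        = fun s => Y x (J x s) from funext (fun s => hGapp x s)]
    exact ContinuousLinearMap.integral_comp_comm _ (hJint x hx)
  have hyu : ∀ x : ℝ, 0 < x → y x = Y x (v + u x) := by
    intro x hx
    rw [hy x, hGint_eq x hx, map_add]
  have horthInt' : IntegrableOn (fun s => (P₅ + P₆) (hh s)) (Ioi 0) := by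
    refine horthInt.congr (Eventually.of_forall fun s => ?_)
    simp [hhdef, hZdef]
  have horth' : (∫ s in Ioi (0:ℝ), (P₅ + P₆) (hh s)) = 0 := by
    rw [← horth]
    congr 1
  have hvQ : (P₁ + P₄) v = v := by
    conv_lhs => rw [← hv]
    rw [← ContinuousLinearMap.comp_apply, c3, hv]
  have hvP : (P₁ + P₂ + P₃) v = v := by
    conv_lhs => rw [← hv]
    rw [← ContinuousLinearMap.comp_apply, c5, hv]
  set K : ℝ := C₀ * ‖v‖ / x₀ + C₀ * Mg / α + C₀ * Mg / α + C₀ * Cs * Mg / (γ * x₀) with hKdef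
  have hK0 : 0 ≤ K := by
    have := norm_nonneg v
    positivity
  have hsmall : ∀ x : ℝ, 0 < x → x < x₀ → ‖y x‖ ≤ K * x := by
    intro x hx hxx₀
    have hq : 0 < x / x₀ := div_pos hx hx₀
    have hq1 : x / x₀ ≤ 1 := (div_le_one hx₀).2 hxx₀.le
    have hrp : (x / x₀) ^ (1 + α) ≤ x / x₀ := by
      have h1 : (x / x₀) ^ (1 + α) = (x / x₀) * (x / x₀) ^ α := by
        rw [Real.rpow_add hq, Real.rpow_one]
      rw [h1]
      have h2 : (x / x₀) * (x / x₀) ^ α ≤ (x / x₀) * 1 :=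
        mul_le_mul_of_nonneg_left (Real.rpow_le_one hq.le hq1 hα.le) hq.le
      simpa using h2
    have hQ14 : ∀ w : EuclideanSpace ℝ (Fin n),
        ‖Y x ((P₁ + P₄) w)‖ ≤ C₀ * (x / x₀) ^ (1 + α) * ‖w‖ := by
      intro w
      have h1 : Y x ((P₁ + P₄) w) = (Y x ∘L (P₁ + P₄) ∘L Ring.inverse (Y x₀)) w := by
        rw [hYx₀, Ring.inverse_one]
        simp
      rw [h1]
      exact le_trans (ContinuousLinearMap.le_opNorm _ _)
        (mul_le_mul_of_nonneg_right (hQp x x₀ hx hxx₀.le le_rfl) (norm_nonneg _))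
    have hterm1 : ‖Y x v‖ ≤ C₀ * ‖v‖ / x₀ * x := by
      have h2 : ‖Y x v‖ ≤ C₀ * (x / x₀) ^ (1 + α) * ‖v‖ := by
        conv_lhs => rw [← hvQ]
        exact hQ14 v
      calc ‖Y x v‖ ≤ C₀ * (x / x₀) ^ (1 + α) * ‖v‖ := h2
        _ ≤ C₀ * (x / x₀) * ‖v‖ :=
            mul_le_mul_of_nonneg_right (mul_le_mul_of_nonneg_left hrp hC₀.le) (norm_nonneg _)
        _ = C₀ * ‖v‖ / x₀ * x := by field_simp
    have hWint : IntegrableOn (fun s => J x s + (P₅ + P₆) (hh s)) (Ioi 0) :=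
      (hJint x hx).add horthInt'
    have hWeq : Y x (u x) = ∫ s in Ioi (0:ℝ), Y x (J x s + (P₅ + P₆) (hh s)) := by
      have h3 : u x = ∫ s in Ioi (0:ℝ), (J x s + (P₅ + P₆) (hh s)) := by
        rw [MeasureTheory.integral_add (hJint x hx) horthInt', horth', add_zero]
      rw [h3]
      exact (ContinuousLinearMap.integral_comp_comm _ hWint).symm
    set bfun : ℝ → ℝ := fun s =>
      if s ≤ x then C₀ * (x / s) ^ (1 - α) * Mg
      else if s < x₀ then C₀ * (x / s) ^ (1 + α) * Mg
      else C₀ * (x / x₀) ^ (1 + α) * (Cs * Mg * Real.exp (-(γ * (s - x₀)))) with hbfundef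
    have hptw : ∀ s ∈ Ioi (0:ℝ), ‖Y x (J x s + (P₅ + P₆) (hh s))‖ ≤ bfun s := by
      intro s hs
      rcases le_or_gt s x with h1 | h1
      · have h2 : s < x₀ := lt_of_le_of_lt h1 hxx₀
        have hJ2 : J x s = (P₂ + P₃) (hh s) := by
          simp only [hJdef, hk₁def]; rw [if_pos h1, if_pos h2]
        have h4 : J x s + (P₅ + P₆) (hh s) = (P₂ + P₃ + P₅ + P₆) (hh s) := by
          rw [hJ2, ← ContinuousLinearMap.add_apply, habel3]
        have h5 : Y x ((P₂ + P₃ + P₅ + P₆) (hh s))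
            = (Y x ∘L (P₂ + P₃ + P₅ + P₆) ∘L Ring.inverse (Y s)) (g s) := by
          simp [hhdef, hZdef]
        rw [h4, h5, hbfundef]
        simp only [if_pos h1]
        exact hopapp _ _ s (le_of_lt hs) (hQm x s hs h1 hxx₀.le)
      · rcases lt_or_ge s x₀ with h2 | h2
        · have hJ2 : J x s = -((P₁ + P₄ + P₅ + P₆) (hh s)) := by
            simp only [hJdef, hk₂def]; rw [if_neg (not_le.2 h1), if_pos h2]
          have h4 : J x s + (P₅ + P₆) (hh s) = -((P₁ + P₄) (hh s)) := by
            rw [hJ2, ← ContinuousLinearMap.neg_apply, ← ContinuousLinearMap.add_apply, habel1,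
              ContinuousLinearMap.neg_apply]
          have h5 : Y x ((P₁ + P₄) (hh s))
              = (Y x ∘L (P₁ + P₄) ∘L Ring.inverse (Y s)) (g s) := by
            simp [hhdef, hZdef]
          rw [h4, map_neg, norm_neg, h5, hbfundef]
          simp only [if_neg (not_le.2 h1), if_pos h2]
          exact hopapp _ _ s (le_of_lt hs) (hQp x s hx h1.le h2.le)
        · have hJ2 : J x s = -((P₄ + P₅ + P₆) (hh s)) := by
            simp only [hJdef, hk₂def]; rw [if_neg (not_le.2 h1), if_neg (not_lt.2 h2)]
          have h4 : J x s + (P₅ + P₆) (hh s) = -(P₄ (hh s)) := by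
            rw [hJ2, ← ContinuousLinearMap.neg_apply, ← ContinuousLinearMap.add_apply, habel2,
              ContinuousLinearMap.neg_apply]
          have h6 : P₄ (hh s) = (P₁ + P₄) ((P₄ + P₅ + P₆) (hh s)) := by
            have h7 := DFunLike.congr_fun c4 (hh s)
            simp only [ContinuousLinearMap.comp_apply] at h7
            exact h7.symm
          rw [h4, map_neg, norm_neg, h6, hbfundef]
          simp only [if_neg (not_le.2 h1), if_neg (not_lt.2 h2)]
          exact le_trans (hQ14 _) (mul_le_mul_of_nonneg_left (hPpb s h2) (by positivity))
    have hEq1 : EqOn (fun s : ℝ => C₀ * Mg * x ^ (1 - α) * s ^ (α - 1)) bfun (Ioc 0 x) := by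
      intro s hsm
      have hs0 : (0:ℝ) < s := hsm.1
      simp only [hbfundef, if_pos hsm.2]
      rw [Real.div_rpow hx.le hs0.le, show α - 1 = -(1 - α) by ring,
        Real.rpow_neg hs0.le, div_eq_mul_inv]
      ring
    have hEq2 : EqOn (fun s : ℝ => C₀ * Mg * x ^ (1 + α) * s ^ (-1 - α)) bfun (Ioo x x₀) := by
      intro s hsm
      have hs0 : (0:ℝ) < s := lt_trans hx hsm.1
      simp only [hbfundef, if_neg (not_le.2 hsm.1), if_pos hsm.2]
      rw [Real.div_rpow hx.le hs0.le, show -1 - α = -(1 + α) by ring,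
        Real.rpow_neg hs0.le, div_eq_mul_inv]
      ring
    have hEq3 : EqOn (fun s : ℝ => (C₀ * (x / x₀) ^ (1 + α) * (Cs * Mg))
        * Real.exp (-(γ * (s - x₀)))) bfun (Ici x₀) := by
      intro s hsm
      simp only [hbfundef, if_neg (not_le.2 (lt_of_lt_of_le hxx₀ (Set.mem_Ici.1 hsm))), if_neg (not_lt.2 (Set.mem_Ici.1 hsm))]
      ring
    have hint1 : IntegrableOn bfun (Ioc 0 x) := by
      have hrint : IntegrableOn (fun s : ℝ => s ^ (α - 1)) (Ioc 0 x) :=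
        (intervalIntegrable_iff_integrableOn_Ioc_of_le hx.le).1
          (intervalIntegral.intervalIntegrable_rpow' (by linarith))
      have h8 : IntegrableOn (fun s : ℝ => C₀ * Mg * x ^ (1 - α) * s ^ (α - 1)) (Ioc 0 x) :=
        hrint.const_mul _
      exact h8.congr_fun hEq1 measurableSet_Ioc
    have hint2 : IntegrableOn bfun (Ioo x x₀) := by
      have hrint : IntegrableOn (fun s : ℝ => s ^ (-1 - α)) (Ioo x x₀) := by
        refine ((intervalIntegrable_iff_integrableOn_Ioc_of_le hxx₀.le).1
          ?_).mono_set Set.Ioo_subset_Ioc_self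
        refine intervalIntegral.intervalIntegrable_rpow (Or.inr ?_)
        rw [Set.uIcc_of_le hxx₀.le]
        rintro ⟨h0, -⟩; linarith
      have h8 : IntegrableOn (fun s : ℝ => C₀ * Mg * x ^ (1 + α) * s ^ (-1 - α)) (Ioo x x₀) :=
        hrint.const_mul _
      exact h8.congr_fun hEq2 measurableSet_Ioo
    have hint3 : IntegrableOn bfun (Ici x₀) := by
      have h8 : IntegrableOn (fun s : ℝ => (C₀ * (x / x₀) ^ (1 + α) * (Cs * Mg))
          * Real.exp (-(γ * (s - x₀)))) (Ici x₀) := by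
        rw [integrableOn_Ici_iff_integrableOn_Ioi]
        exact (expdecay_integrableOn γ x₀ x₀ hγ).const_mul _
      exact h8.congr_fun hEq3 measurableSet_Ici
    have hu1 : Ioo x x₀ ∪ Ici x₀ = Ioi x := Set.Ioo_union_Ici_eq_Ioi hxx₀
    have hu2 : Ioc 0 x ∪ Ioi x = Ioi (0:ℝ) := Set.Ioc_union_Ioi_eq_Ioi hx.le
    have hintIoix : IntegrableOn bfun (Ioi x) := by
      rw [← hu1]; exact hint2.union hint3
    have hbfun_int : IntegrableOn bfun (Ioi 0) := by
      rw [← hu2]; exact hint1.union hintIoix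
    have hdisj2 : Disjoint (Ioo x x₀) (Ici x₀) :=
      Set.disjoint_left.2 fun z hz hz' => absurd hz.2 (not_lt.2 hz')
    have hdisj1 : Disjoint (Ioc (0:ℝ) x) (Ioi x) :=
      Set.disjoint_left.2 fun z hz hz' => absurd hz' (not_lt.2 hz.2)
    have hIfull : (∫ s in Ioi (0:ℝ), bfun s)
        = (∫ s in Ioc (0:ℝ) x, bfun s)
          + ((∫ s in Ioo x x₀, bfun s) + (∫ s in Ici x₀, bfun s)) := by
      rw [← hu2, MeasureTheory.setIntegral_union hdisj1 measurableSet_Ioi hint1 hintIoix]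
      congr 1
      rw [← hu1, MeasureTheory.setIntegral_union hdisj2 measurableSet_Ici hint2 hint3]
    have hI1 : (∫ s in Ioc (0:ℝ) x, bfun s) ≤ C₀ * Mg / α * x := by
      rw [← MeasureTheory.setIntegral_congr_fun measurableSet_Ioc hEq1,
        MeasureTheory.integral_const_mul]
      have hv1 : (∫ s in Ioc (0:ℝ) x, s ^ (α - 1)) = x ^ α / α := by
        rw [← intervalIntegral.integral_of_le hx.le,
          integral_rpow (Or.inl (by linarith : (-1:ℝ) < α - 1))]
        rw [show α - 1 + 1 = α by ring, Real.zero_rpow hα.ne']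
        ring
      rw [hv1]
      apply le_of_eq
      calc C₀ * Mg * x ^ (1 - α) * (x ^ α / α)
          = C₀ * Mg / α * (x ^ (1 - α) * x ^ α) := by ring
        _ = C₀ * Mg / α * x := by
            rw [← Real.rpow_add hx, show 1 - α + α = 1 by ring, Real.rpow_one]
    have hI2 : (∫ s in Ioo x x₀, bfun s) ≤ C₀ * Mg / α * x := by
      rw [← MeasureTheory.setIntegral_congr_fun measurableSet_Ioo hEq2,
        MeasureTheory.integral_const_mul]
      have hnotmem : (0:ℝ) ∉ Set.uIcc x x₀ := by
        rw [Set.uIcc_of_le hxx₀.le]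
        rintro ⟨h0, -⟩; linarith
      have hv2 : (∫ s in Ioo x x₀, s ^ (-1 - α)) = (x ^ (-α) - x₀ ^ (-α)) / α := by
        rw [← MeasureTheory.integral_Ioc_eq_integral_Ioo,
          ← intervalIntegral.integral_of_le hxx₀.le,
          integral_rpow (Or.inr ⟨by intro hcon; linarith [hα], hnotmem⟩)]
        rw [show -1 - α + 1 = -α by ring, div_neg, ← neg_div, neg_sub]
      rw [hv2]
      have hstep : (x ^ (-α) - x₀ ^ (-α)) / α ≤ x ^ (-α) / α := by
        rw [sub_div]
        exact sub_le_self _ (by positivity)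
      calc C₀ * Mg * x ^ (1 + α) * ((x ^ (-α) - x₀ ^ (-α)) / α)
          ≤ C₀ * Mg * x ^ (1 + α) * (x ^ (-α) / α) :=
            mul_le_mul_of_nonneg_left hstep (by positivity)
        _ = C₀ * Mg / α * (x ^ (1 + α) * x ^ (-α)) := by ring
        _ = C₀ * Mg / α * x := by
            rw [← Real.rpow_add hx, show 1 + α + -α = 1 by ring, Real.rpow_one]
    have hI3 : (∫ s in Ici x₀, bfun s) ≤ C₀ * Cs * Mg / (γ * x₀) * x := by
      rw [← MeasureTheory.setIntegral_congr_fun measurableSet_Ici hEq3,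
        MeasureTheory.integral_Ici_eq_integral_Ioi, MeasureTheory.integral_const_mul,
        expdecay_integral γ x₀ x₀ hγ, sub_self, mul_zero, neg_zero, Real.exp_zero]
      calc C₀ * (x / x₀) ^ (1 + α) * (Cs * Mg) * (1 / γ)
          ≤ C₀ * (x / x₀) * (Cs * Mg) * (1 / γ) := by
            have h9 : (0:ℝ) ≤ Cs * Mg := by positivity
            have h10 : (0:ℝ) ≤ 1 / γ := by positivity
            exact mul_le_mul_of_nonneg_right
              (mul_le_mul_of_nonneg_right (mul_le_mul_of_nonneg_left hrp hC₀.le) h9) h10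
        _ = C₀ * Cs * Mg / (γ * x₀) * x := by field_simp
    calc ‖y x‖ = ‖Y x v + Y x (u x)‖ := by rw [hyu x hx, map_add]
      _ ≤ ‖Y x v‖ + ‖Y x (u x)‖ := norm_add_le _ _
      _ ≤ C₀ * ‖v‖ / x₀ * x + (∫ s in Ioi (0:ℝ), bfun s) := by
          refine add_le_add hterm1 ?_
          rw [hWeq]
          exact MeasureTheory.norm_integral_le_of_norm_le hbfun_int
            ((ae_restrict_iff' measurableSet_Ioi).2 (Eventually.of_forall hptw))
      _ ≤ C₀ * ‖v‖ / x₀ * x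
          + (C₀ * Mg / α * x + (C₀ * Mg / α * x + C₀ * Cs * Mg / (γ * x₀) * x)) := by
          refine add_le_add le_rfl ?_
          rw [hIfull]
          exact add_le_add hI1 (add_le_add hI2 hI3)
      _ = K * x := by rw [hKdef]; ring
  refine ⟨hFint, ?_, ?_, ?_, ?_⟩
  · -- derivative
    intro x hx
    have hu_rep : ∀ a b : ℝ, 0 < a → a ≤ b → u b = u a + ∫ s in Ioc a b, hh s := by
      intro a b ha hab
      have hJa := hJint a ha
      have hJb := hJint b (lt_of_lt_of_le ha hab)
      have hdiff : (fun s => J b s - J a s) = (Ioc a b).indicator hh := by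
        funext s
        rcases le_or_gt s a with h1 | h1
        · have h2 : s ≤ b := le_trans h1 hab
          have h3 : J b s = J a s := by simp only [hJdef]; rw [if_pos h2, if_pos h1]
          have h4 : s ∉ Ioc a b := fun hm => absurd hm.1 (not_lt.2 h1)
          simp [h3, Set.indicator_of_notMem h4]
        · rcases le_or_gt s b with h2 | h2
          · have hJb2 : J b s = k₁ s := by simp only [hJdef]; rw [if_pos h2]
            have hJa2 : J a s = k₂ s := by simp only [hJdef]; rw [if_neg (not_le.2 h1)]
            rw [hJb2, hJa2, Set.indicator_of_mem (Set.mem_Ioc.2 ⟨h1, h2⟩)]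
            by_cases h3 : s < x₀
            · simp only [hk₁def, hk₂def]; rw [if_pos h3, if_pos h3]
              rw [sub_neg_eq_add, ← ContinuousLinearMap.add_apply, hsum1,
                ContinuousLinearMap.one_apply]
            · simp only [hk₁def, hk₂def]; rw [if_neg h3, if_neg h3]
              rw [sub_neg_eq_add, ← ContinuousLinearMap.add_apply, hsum2,
                ContinuousLinearMap.one_apply]
          · have h3 : J b s = J a s := by
              simp only [hJdef]
              rw [if_neg (not_le.2 h2), if_neg (not_le.2 (lt_of_le_of_lt hab h2))]
            have h4 : s ∉ Ioc a b := fun hm => absurd hm.2 (not_le.2 h2)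
            simp [h3, Set.indicator_of_notMem h4]
      have h5 : u b - u a = ∫ s in Ioi (0:ℝ), (J b s - J a s) :=
        (MeasureTheory.integral_sub hJb hJa).symm
      have h6 : (∫ s in Ioi (0:ℝ), (J b s - J a s))
          = ∫ s in Ioc a b, hh s := by
        rw [show (fun s => J b s - J a s) = (Ioc a b).indicator hh from hdiff]
        have hss : Ioi (0:ℝ) ∩ Ioc a b = Ioc a b :=
          Set.inter_eq_right.2 (fun z hz => lt_trans ha hz.1)
        rw [MeasureTheory.setIntegral_indicator measurableSet_Ioc, hss]
      have h7 := h5.trans h6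
      rw [← h7]; abel
    have ha : 0 < x/2 := by linarith
    have hw : HasDerivAt u (hh x) x := by
      have hmemIoi : Ioi (x/2) ∈ 𝓝 x := Ioi_mem_nhds (by linarith)
      have hII : IntervalIntegrable hh volume (x/2) x := by
        apply ContinuousOn.intervalIntegrable
        apply hhcont.mono
        rw [Set.uIcc_of_le (by linarith)]
        intro t ht; exact lt_of_lt_of_le ha ht.1
      have hSM : StronglyMeasurableAtFilter hh (𝓝 x) volume :=
        ⟨Ioi 0, Ioi_mem_nhds hx, hhmeas⟩
      have hCA : ContinuousAt hh x := hhcont.continuousAt (Ioi_mem_nhds hx)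
      have hFTC := intervalIntegral.integral_hasDerivAt_right hII hSM hCA
      refine HasDerivAt.congr_of_eventuallyEq ((hFTC.const_add (u (x/2)))) ?_
      filter_upwards [hmemIoi] with t ht
      rw [hu_rep (x/2) t ha (le_of_lt ht), intervalIntegral.integral_of_le (le_of_lt ht)]
    have hyd : HasDerivAt (fun t => Y t (v + u t))
        (((x⁻¹ • A + B x) ∘L Y x) (v + u x) + Y x (hh x)) x := by
      have h6 := (hYd x hx).clm_apply ((hasDerivAt_const x v).add hw)
      simpa using h6
    have hEq2 : y =ᶠ[𝓝 x] fun t => Y t (v + u t) := by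
      filter_upwards [Ioi_mem_nhds hx] with t ht using hyu t ht
    have hyd2 := hyd.congr_of_eventuallyEq hEq2
    have hYZ : Y x (hh x) = g x := by
      have h7 : (Y x) * Z x = 1 := Ring.mul_inverse_cancel _ (hYu x hx)
      have h8 := DFunLike.congr_fun h7 (g x)
      simpa [hhdef, hZdef, ContinuousLinearMap.mul_apply] using h8
    refine hyd2.congr_deriv ?_
    rw [hyu x hx, hYZ]
    simp [ContinuousLinearMap.comp_apply, ContinuousLinearMap.add_apply,
      ContinuousLinearMap.smul_apply]
  · -- big O
    rw [Asymptotics.isBigO_iff]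
    refine ⟨K, ?_⟩
    filter_upwards [Ioo_mem_nhdsGT_of_mem (Set.mem_Ico.2 ⟨le_rfl, hx₀⟩)] with t ht
    rw [Real.norm_eq_abs t, abs_of_pos ht.1]
    exact hsmall t ht.1 ht.2
  · -- tendsto at 0+
    have hb1 : ∀ᶠ t in 𝓝[>] (0:ℝ), ‖y t‖ ≤ K * t := by
      filter_upwards [Ioo_mem_nhdsGT_of_mem (Set.mem_Ico.2 ⟨le_rfl, hx₀⟩)] with t ht
      exact hsmall t ht.1 ht.2
    have hb2 : Tendsto (fun t : ℝ => K * t) (𝓝[>] 0) (𝓝 0) := by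
      have h1 : Tendsto (fun t : ℝ => K * t) (𝓝 0) (𝓝 (K * 0)) :=
        (continuous_const.mul continuous_id).tendsto 0
      simpa using h1.mono_left nhdsWithin_le_nhds
    exact squeeze_zero_norm' hb1 hb2
  · -- tendsto at ∞
    have hPm14 : ∀ x : ℝ, x₀ ≤ x → ∀ w : EuclideanSpace ℝ (Fin n),
        ‖Y x ((P₁ + P₂ + P₃) w)‖ ≤ Cs * Real.exp (-(γ * (x - x₀))) * ‖w‖ := by
      intro x hx w
      have h1 : Y x ((P₁ + P₂ + P₃) w) = (Y x ∘L (P₁ + P₂ + P₃) ∘L Ring.inverse (Y x₀)) w := by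
        rw [hYx₀, Ring.inverse_one]; simp
      rw [h1]
      exact le_trans (ContinuousLinearMap.le_opNorm _ _)
        (mul_le_mul_of_nonneg_right (hPm x x₀ le_rfl hx) (norm_nonneg _))
    set I₁ : ℝ := ∫ s in Ioo (0:ℝ) x₀, ‖P₂ + P₃‖ * C₀ * Mg * (x₀ / s) ^ (1 - α) with hI₁def
    have hI₁int : IntegrableOn (fun s : ℝ => ‖P₂ + P₃‖ * C₀ * Mg * (x₀ / s) ^ (1 - α))
        (Ioo (0:ℝ) x₀) := by
      have hrint : IntegrableOn (fun s : ℝ => s ^ (α - 1)) (Ioo 0 x₀) :=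
        ((intervalIntegrable_iff_integrableOn_Ioc_of_le hx₀.le).1
          (intervalIntegral.intervalIntegrable_rpow' (by linarith))).mono_set
          Set.Ioo_subset_Ioc_self
      have h8 : IntegrableOn
          (fun s : ℝ => ‖P₂ + P₃‖ * C₀ * Mg * x₀ ^ (1 - α) * s ^ (α - 1)) (Ioo 0 x₀) :=
        hrint.const_mul _
      refine h8.congr_fun (fun s hs => ?_) measurableSet_Ioo
      have hs0 : (0:ℝ) < s := hs.1
      beta_reduce
      rw [Real.div_rpow hx₀.le hs0.le, show α - 1 = -(1 - α) by ring,
        Real.rpow_neg hs0.le, div_eq_mul_inv]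
      ring
    have hI₁0 : 0 ≤ I₁ := by
      rw [hI₁def]
      refine MeasureTheory.setIntegral_nonneg measurableSet_Ioo (fun s hs => ?_)
      have hs0 : (0:ℝ) < s := hs.1
      positivity
    rw [NormedAddCommGroup.tendsto_nhds_zero]
    intro ε hε
    set δ : ℝ := ε / 5 with hδdef
    have hδ : 0 < δ := by positivity
    set εg : ℝ := γ * δ / (2 * Cs) with hεgdef
    have hεg : 0 < εg := by positivity
    obtain ⟨X₂, hX₂⟩ := (Filter.eventually_atTop).1
      ((NormedAddCommGroup.tendsto_nhds_zero.1 hg0) εg hεg)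
    have hRlim : Tendsto (fun R : ℝ => Cs * Mg / γ * Real.exp (-(γ * R))) atTop (𝓝 0) := by
      have h1 : Tendsto (fun R : ℝ => γ * R) atTop atTop :=
        (tendsto_id.const_mul_atTop hγ)
      have h2 : Tendsto (fun R : ℝ => Real.exp (-(γ * R))) atTop (𝓝 0) :=
        Real.tendsto_exp_atBot.comp (tendsto_neg_atTop_atBot.comp h1)
      simpa using h2.const_mul (Cs * Mg / γ)
    obtain ⟨R, hRprop⟩ := ((hRlim.eventually (eventually_lt_nhds hδ |>.mono (fun z hz => hz))).and
      (eventually_ge_atTop (0:ℝ))).exists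
    obtain ⟨hRlt, hR0⟩ := hRprop
    have hev1 : Tendsto (fun x : ℝ => Cs * ‖v‖ * Real.exp (-(γ * (x - x₀)))) atTop (𝓝 0) := by
      have h1 : Tendsto (fun x : ℝ => γ * (x - x₀)) atTop atTop := by
        apply Tendsto.const_mul_atTop hγ
        exact tendsto_atTop_add_const_right atTop (-x₀) tendsto_id |>.congr
          (fun z => by simp only [id_eq]; ring)
      have h2 : Tendsto (fun x : ℝ => Real.exp (-(γ * (x - x₀)))) atTop (𝓝 0) :=
        Real.tendsto_exp_atBot.comp (tendsto_neg_atTop_atBot.comp h1)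
      simpa using h2.const_mul (Cs * ‖v‖)
    have hev2 : Tendsto (fun x : ℝ => Cs * Real.exp (-(γ * (x - x₀))) * I₁) atTop (𝓝 0) := by
      have h1 : Tendsto (fun x : ℝ => γ * (x - x₀)) atTop atTop := by
        apply Tendsto.const_mul_atTop hγ
        exact tendsto_atTop_add_const_right atTop (-x₀) tendsto_id |>.congr
          (fun z => by simp only [id_eq]; ring)
      have h2 : Tendsto (fun x : ℝ => Real.exp (-(γ * (x - x₀)))) atTop (𝓝 0) :=
        Real.tendsto_exp_atBot.comp (tendsto_neg_atTop_atBot.comp h1)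
      have h3 := (h2.const_mul Cs).mul_const I₁
      simpa using h3
    filter_upwards [hev1.eventually (eventually_lt_nhds hδ),
      hev2.eventually (eventually_lt_nhds hδ),
      eventually_ge_atTop (x₀ + R), eventually_ge_atTop (X₂ + R)] with x hx1 hx2 hx3 hx4
    have hx' : x₀ ≤ x := le_trans (by linarith) hx3
    have hx0 : 0 < x := lt_of_lt_of_le hx₀ hx'
    have hxR : x₀ ≤ x - R := by linarith
    have hxR2 : X₂ ≤ x - R := by linarith
    have hX2x : X₂ ≤ x := by linarith
    -- the integrand and its pointwise bounds
    have hFnormint : IntegrableOn (fun s => ‖Y x (J x s)‖) (Ioi 0) :=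
      ((Y x).integrable_comp (hJint x hx0)).norm
    have hptw1 : ∀ s ∈ Ioo (0:ℝ) x₀, ‖Y x (J x s)‖
        ≤ Cs * Real.exp (-(γ * (x - x₀))) * (‖P₂ + P₃‖ * C₀ * Mg * (x₀ / s) ^ (1 - α)) := by
      intro s hs
      have h1 : s ≤ x := le_trans hs.2.le hx'
      have hJ2 : J x s = (P₂ + P₃) (hh s) := by
        simp only [hJdef, hk₁def]; rw [if_pos h1, if_pos hs.2]
      have h6 : (P₂ + P₃) (hh s) = (P₁ + P₂ + P₃) ((P₂ + P₃) (hh s)) := by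
        have h7 := DFunLike.congr_fun c6 (hh s)
        simp only [ContinuousLinearMap.comp_apply] at h7
        exact h7.symm
      rw [hJ2, h6]
      exact le_trans (hPm14 x hx' _)
        (mul_le_mul_of_nonneg_left (hQmb (P₂ + P₃) c1 s hs.1 hs.2.le) (by positivity))
    have hptw2 : ∀ s ∈ Icc x₀ x, ‖Y x (J x s)‖ ≤ Cs * Real.exp (-(γ * (x - s))) * ‖g s‖ := by
      intro s hs
      have hJ2 : J x s = (P₁ + P₂ + P₃) (hh s) := by
        simp only [hJdef, hk₁def]; rw [if_pos hs.2, if_neg (not_lt.2 hs.1)]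
      have h5 : Y x ((P₁ + P₂ + P₃) (hh s))
          = (Y x ∘L (P₁ + P₂ + P₃) ∘L Ring.inverse (Y s)) (g s) := by
        simp [hhdef, hZdef]
      rw [hJ2, h5]
      exact le_trans (ContinuousLinearMap.le_opNorm _ _)
        (mul_le_mul_of_nonneg_right (hPm x s hs.1 hs.2) (norm_nonneg _))
    have hptw3 : ∀ s ∈ Ioi x, ‖Y x (J x s)‖ ≤ Cs * Real.exp (-(γ * (s - x))) * ‖g s‖ := by
      intro s hs
      have h2 : ¬ s < x₀ := not_lt.2 (le_trans hx' (le_of_lt hs))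
      have hJ2 : J x s = -((P₄ + P₅ + P₆) (hh s)) := by
        simp only [hJdef, hk₂def]; rw [if_neg (not_le.2 hs), if_neg h2]
      have h5 : Y x ((P₄ + P₅ + P₆) (hh s))
          = (Y x ∘L (P₄ + P₅ + P₆) ∘L Ring.inverse (Y s)) (g s) := by
        simp [hhdef, hZdef]
      rw [hJ2, map_neg, norm_neg, h5]
      exact le_trans (ContinuousLinearMap.le_opNorm _ _)
        (mul_le_mul_of_nonneg_right (hPp x s hx' hs.le) (norm_nonneg _))
    -- splitting the integral
    have hu1 : Ioo (0:ℝ) x₀ ∪ Icc x₀ x = Ioc 0 x := Set.Ioo_union_Icc_eq_Ioc hx₀ hx'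
    have hu2 : Ioc (0:ℝ) x ∪ Ioi x = Ioi 0 := Set.Ioc_union_Ioi_eq_Ioi hx0.le
    have hu3 : Icc x₀ (x - R) ∪ Ioc (x - R) x = Icc x₀ x :=
      Set.Icc_union_Ioc_eq_Icc hxR (by linarith)
    have hdj1 : Disjoint (Ioo (0:ℝ) x₀) (Icc x₀ x) :=
      Set.disjoint_left.2 fun z hz hz' => absurd hz.2 (not_lt.2 hz'.1)
    have hdj2 : Disjoint (Ioc (0:ℝ) x) (Ioi x) :=
      Set.disjoint_left.2 fun z hz hz' => absurd hz' (not_lt.2 hz.2)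
    have hdj3 : Disjoint (Icc x₀ (x - R)) (Ioc (x - R) x) :=
      Set.disjoint_left.2 fun z hz hz' => absurd hz'.1 (not_lt.2 hz.2)
    have hsub1 : Ioo (0:ℝ) x₀ ⊆ Ioi 0 := fun z hz => hz.1
    have hsub2 : Icc x₀ x ⊆ Ioi 0 := fun z hz => lt_of_lt_of_le hx₀ hz.1
    have hsub2a : Icc x₀ (x - R) ⊆ Ioi 0 := fun z hz => lt_of_lt_of_le hx₀ hz.1
    have hsub2b : Ioc (x - R) x ⊆ Ioi 0 := fun z hz => lt_of_lt_of_le (lt_of_lt_of_le hx₀ hxR) hz.1.le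
    have hsub3 : Ioi x ⊆ Ioi (0:ℝ) := fun z hz => lt_trans hx0 hz
    have hIsplit : (∫ s in Ioi (0:ℝ), ‖Y x (J x s)‖)
        = (∫ s in Ioo (0:ℝ) x₀, ‖Y x (J x s)‖)
          + ((∫ s in Icc x₀ (x - R), ‖Y x (J x s)‖) + (∫ s in Ioc (x - R) x, ‖Y x (J x s)‖))
          + (∫ s in Ioi x, ‖Y x (J x s)‖) := by
      rw [← hu2, MeasureTheory.setIntegral_union hdj2 measurableSet_Ioi
        (hFnormint.mono_set (hu2 ▸ Set.subset_union_left))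
        (hFnormint.mono_set hsub3)]
      congr 1
      rw [← hu1, MeasureTheory.setIntegral_union hdj1 measurableSet_Icc
        (hFnormint.mono_set hsub1) (hFnormint.mono_set hsub2)]
      congr 1
      rw [← hu3, MeasureTheory.setIntegral_union hdj3 measurableSet_Ioc
        (hFnormint.mono_set hsub2a) (hFnormint.mono_set hsub2b)]
    -- piece 1
    have hp1 : (∫ s in Ioo (0:ℝ) x₀, ‖Y x (J x s)‖)
        ≤ Cs * Real.exp (-(γ * (x - x₀))) * I₁ := by
      have h9 : (∫ s in Ioo (0:ℝ) x₀, ‖Y x (J x s)‖)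
          ≤ ∫ s in Ioo (0:ℝ) x₀, Cs * Real.exp (-(γ * (x - x₀)))
            * (‖P₂ + P₃‖ * C₀ * Mg * (x₀ / s) ^ (1 - α)) :=
        MeasureTheory.setIntegral_mono_on (hFnormint.mono_set hsub1)
          (hI₁int.const_mul _) measurableSet_Ioo hptw1
      refine le_trans h9 (le_of_eq ?_)
      rw [MeasureTheory.integral_const_mul, hI₁def]
    -- piece 2a
    have hp2a : (∫ s in Icc x₀ (x - R), ‖Y x (J x s)‖) ≤ Cs * Mg / γ * Real.exp (-(γ * R)) := by
      have hb : ∀ s ∈ Icc x₀ (x - R), ‖Y x (J x s)‖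
          ≤ Cs * Mg * Real.exp (-(γ * (x - s))) := by
        intro s hs
        have hs' : s ∈ Icc x₀ x := ⟨hs.1, le_trans hs.2 (by linarith)⟩
        refine le_trans (hptw2 s hs') ?_
        calc Cs * Real.exp (-(γ * (x - s))) * ‖g s‖
            ≤ Cs * Real.exp (-(γ * (x - s))) * Mg := by
              refine mul_le_mul_of_nonneg_left (hMg s ?_) (by positivity)
              exact le_trans hx₀.le hs.1
          _ = Cs * Mg * Real.exp (-(γ * (x - s))) := by ring
      have hcont : Continuous (fun s : ℝ => Cs * Mg * Real.exp (-(γ * (x - s)))) :=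
        continuous_const.mul (Real.continuous_exp.comp
          ((continuous_const.mul (continuous_const.sub continuous_id)).neg))
      have hbint : IntegrableOn (fun s : ℝ => Cs * Mg * Real.exp (-(γ * (x - s))))
          (Icc x₀ (x - R)) := hcont.continuousOn.integrableOn_compact isCompact_Icc
      have h9 := MeasureTheory.setIntegral_mono_on
        (hFnormint.mono_set hsub2a) hbint measurableSet_Icc hb
      refine le_trans h9 ?_
      rw [MeasureTheory.integral_const_mul, expgrow_integral_Icc γ x x₀ (x - R) hγ hxR]
      rw [show x - (x - R) = R by ring]
      calc Cs * Mg * ((Real.exp (-(γ * R)) - Real.exp (-(γ * (x - x₀)))) / γ)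
          ≤ Cs * Mg * (Real.exp (-(γ * R)) / γ) := by
            gcongr
            have := Real.exp_pos (-(γ * (x - x₀))); linarith
        _ = Cs * Mg / γ * Real.exp (-(γ * R)) := by ring
    -- piece 2b
    have hp2b : (∫ s in Ioc (x - R) x, ‖Y x (J x s)‖) ≤ Cs * εg / γ := by
      have hb : ∀ s ∈ Ioc (x - R) x, ‖Y x (J x s)‖
          ≤ Cs * εg * Real.exp (-(γ * (x - s))) := by
        intro s hs
        have hs' : s ∈ Icc x₀ x := ⟨le_trans hxR hs.1.le, hs.2⟩
        refine le_trans (hptw2 s hs') ?_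
        have hgs : ‖g s‖ ≤ εg := le_of_lt (hX₂ s (le_trans hxR2 hs.1.le))
        calc Cs * Real.exp (-(γ * (x - s))) * ‖g s‖
            ≤ Cs * Real.exp (-(γ * (x - s))) * εg :=
              mul_le_mul_of_nonneg_left hgs (by positivity)
          _ = Cs * εg * Real.exp (-(γ * (x - s))) := by ring
      have hcont : Continuous (fun s : ℝ => Cs * εg * Real.exp (-(γ * (x - s)))) :=
        continuous_const.mul (Real.continuous_exp.comp
          ((continuous_const.mul (continuous_const.sub continuous_id)).neg))
      have hbint : IntegrableOn (fun s : ℝ => Cs * εg * Real.exp (-(γ * (x - s))))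
          (Ioc (x - R) x) :=
        (hcont.continuousOn.integrableOn_compact isCompact_Icc).mono_set Set.Ioc_subset_Icc_self
      have h9 := MeasureTheory.setIntegral_mono_on
        (hFnormint.mono_set hsub2b) hbint measurableSet_Ioc hb
      refine le_trans h9 ?_
      rw [MeasureTheory.integral_const_mul, expgrow_integral γ x (x - R) x hγ (by linarith)]
      rw [sub_self, mul_zero, neg_zero, Real.exp_zero]
      calc Cs * εg * ((1 - Real.exp (-(γ * (x - (x - R))))) / γ)
          ≤ Cs * εg * (1 / γ) := by
            gcongr
            have := Real.exp_pos (-(γ * (x - (x - R)))); linarith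
        _ = Cs * εg / γ := by ring
    -- piece 3
    have hp3 : (∫ s in Ioi x, ‖Y x (J x s)‖) ≤ Cs * εg / γ := by
      have hb : ∀ s ∈ Ioi x, ‖Y x (J x s)‖ ≤ Cs * εg * Real.exp (-(γ * (s - x))) := by
        intro s hs
        refine le_trans (hptw3 s hs) ?_
        have hgs : ‖g s‖ ≤ εg := le_of_lt (hX₂ s (le_trans hX2x (le_of_lt hs)))
        calc Cs * Real.exp (-(γ * (s - x))) * ‖g s‖
            ≤ Cs * Real.exp (-(γ * (s - x))) * εg :=
              mul_le_mul_of_nonneg_left hgs (by positivity)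
          _ = Cs * εg * Real.exp (-(γ * (s - x))) := by ring
      have hbint : IntegrableOn (fun s : ℝ => Cs * εg * Real.exp (-(γ * (s - x)))) (Ioi x) :=
        (expdecay_integrableOn γ x x hγ).const_mul (Cs * εg)
      have h9 := MeasureTheory.setIntegral_mono_on
        (hFnormint.mono_set hsub3) hbint measurableSet_Ioi hb
      refine le_trans h9 ?_
      rw [MeasureTheory.integral_const_mul, expdecay_integral γ x x hγ, sub_self, mul_zero,
        neg_zero, Real.exp_zero]
      apply le_of_eq; ring
    -- assembling
    have hterm0 : ‖Y x v‖ ≤ Cs * ‖v‖ * Real.exp (-(γ * (x - x₀))) := by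
      conv_lhs => rw [← hvP]
      refine le_trans (hPm14 x hx' v) (le_of_eq (by ring))
    have hterm_int : ‖Y x (u x)‖ ≤ ∫ s in Ioi (0:ℝ), ‖Y x (J x s)‖ := by
      have h1 : Y x (u x) = ∫ s in Ioi (0:ℝ), Y x (J x s) :=
        (ContinuousLinearMap.integral_comp_comm _ (hJint x hx0)).symm
      rw [h1]
      exact MeasureTheory.norm_integral_le_integral_norm _
    have h2 : ‖y x‖ ≤ ‖Y x v‖ + ∫ s in Ioi (0:ℝ), ‖Y x (J x s)‖ := by
      rw [hyu x hx0, map_add]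
      exact le_trans (norm_add_le _ _) (add_le_add le_rfl hterm_int)
    rw [hIsplit] at h2
    have hεgval : Cs * εg / γ = δ / 2 := by
      rw [hεgdef]; field_simp
    have e2b := le_trans hp2b (le_of_eq hεgval)
    have e3 := le_trans hp3 (le_of_eq hεgval)
    have e2a := lt_of_le_of_lt hp2a hRlt
    have e1 := lt_of_le_of_lt hp1 hx2
    have e0 := lt_of_le_of_lt hterm0 hx1
    have hfin : ‖y x‖ < 5 * δ := by linarith
    calc ‖y x‖ < 5 * δ := hfin
      _ = ε := by rw [hδdef]; ring
end

section
/- Assume in addition that each projector Pⱼ (j = 1,…,6) is self-adjoint with respect to the Euclidean inner product on ℝⁿ. For η₀ ∈ ℝⁿ, let η(x) := (Y(x;x₀)⁻¹)*η₀ (the solution of the adjoint system η′ = −(A*/x + B(x)*)η with η(x₀) = η₀). Then ∫₀^{∞} ‖η(x)‖ dx < ∞ if and only if (P₅+P₆)η₀ = η₀. -/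
open MeasureTheory Set Filter
open scoped Topology

namespace AdjointSolutionAux

variable {n : ℕ}

local notation "EE" => EuclideanSpace ℝ (Fin n)

/-- The basic duality inequality. -/
lemma aux_inner (Y : ℝ → EE →L[ℝ] EE) {x : ℝ} (hx : 0 < x) (hYu : IsUnit (Y x))
    (η₀ ξ : EE) :
    (inner ℝ η₀ ξ : ℝ) ≤ ‖ContinuousLinearMap.adjoint (Ring.inverse (Y x)) η₀‖ * ‖Y x ξ‖ := by
  have h1 : (inner ℝ (ContinuousLinearMap.adjoint (Ring.inverse (Y x)) η₀) (Y x ξ) : ℝ)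
      = inner ℝ η₀ ξ := by
    rw [ContinuousLinearMap.adjoint_inner_left]
    congr 1
    have h2 := Ring.inverse_mul_cancel (Y x) hYu
    calc Ring.inverse (Y x) (Y x ξ)
        = (Ring.inverse (Y x) * Y x) ξ := (ContinuousLinearMap.mul_apply _ _ _).symm
      _ = ξ := by rw [h2, ContinuousLinearMap.one_apply]
  rw [← h1]
  exact real_inner_le_norm _ _

/-- Continuity of the adjoint solution on `(0,∞)`. -/
lemma aux_cont (Y : ℝ → EE →L[ℝ] EE) (hYc : ∀ x > (0:ℝ), ContinuousAt Y x)
    (hYu : ∀ x > (0:ℝ), IsUnit (Y x)) (η₀ : EE) :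
    ContinuousOn (fun x => ContinuousLinearMap.adjoint (Ring.inverse (Y x)) η₀) (Ioi 0) := by
  intro x hx
  apply ContinuousAt.continuousWithinAt
  have h1 : ContinuousAt (fun x => Ring.inverse (Y x)) x := by
    have h2 := NormedRing.inverse_continuousAt (hYu x hx).unit
    rw [IsUnit.unit_spec] at h2
    exact h2.comp (hYc x hx)
  have h3 : ContinuousAt (fun x => ContinuousLinearMap.adjoint (Ring.inverse (Y x))) x :=
    ((ContinuousLinearMap.adjoint
      (𝕜 := ℝ) (E := EE) (F := EE)).continuous.continuousAt).comp h1
  have h4 : Continuous fun T : EE →L[ℝ] EE => T η₀ :=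
    (ContinuousLinearMap.apply ℝ EE η₀).continuous
  exact h4.continuousAt.comp h3

/-- Step A of the necessity direction: the exponentially decaying part must vanish. -/
lemma stepA (Y : ℝ → EE →L[ℝ] EE)
    (x₀ : ℝ) (hx₀ : 0 < x₀) (hYu : ∀ x > (0:ℝ), IsUnit (Y x))
    (P : EE →L[ℝ] EE) (hPP : P ∘L P = P) (aP : ContinuousLinearMap.adjoint P = P)
    (Cs γ : ℝ) (hCs : 0 < Cs) (hγ : 0 < γ)
    (hPm : ∀ x : ℝ, x₀ ≤ x →
      ‖Y x ∘L P ∘L Ring.inverse (Y x₀)‖ ≤ Cs * Real.exp (-(γ * (x - x₀))))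
    (η₀ : EE)
    (hint : IntegrableOn (fun x => ContinuousLinearMap.adjoint (Ring.inverse (Y x)) η₀)
      (Set.Ioi 0))
    (hZx₀ : Ring.inverse (Y x₀) = 1) :
    P η₀ = 0 := by
  by_contra hne
  set ξ := P η₀ with hξ
  have hξpos : 0 < ‖ξ‖ := norm_pos_iff.mpr hne
  have hfix : P ξ = ξ := by
    calc P (P η₀) = (P ∘L P) η₀ := (ContinuousLinearMap.comp_apply _ _ _).symm
      _ = ξ := by rw [hPP]
  have e1 : (inner ℝ η₀ ξ : ℝ) = ‖ξ‖ ^ 2 := by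
    rw [← real_inner_self_eq_norm_sq]
    conv_lhs => rw [← hfix]
    rw [← ContinuousLinearMap.adjoint_inner_left, aP]
  have hlow : ∀ x ∈ Ioi x₀, ‖ξ‖ / Cs ≤
      ‖ContinuousLinearMap.adjoint (Ring.inverse (Y x)) η₀‖ := by
    intro x hx
    have hx' : (0:ℝ) < x := lt_trans hx₀ hx
    have hYb : ‖Y x ξ‖ ≤ Cs * ‖ξ‖ := by
      have e2 : Y x ξ = (Y x ∘L P ∘L Ring.inverse (Y x₀)) ξ := by
        rw [hZx₀]
        simp only [ContinuousLinearMap.comp_apply, ContinuousLinearMap.one_apply, hfix]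
      rw [e2]
      calc ‖(Y x ∘L P ∘L Ring.inverse (Y x₀)) ξ‖
          ≤ ‖Y x ∘L P ∘L Ring.inverse (Y x₀)‖ * ‖ξ‖ := ContinuousLinearMap.le_opNorm _ _
        _ ≤ (Cs * Real.exp (-(γ * (x - x₀)))) * ‖ξ‖ :=
            mul_le_mul_of_nonneg_right (hPm x (le_of_lt hx)) (norm_nonneg _)
        _ ≤ Cs * ‖ξ‖ := by
            apply mul_le_mul_of_nonneg_right _ (norm_nonneg _)
            nlinarith [Real.exp_le_one_iff.mpr
              (by nlinarith [hγ, (le_of_lt hx : x₀ ≤ x)] : -(γ * (x - x₀)) ≤ 0), hCs.le]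
    have h3 := aux_inner Y hx' (hYu x hx') η₀ ξ
    rw [e1] at h3
    have h4 : ‖ξ‖ ^ 2 ≤ ‖ContinuousLinearMap.adjoint (Ring.inverse (Y x)) η₀‖ * (Cs * ‖ξ‖) :=
      le_trans h3 (mul_le_mul_of_nonneg_left hYb (norm_nonneg _))
    rw [div_le_iff₀ hCs]
    nlinarith [norm_nonneg (ContinuousLinearMap.adjoint (Ring.inverse (Y x)) η₀)]
  have hconst : IntegrableOn (fun _ : ℝ => ‖ξ‖ / Cs) (Ioi x₀) := by
    apply Integrable.mono' ((hint.mono_set (Ioi_subset_Ioi hx₀.le)).norm)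
      aestronglyMeasurable_const
    filter_upwards [ae_restrict_mem measurableSet_Ioi] with x hx
    rw [Real.norm_of_nonneg (by positivity)]
    exact hlow x hx
  rw [integrableOn_const_iff enorm_ne_top] at hconst
  rcases hconst with h | h
  · exact absurd (enorm_eq_zero.mp h) (by positivity)
  · rw [Real.volume_Ioi] at h; exact absurd h (by simp)

/-- Step B of the necessity direction: the rapidly vanishing (at 0) part must vanish. -/
lemma stepB (Y : ℝ → EE →L[ℝ] EE)
    (x₀ : ℝ) (hx₀ : 0 < x₀) (hYu : ∀ x > (0:ℝ), IsUnit (Y x))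
    (P : EE →L[ℝ] EE) (hPP : P ∘L P = P) (aP : ContinuousLinearMap.adjoint P = P)
    (C₀ α : ℝ) (hC₀ : 0 < C₀) (hα : 0 < α)
    (hQp : ∀ x : ℝ, 0 < x → x ≤ x₀ →
      ‖Y x ∘L P ∘L Ring.inverse (Y x₀)‖ ≤ C₀ * (x / x₀) ^ (1 + α))
    (η₀ : EE)
    (hint : IntegrableOn (fun x => ContinuousLinearMap.adjoint (Ring.inverse (Y x)) η₀)
      (Set.Ioi 0))
    (hZx₀ : Ring.inverse (Y x₀) = 1) :
    P η₀ = 0 := by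
  by_contra hne
  set ξ := P η₀ with hξ
  have hξpos : 0 < ‖ξ‖ := norm_pos_iff.mpr hne
  have hfix : P ξ = ξ := by
    calc P (P η₀) = (P ∘L P) η₀ := (ContinuousLinearMap.comp_apply _ _ _).symm
      _ = ξ := by rw [hPP]
  have e1 : (inner ℝ η₀ ξ : ℝ) = ‖ξ‖ ^ 2 := by
    rw [← real_inner_self_eq_norm_sq]
    conv_lhs => rw [← hfix]
    rw [← ContinuousLinearMap.adjoint_inner_left, aP]
  set K : ℝ := ‖ξ‖ * x₀ ^ (1 + α) / C₀ with hK
  have hKpos : 0 < K := by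
    have := Real.rpow_pos_of_pos hx₀ (1 + α)
    positivity
  have hlow : ∀ x ∈ Ioo (0:ℝ) x₀, K * x ^ (-(1 + α)) ≤
      ‖ContinuousLinearMap.adjoint (Ring.inverse (Y x)) η₀‖ := by
    intro x hx
    have hu : (0:ℝ) < (x / x₀) ^ (1 + α) := Real.rpow_pos_of_pos (div_pos hx.1 hx₀) _
    have hYb : ‖Y x ξ‖ ≤ (C₀ * (x / x₀) ^ (1 + α)) * ‖ξ‖ := by
      have e2 : Y x ξ = (Y x ∘L P ∘L Ring.inverse (Y x₀)) ξ := by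
        rw [hZx₀]
        simp only [ContinuousLinearMap.comp_apply, ContinuousLinearMap.one_apply, hfix]
      rw [e2]
      calc ‖(Y x ∘L P ∘L Ring.inverse (Y x₀)) ξ‖
          ≤ ‖Y x ∘L P ∘L Ring.inverse (Y x₀)‖ * ‖ξ‖ := ContinuousLinearMap.le_opNorm _ _
        _ ≤ (C₀ * (x / x₀) ^ (1 + α)) * ‖ξ‖ :=
            mul_le_mul_of_nonneg_right (hQp x hx.1 hx.2.le) (norm_nonneg _)
    have h3 := aux_inner Y hx.1 (hYu x hx.1) η₀ ξ
    rw [e1] at h3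
    have h4 : ‖ξ‖ ^ 2 ≤ ‖ContinuousLinearMap.adjoint (Ring.inverse (Y x)) η₀‖ *
        ((C₀ * (x / x₀) ^ (1 + α)) * ‖ξ‖) :=
      le_trans h3 (mul_le_mul_of_nonneg_left hYb (norm_nonneg _))
    have e3 : K * x ^ (-(1 + α)) = ‖ξ‖ / (C₀ * (x / x₀) ^ (1 + α)) := by
      rw [hK, Real.div_rpow hx.1.le hx₀.le, Real.rpow_neg hx.1.le]
      have h5 : x ^ (1 + α) ≠ 0 := ne_of_gt (Real.rpow_pos_of_pos hx.1 _)
      have h6 : x₀ ^ (1 + α) ≠ 0 := ne_of_gt (Real.rpow_pos_of_pos hx₀ _)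
      field_simp
    rw [e3, div_le_iff₀ (by positivity)]
    nlinarith [norm_nonneg (ContinuousLinearMap.adjoint (Ring.inverse (Y x)) η₀), hu]
  have hKint : IntegrableOn (fun x : ℝ => K * x ^ (-(1 + α))) (Ioo 0 x₀) := by
    apply Integrable.mono'
      ((hint.mono_set (fun x hx => hx.1 : Ioo (0:ℝ) x₀ ⊆ Ioi 0)).norm)
    · exact ((measurable_id.pow_const _).const_mul K).aestronglyMeasurable
    · filter_upwards [ae_restrict_mem measurableSet_Ioo] with x hx
      rw [Real.norm_of_nonneg (mul_nonneg hKpos.le (Real.rpow_nonneg hx.1.le _))]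
      exact hlow x hx
  have hint2 : IntegrableOn (fun x : ℝ => x ^ (-(1 + α))) (Ioo 0 x₀) := by
    have h7 : IntegrableOn (fun x : ℝ => K⁻¹ * (K * x ^ (-(1 + α)))) (Ioo 0 x₀) :=
      hKint.const_mul K⁻¹
    refine h7.congr_fun (fun x _ => ?_) measurableSet_Ioo
    dsimp only
    rw [← mul_assoc, inv_mul_cancel₀ hKpos.ne', one_mul]
  rw [intervalIntegral.integrableOn_Ioo_rpow_iff hx₀] at hint2
  linarith

/-- Sufficiency direction. -/
lemma suff (Y : ℝ → EE →L[ℝ] EE)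
    (x₀ : ℝ) (hx₀ : 0 < x₀)
    (W Qm Pp : EE →L[ℝ] EE)
    (aW : ContinuousLinearMap.adjoint W = W)
    (hPQ : Pp ∘L Qm = W) (hQP : Qm ∘L Pp = W)
    (C₀ α : ℝ) (hα : 0 < α)
    (hQm : ∀ s : ℝ, 0 < s → s ≤ x₀ →
      ‖Y x₀ ∘L Qm ∘L Ring.inverse (Y s)‖ ≤ C₀ * (x₀ / s) ^ (1 - α))
    (Cs γ : ℝ) (hγ : 0 < γ)
    (hPp : ∀ s : ℝ, x₀ ≤ s →
      ‖Y x₀ ∘L Pp ∘L Ring.inverse (Y s)‖ ≤ Cs * Real.exp (-(γ * (s - x₀))))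
    (η₀ : EE) (h56 : W η₀ = η₀) (hYx₀ : Y x₀ = 1)
    (hηcont : ContinuousOn (fun x => ContinuousLinearMap.adjoint (Ring.inverse (Y x)) η₀)
      (Ioi 0)) :
    IntegrableOn (fun x => ContinuousLinearMap.adjoint (Ring.inverse (Y x)) η₀)
      (Set.Ioi 0) := by
  have key : ∀ s : ℝ, ContinuousLinearMap.adjoint (Ring.inverse (Y s)) η₀
      = ContinuousLinearMap.adjoint (W ∘L Ring.inverse (Y s)) η₀ := by
    intro s
    conv_lhs => rw [← h56]
    rw [ContinuousLinearMap.adjoint_comp, aW, ContinuousLinearMap.comp_apply]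
  have keybound : ∀ s : ℝ, ‖ContinuousLinearMap.adjoint (Ring.inverse (Y s)) η₀‖
      ≤ ‖W ∘L Ring.inverse (Y s)‖ * ‖η₀‖ := by
    intro s
    rw [key s]
    calc ‖ContinuousLinearMap.adjoint (W ∘L Ring.inverse (Y s)) η₀‖
        ≤ ‖ContinuousLinearMap.adjoint (W ∘L Ring.inverse (Y s))‖ * ‖η₀‖ :=
          ContinuousLinearMap.le_opNorm _ _
      _ = ‖W ∘L Ring.inverse (Y s)‖ * ‖η₀‖ := by rw [LinearIsometryEquiv.norm_map]
  -- bound near zero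
  have hbd1 : ∀ s ∈ Ioo (0:ℝ) x₀, ‖ContinuousLinearMap.adjoint (Ring.inverse (Y s)) η₀‖
      ≤ (‖Pp‖ * C₀ * x₀ ^ (1 - α) * ‖η₀‖) * s ^ (α - 1) := by
    intro s hs
    have e3 : W ∘L Ring.inverse (Y s)
        = Pp ∘L (Y x₀ ∘L Qm ∘L Ring.inverse (Y s)) := by
      rw [hYx₀, show ((1 : EE →L[ℝ] EE) ∘L Qm ∘L Ring.inverse (Y s))
          = Qm ∘L Ring.inverse (Y s)
        from by rw [ContinuousLinearMap.one_def, ContinuousLinearMap.id_comp],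
        ← ContinuousLinearMap.comp_assoc, hPQ]
    have h7 : ‖W ∘L Ring.inverse (Y s)‖ ≤ ‖Pp‖ * (C₀ * (x₀ / s) ^ (1 - α)) := by
      rw [e3]
      calc ‖Pp ∘L (Y x₀ ∘L Qm ∘L Ring.inverse (Y s))‖
          ≤ ‖Pp‖ * ‖Y x₀ ∘L Qm ∘L Ring.inverse (Y s)‖ :=
            ContinuousLinearMap.opNorm_comp_le _ _
        _ ≤ ‖Pp‖ * (C₀ * (x₀ / s) ^ (1 - α)) :=
            mul_le_mul_of_nonneg_left (hQm s hs.1 hs.2.le) (norm_nonneg _)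
    have e4 : (x₀ / s) ^ (1 - α) = x₀ ^ (1 - α) * s ^ (α - 1) := by
      rw [Real.div_rpow hx₀.le hs.1.le,
        show (α - 1 : ℝ) = -(1 - α) by ring, Real.rpow_neg hs.1.le, div_eq_mul_inv]
    calc ‖ContinuousLinearMap.adjoint (Ring.inverse (Y s)) η₀‖
        ≤ ‖W ∘L Ring.inverse (Y s)‖ * ‖η₀‖ := keybound s
      _ ≤ (‖Pp‖ * (C₀ * (x₀ / s) ^ (1 - α))) * ‖η₀‖ :=
          mul_le_mul_of_nonneg_right h7 (norm_nonneg _)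
      _ = (‖Pp‖ * C₀ * x₀ ^ (1 - α) * ‖η₀‖) * s ^ (α - 1) := by rw [e4]; ring
  -- bound at infinity
  have hbd2 : ∀ s ∈ Ioi x₀, ‖ContinuousLinearMap.adjoint (Ring.inverse (Y s)) η₀‖
      ≤ (‖Qm‖ * Cs * Real.exp (γ * x₀) * ‖η₀‖) * Real.exp (-γ * s) := by
    intro s hs
    have e3 : W ∘L Ring.inverse (Y s)
        = Qm ∘L (Y x₀ ∘L Pp ∘L Ring.inverse (Y s)) := by
      rw [hYx₀, show ((1 : EE →L[ℝ] EE) ∘L Pp ∘L Ring.inverse (Y s))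
          = Pp ∘L Ring.inverse (Y s)
        from by rw [ContinuousLinearMap.one_def, ContinuousLinearMap.id_comp],
        ← ContinuousLinearMap.comp_assoc, hQP]
    have h7 : ‖W ∘L Ring.inverse (Y s)‖
        ≤ ‖Qm‖ * (Cs * Real.exp (-(γ * (s - x₀)))) := by
      rw [e3]
      calc ‖Qm ∘L (Y x₀ ∘L Pp ∘L Ring.inverse (Y s))‖
          ≤ ‖Qm‖ * ‖Y x₀ ∘L Pp ∘L Ring.inverse (Y s)‖ :=
            ContinuousLinearMap.opNorm_comp_le _ _
        _ ≤ ‖Qm‖ * (Cs * Real.exp (-(γ * (s - x₀)))) :=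
            mul_le_mul_of_nonneg_left (hPp s (le_of_lt hs)) (norm_nonneg _)
    have e4 : Real.exp (-(γ * (s - x₀))) = Real.exp (γ * x₀) * Real.exp (-γ * s) := by
      rw [← Real.exp_add]; ring_nf
    calc ‖ContinuousLinearMap.adjoint (Ring.inverse (Y s)) η₀‖
        ≤ ‖W ∘L Ring.inverse (Y s)‖ * ‖η₀‖ := keybound s
      _ ≤ (‖Qm‖ * (Cs * Real.exp (-(γ * (s - x₀))))) * ‖η₀‖ :=
          mul_le_mul_of_nonneg_right h7 (norm_nonneg _)
      _ = (‖Qm‖ * Cs * Real.exp (γ * x₀) * ‖η₀‖) * Real.exp (-γ * s) := by rw [e4]; ring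
  have hint1 : IntegrableOn
      (fun x => ContinuousLinearMap.adjoint (Ring.inverse (Y x)) η₀) (Ioc 0 x₀) := by
    rw [integrableOn_Ioc_iff_integrableOn_Ioo]
    apply Integrable.mono'
      (g := fun s => (‖Pp‖ * C₀ * x₀ ^ (1 - α) * ‖η₀‖) * s ^ (α - 1))
    · exact (((intervalIntegral.integrableOn_Ioo_rpow_iff hx₀).mpr
        (by linarith)).const_mul _)
    · exact ((hηcont.mono (fun x hx => hx.1 : Ioo (0:ℝ) x₀ ⊆ Ioi 0)).aestronglyMeasurable
        measurableSet_Ioo)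
    · filter_upwards [ae_restrict_mem measurableSet_Ioo] with x hx
      exact hbd1 x hx
  have hint2 : IntegrableOn
      (fun x => ContinuousLinearMap.adjoint (Ring.inverse (Y x)) η₀) (Ioi x₀) := by
    apply Integrable.mono'
      (g := fun s => (‖Qm‖ * Cs * Real.exp (γ * x₀) * ‖η₀‖) * Real.exp (-γ * s))
    · exact (exp_neg_integrableOn_Ioi x₀ hγ).const_mul _
    · exact ((hηcont.mono (fun x hx => lt_trans hx₀ hx : Ioi x₀ ⊆ Ioi 0)).aestronglyMeasurable
        measurableSet_Ioi)
    · filter_upwards [ae_restrict_mem measurableSet_Ioi] with x hx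
      exact hbd2 x hx
  rw [show Ioi (0:ℝ) = Ioc 0 x₀ ∪ Ioi x₀ from (Ioc_union_Ioi_eq_Ioi hx₀.le).symm]
  exact hint1.union hint2

end AdjointSolutionAux


set_option maxHeartbeats 1000000 in
/-- the solution `η(x) = (Y(x;x₀)⁻¹)* η₀` of the adjoint system is
Lebesgue integrable on `(0,∞)` iff `(P₅ + P₆) η₀ = η₀`. -/
theorem adjoint_solution_integrable_iff (n : ℕ)
    (A : EuclideanSpace ℝ (Fin n) →L[ℝ] EuclideanSpace ℝ (Fin n))
    (B : ℝ → EuclideanSpace ℝ (Fin n) →L[ℝ] EuclideanSpace ℝ (Fin n))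
    (hBcont : ContinuousOn B (Set.Ioi 0)) (hBbdd : ∃ M, ∀ x > (0 : ℝ), ‖B x‖ ≤ M)
    (x₀ : ℝ) (hx₀ : 0 < x₀)
    (Y : ℝ → EuclideanSpace ℝ (Fin n) →L[ℝ] EuclideanSpace ℝ (Fin n))
    (hYd : ∀ x > (0 : ℝ), HasDerivAt Y ((x⁻¹ • A + B x) ∘L Y x) x)
    (hYx₀ : Y x₀ = 1) (hYu : ∀ x > (0 : ℝ), IsUnit (Y x))
    (P₁ P₂ P₃ P₄ P₅ P₆ : EuclideanSpace ℝ (Fin n) →L[ℝ] EuclideanSpace ℝ (Fin n))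
    (hsum : P₁ + P₂ + P₃ + P₄ + P₅ + P₆ = 1)
    (hidem : ∀ i, ![P₁, P₂, P₃, P₄, P₅, P₆] i ∘L ![P₁, P₂, P₃, P₄, P₅, P₆] i
      = ![P₁, P₂, P₃, P₄, P₅, P₆] i)
    (hdisj : ∀ i j, i ≠ j →
      ![P₁, P₂, P₃, P₄, P₅, P₆] i ∘L ![P₁, P₂, P₃, P₄, P₅, P₆] j = 0)
    -- the projectors are self-adjoint
    (hsa : ∀ i, ContinuousLinearMap.adjoint (![P₁, P₂, P₃, P₄, P₅, P₆] i)
      = ![P₁, P₂, P₃, P₄, P₅, P₆] i)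
    (C₀ α : ℝ) (hC₀ : 0 < C₀) (hα : 0 < α)
    (hQp : ∀ x s : ℝ, 0 < x → x ≤ s → s ≤ x₀ →
      ‖Y x ∘L (P₁ + P₄) ∘L Ring.inverse (Y s)‖ ≤ C₀ * (x / s) ^ (1 + α))
    (hQm : ∀ x s : ℝ, 0 < s → s ≤ x → x ≤ x₀ →
      ‖Y x ∘L (P₂ + P₃ + P₅ + P₆) ∘L Ring.inverse (Y s)‖ ≤ C₀ * (x / s) ^ (1 - α))
    (Cs γ : ℝ) (hCs : 0 < Cs) (hγ : 0 < γ)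
    (hPm : ∀ x s : ℝ, x₀ ≤ s → s ≤ x →
      ‖Y x ∘L (P₁ + P₂ + P₃) ∘L Ring.inverse (Y s)‖ ≤ Cs * Real.exp (-(γ * (x - s))))
    (hPp : ∀ x s : ℝ, x₀ ≤ x → x ≤ s →
      ‖Y x ∘L (P₄ + P₅ + P₆) ∘L Ring.inverse (Y s)‖ ≤ Cs * Real.exp (-(γ * (s - x)))) :
    ∀ η₀ : EuclideanSpace ℝ (Fin n),
      IntegrableOn
        (fun x => ContinuousLinearMap.adjoint (Ring.inverse (Y x)) η₀) (Set.Ioi 0)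
      ↔ (P₅ + P₆) η₀ = η₀ := by
  intro η₀
  -- individual projector products
  have p11 : P₁ ∘L P₁ = P₁ := by simpa using hidem 0
  have p22 : P₂ ∘L P₂ = P₂ := by simpa using hidem 1
  have p33 : P₃ ∘L P₃ = P₃ := by simpa using hidem 2
  have p44 : P₄ ∘L P₄ = P₄ := by simpa using hidem 3
  have p55 : P₅ ∘L P₅ = P₅ := by simpa using hidem 4
  have p66 : P₆ ∘L P₆ = P₆ := by simpa using hidem 5
  have p12 : P₁ ∘L P₂ = 0 := by simpa using hdisj 0 1 (by decide)
  have p13 : P₁ ∘L P₃ = 0 := by simpa using hdisj 0 2 (by decide)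
  have p14 : P₁ ∘L P₄ = 0 := by simpa using hdisj 0 3 (by decide)
  have p21 : P₂ ∘L P₁ = 0 := by simpa using hdisj 1 0 (by decide)
  have p23 : P₂ ∘L P₃ = 0 := by simpa using hdisj 1 2 (by decide)
  have p24 : P₂ ∘L P₄ = 0 := by simpa using hdisj 1 3 (by decide)
  have p25 : P₂ ∘L P₅ = 0 := by simpa using hdisj 1 4 (by decide)
  have p26 : P₂ ∘L P₆ = 0 := by simpa using hdisj 1 5 (by decide)
  have p31 : P₃ ∘L P₁ = 0 := by simpa using hdisj 2 0 (by decide)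
  have p32 : P₃ ∘L P₂ = 0 := by simpa using hdisj 2 1 (by decide)
  have p34 : P₃ ∘L P₄ = 0 := by simpa using hdisj 2 3 (by decide)
  have p35 : P₃ ∘L P₅ = 0 := by simpa using hdisj 2 4 (by decide)
  have p36 : P₃ ∘L P₆ = 0 := by simpa using hdisj 2 5 (by decide)
  have p41 : P₄ ∘L P₁ = 0 := by simpa using hdisj 3 0 (by decide)
  have p42 : P₄ ∘L P₂ = 0 := by simpa using hdisj 3 1 (by decide)
  have p43 : P₄ ∘L P₃ = 0 := by simpa using hdisj 3 2 (by decide)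
  have p45 : P₄ ∘L P₅ = 0 := by simpa using hdisj 3 4 (by decide)
  have p46 : P₄ ∘L P₆ = 0 := by simpa using hdisj 3 5 (by decide)
  have p52 : P₅ ∘L P₂ = 0 := by simpa using hdisj 4 1 (by decide)
  have p53 : P₅ ∘L P₃ = 0 := by simpa using hdisj 4 2 (by decide)
  have p54 : P₅ ∘L P₄ = 0 := by simpa using hdisj 4 3 (by decide)
  have p56 : P₅ ∘L P₆ = 0 := by simpa using hdisj 4 5 (by decide)
  have p62 : P₆ ∘L P₂ = 0 := by simpa using hdisj 5 1 (by decide)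
  have p63 : P₆ ∘L P₃ = 0 := by simpa using hdisj 5 2 (by decide)
  have p64 : P₆ ∘L P₄ = 0 := by simpa using hdisj 5 3 (by decide)
  have p65 : P₆ ∘L P₅ = 0 := by simpa using hdisj 5 4 (by decide)
  -- composite projector identities
  have hPpQm : (P₄ + P₅ + P₆) ∘L (P₂ + P₃ + P₅ + P₆) = P₅ + P₆ := by
    simp [ContinuousLinearMap.add_comp, ContinuousLinearMap.comp_add,
      p42, p43, p45, p46, p52, p53, p55, p56, p62, p63, p65, p66]
  have hQmPp : (P₂ + P₃ + P₅ + P₆) ∘L (P₄ + P₅ + P₆) = P₅ + P₆ := by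
    simp [ContinuousLinearMap.add_comp, ContinuousLinearMap.comp_add,
      p24, p25, p26, p34, p35, p36, p54, p55, p56, p64, p65, p66]
  have hPmPm : (P₁ + P₂ + P₃) ∘L (P₁ + P₂ + P₃) = P₁ + P₂ + P₃ := by
    simp [ContinuousLinearMap.add_comp, ContinuousLinearMap.comp_add,
      p11, p12, p13, p21, p22, p23, p31, p32, p33]
  have hQpQp : (P₁ + P₄) ∘L (P₁ + P₄) = P₁ + P₄ := by
    simp [ContinuousLinearMap.add_comp, ContinuousLinearMap.comp_add, p11, p14, p41, p44]
  have hP4Qp : P₄ ∘L (P₁ + P₄) = P₄ := by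
    simp [ContinuousLinearMap.comp_add, p41, p44]
  -- self-adjointness
  have a1 : ContinuousLinearMap.adjoint P₁ = P₁ := by simpa using hsa 0
  have a2 : ContinuousLinearMap.adjoint P₂ = P₂ := by simpa using hsa 1
  have a3 : ContinuousLinearMap.adjoint P₃ = P₃ := by simpa using hsa 2
  have a4 : ContinuousLinearMap.adjoint P₄ = P₄ := by simpa using hsa 3
  have a5 : ContinuousLinearMap.adjoint P₅ = P₅ := by simpa using hsa 4
  have a6 : ContinuousLinearMap.adjoint P₆ = P₆ := by simpa using hsa 5
  have a56 : ContinuousLinearMap.adjoint (P₅ + P₆) = P₅ + P₆ := by rw [map_add, a5, a6]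
  have aPm : ContinuousLinearMap.adjoint (P₁ + P₂ + P₃) = P₁ + P₂ + P₃ := by
    rw [map_add, map_add, a1, a2, a3]
  have aQp : ContinuousLinearMap.adjoint (P₁ + P₄) = P₁ + P₄ := by rw [map_add, a1, a4]
  have hZx₀ : Ring.inverse (Y x₀) = 1 := by rw [hYx₀, Ring.inverse_one]
  have hηcont := AdjointSolutionAux.aux_cont Y
    (fun x hx => (hYd x hx).continuousAt) hYu η₀
  constructor
  · -- necessity
    intro hint
    have hA : (P₁ + P₂ + P₃) η₀ = 0 :=
      AdjointSolutionAux.stepA Y x₀ hx₀ hYu (P₁ + P₂ + P₃) hPmPm aPm Cs γ hCs hγ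
        (fun x hx => hPm x x₀ le_rfl hx) η₀ hint hZx₀
    have hB : (P₁ + P₄) η₀ = 0 :=
      AdjointSolutionAux.stepB Y x₀ hx₀ hYu (P₁ + P₄) hQpQp aQp C₀ α hC₀ hα
        (fun x hx1 hx2 => hQp x x₀ hx1 hx2 le_rfl) η₀ hint hZx₀
    have hsum' := congrArg (fun T => T η₀) hsum
    simp only [ContinuousLinearMap.add_apply, ContinuousLinearMap.one_apply] at hsum'
    have hA' : P₁ η₀ + P₂ η₀ + P₃ η₀ = 0 := by
      simpa [ContinuousLinearMap.add_apply] using hA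
    have hP4 : P₄ η₀ = 0 := by
      calc P₄ η₀ = (P₄ ∘L (P₁ + P₄)) η₀ := by rw [hP4Qp]
        _ = P₄ ((P₁ + P₄) η₀) := ContinuousLinearMap.comp_apply _ _ _
        _ = 0 := by rw [hB, map_zero]
    rw [hA', hP4] at hsum'
    simpa [ContinuousLinearMap.add_apply] using hsum'
  · -- sufficiency
    intro h56
    exact AdjointSolutionAux.suff Y x₀ hx₀ (P₅ + P₆) (P₂ + P₃ + P₅ + P₆) (P₄ + P₅ + P₆)
      a56 hPpQm hQmPp C₀ α hα (fun s hs1 hs2 => hQm x₀ s hs1 hs2 le_rfl)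
      Cs γ hγ (fun s hs => hPp x₀ s le_rfl hs) η₀ h56 hYx₀ hηcont
end

section
/- Assume each projector Pⱼ (j = 1,…,6) is self-adjoint, and let g : [0,∞) → ℝⁿ be continuous and bounded. Then ∫₀^{∞} (P₅+P₆)Y(s;x₀)⁻¹ g(s) ds = 0 if and only if ∫₀^{∞} ⟨(Y(x;x₀)⁻¹)*η₀, g(x)⟩ dx = 0 for every η₀ ∈ ℝⁿ such that the function x ↦ (Y(x;x₀)⁻¹)*η₀ is Lebesgue integrable on (0,∞) (i.e., for every solution of the adjoint system η′ = −(A*/x + B(x)*)η belonging to L¹([0,∞) → ℝⁿ)). -/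
open MeasureTheory Set Filter
open scoped Topology

set_option maxHeartbeats 2000000 in
/-- the orthogonality condition `∫₀^∞ (P₅+P₆) Y(s;x₀)⁻¹ g(s) ds = 0`
holds iff `g` is orthogonal, in the sense of `∫₀^∞ ⟨·,·⟩ dx`, to every solution
`x ↦ (Y(x;x₀)⁻¹)* η₀` of the adjoint system belonging to `L¹([0,∞) → ℝⁿ)`. -/
theorem orthogonality_condition_iff (n : ℕ)
    (A : EuclideanSpace ℝ (Fin n) →L[ℝ] EuclideanSpace ℝ (Fin n))
    (B : ℝ → EuclideanSpace ℝ (Fin n) →L[ℝ] EuclideanSpace ℝ (Fin n))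
    (hBcont : ContinuousOn B (Set.Ioi 0)) (hBbdd : ∃ M, ∀ x > (0 : ℝ), ‖B x‖ ≤ M)
    (x₀ : ℝ) (hx₀ : 0 < x₀)
    (Y : ℝ → EuclideanSpace ℝ (Fin n) →L[ℝ] EuclideanSpace ℝ (Fin n))
    (hYd : ∀ x > (0 : ℝ), HasDerivAt Y ((x⁻¹ • A + B x) ∘L Y x) x)
    (hYx₀ : Y x₀ = 1) (hYu : ∀ x > (0 : ℝ), IsUnit (Y x))
    (P₁ P₂ P₃ P₄ P₅ P₆ : EuclideanSpace ℝ (Fin n) →L[ℝ] EuclideanSpace ℝ (Fin n))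
    (hsum : P₁ + P₂ + P₃ + P₄ + P₅ + P₆ = 1)
    (hidem : ∀ i, ![P₁, P₂, P₃, P₄, P₅, P₆] i ∘L ![P₁, P₂, P₃, P₄, P₅, P₆] i
      = ![P₁, P₂, P₃, P₄, P₅, P₆] i)
    (hdisj : ∀ i j, i ≠ j →
      ![P₁, P₂, P₃, P₄, P₅, P₆] i ∘L ![P₁, P₂, P₃, P₄, P₅, P₆] j = 0)
    -- the projectors are self-adjoint
    (hsa : ∀ i, ContinuousLinearMap.adjoint (![P₁, P₂, P₃, P₄, P₅, P₆] i)
      = ![P₁, P₂, P₃, P₄, P₅, P₆] i)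
    (C₀ α : ℝ) (hC₀ : 0 < C₀) (hα : 0 < α)
    (hQp : ∀ x s : ℝ, 0 < x → x ≤ s → s ≤ x₀ →
      ‖Y x ∘L (P₁ + P₄) ∘L Ring.inverse (Y s)‖ ≤ C₀ * (x / s) ^ (1 + α))
    (hQm : ∀ x s : ℝ, 0 < s → s ≤ x → x ≤ x₀ →
      ‖Y x ∘L (P₂ + P₃ + P₅ + P₆) ∘L Ring.inverse (Y s)‖ ≤ C₀ * (x / s) ^ (1 - α))
    (Cs γ : ℝ) (hCs : 0 < Cs) (hγ : 0 < γ)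
    (hPm : ∀ x s : ℝ, x₀ ≤ s → s ≤ x →
      ‖Y x ∘L (P₁ + P₂ + P₃) ∘L Ring.inverse (Y s)‖ ≤ Cs * Real.exp (-(γ * (x - s))))
    (hPp : ∀ x s : ℝ, x₀ ≤ x → x ≤ s →
      ‖Y x ∘L (P₄ + P₅ + P₆) ∘L Ring.inverse (Y s)‖ ≤ Cs * Real.exp (-(γ * (s - x))))
    -- g continuous and bounded
    (g : ℝ → EuclideanSpace ℝ (Fin n))
    (hgcont : ContinuousOn g (Set.Ici 0)) (hgbdd : ∃ M, ∀ x ≥ (0 : ℝ), ‖g x‖ ≤ M) :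
    (∫ s in Set.Ioi (0 : ℝ), ((P₅ + P₆) ∘L Ring.inverse (Y s)) (g s) = 0)
      ↔ ∀ η₀ : EuclideanSpace ℝ (Fin n),
          IntegrableOn
            (fun x => ContinuousLinearMap.adjoint (Ring.inverse (Y x)) η₀) (Set.Ioi 0) →
          ∫ x in Set.Ioi (0 : ℝ),
            (inner ℝ (ContinuousLinearMap.adjoint (Ring.inverse (Y x)) η₀) (g x) : ℝ) = 0 := by
  classical
  obtain ⟨Mg, hMg⟩ := hgbdd
  have hMg0 : 0 ≤ Mg := le_trans (norm_nonneg _) (hMg 0 le_rfl)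
  -- elementary projector products
  have e11 : P₁ ∘L P₁ = P₁ := by simpa using hidem 0
  have e22 : P₂ ∘L P₂ = P₂ := by simpa using hidem 1
  have e33 : P₃ ∘L P₃ = P₃ := by simpa using hidem 2
  have e44 : P₄ ∘L P₄ = P₄ := by simpa using hidem 3
  have e55 : P₅ ∘L P₅ = P₅ := by simpa using hidem 4
  have e66 : P₆ ∘L P₆ = P₆ := by simpa using hidem 5
  have e12 : P₁ ∘L P₂ = 0 := by simpa using hdisj 0 1 (by decide)
  have e13 : P₁ ∘L P₃ = 0 := by simpa using hdisj 0 2 (by decide)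
  have e14 : P₁ ∘L P₄ = 0 := by simpa using hdisj 0 3 (by decide)
  have e21 : P₂ ∘L P₁ = 0 := by simpa using hdisj 1 0 (by decide)
  have e23 : P₂ ∘L P₃ = 0 := by simpa using hdisj 1 2 (by decide)
  have e24 : P₂ ∘L P₄ = 0 := by simpa using hdisj 1 3 (by decide)
  have e25 : P₂ ∘L P₅ = 0 := by simpa using hdisj 1 4 (by decide)
  have e26 : P₂ ∘L P₆ = 0 := by simpa using hdisj 1 5 (by decide)
  have e31 : P₃ ∘L P₁ = 0 := by simpa using hdisj 2 0 (by decide)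
  have e32 : P₃ ∘L P₂ = 0 := by simpa using hdisj 2 1 (by decide)
  have e34 : P₃ ∘L P₄ = 0 := by simpa using hdisj 2 3 (by decide)
  have e35 : P₃ ∘L P₅ = 0 := by simpa using hdisj 2 4 (by decide)
  have e36 : P₃ ∘L P₆ = 0 := by simpa using hdisj 2 5 (by decide)
  have e41 : P₄ ∘L P₁ = 0 := by simpa using hdisj 3 0 (by decide)
  have e42 : P₄ ∘L P₂ = 0 := by simpa using hdisj 3 1 (by decide)
  have e43 : P₄ ∘L P₃ = 0 := by simpa using hdisj 3 2 (by decide)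
  have e45 : P₄ ∘L P₅ = 0 := by simpa using hdisj 3 4 (by decide)
  have e46 : P₄ ∘L P₆ = 0 := by simpa using hdisj 3 5 (by decide)
  have e52 : P₅ ∘L P₂ = 0 := by simpa using hdisj 4 1 (by decide)
  have e53 : P₅ ∘L P₃ = 0 := by simpa using hdisj 4 2 (by decide)
  have e54 : P₅ ∘L P₄ = 0 := by simpa using hdisj 4 3 (by decide)
  have e56 : P₅ ∘L P₆ = 0 := by simpa using hdisj 4 5 (by decide)
  have e62 : P₆ ∘L P₂ = 0 := by simpa using hdisj 5 1 (by decide)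
  have e63 : P₆ ∘L P₃ = 0 := by simpa using hdisj 5 2 (by decide)
  have e64 : P₆ ∘L P₄ = 0 := by simpa using hdisj 5 3 (by decide)
  have e65 : P₆ ∘L P₅ = 0 := by simpa using hdisj 5 4 (by decide)
  -- composite identities
  have hPpQm : (P₄ + P₅ + P₆) ∘L (P₂ + P₃ + P₅ + P₆) = P₅ + P₆ := by
    simp only [ContinuousLinearMap.add_comp, ContinuousLinearMap.comp_add,
      e42, e43, e45, e46, e52, e53, e55, e56, e62, e63, e65, e66]
    abel
  have hQmPp : (P₂ + P₃ + P₅ + P₆) ∘L (P₄ + P₅ + P₆) = P₅ + P₆ := by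
    simp only [ContinuousLinearMap.add_comp, ContinuousLinearMap.comp_add,
      e24, e25, e26, e34, e35, e36, e54, e55, e56, e64, e65, e66]
    abel
  have hPmPm : (P₁ + P₂ + P₃) ∘L (P₁ + P₂ + P₃) = P₁ + P₂ + P₃ := by
    simp only [ContinuousLinearMap.add_comp, ContinuousLinearMap.comp_add,
      e11, e12, e13, e21, e22, e23, e31, e32, e33]
    abel
  have hQpQp : (P₁ + P₄) ∘L (P₁ + P₄) = P₁ + P₄ := by
    simp only [ContinuousLinearMap.add_comp, ContinuousLinearMap.comp_add,
      e11, e14, e41, e44]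
    abel
  have hP1Qp : P₁ ∘L (P₁ + P₄) = P₁ := by
    simp only [ContinuousLinearMap.comp_add, e11, e14]
    abel
  -- self-adjointness of sums
  have hsa1 : ContinuousLinearMap.adjoint P₁ = P₁ := by simpa using hsa 0
  have hsa2 : ContinuousLinearMap.adjoint P₂ = P₂ := by simpa using hsa 1
  have hsa3 : ContinuousLinearMap.adjoint P₃ = P₃ := by simpa using hsa 2
  have hsa4 : ContinuousLinearMap.adjoint P₄ = P₄ := by simpa using hsa 3
  have hsa5 : ContinuousLinearMap.adjoint P₅ = P₅ := by simpa using hsa 4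
  have hsa6 : ContinuousLinearMap.adjoint P₆ = P₆ := by simpa using hsa 5
  have hsa56 : ContinuousLinearMap.adjoint (P₅ + P₆) = P₅ + P₆ := by
    rw [map_add, hsa5, hsa6]
  have hsaPm : ContinuousLinearMap.adjoint (P₁ + P₂ + P₃) = P₁ + P₂ + P₃ := by
    rw [map_add, map_add, hsa1, hsa2, hsa3]
  have hsaQp : ContinuousLinearMap.adjoint (P₁ + P₄) = P₁ + P₄ := by
    rw [map_add, hsa1, hsa4]
  -- moving a self-adjoint operator across the inner ℝ product
  have hmove : ∀ (T : EuclideanSpace ℝ (Fin n) →L[ℝ] EuclideanSpace ℝ (Fin n)),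
      ContinuousLinearMap.adjoint T = T →
      ∀ a w : EuclideanSpace ℝ (Fin n), (inner ℝ (T a) w : ℝ) = inner ℝ a (T w) := by
    intro T hT a w
    conv_lhs => rw [← hT]
    exact ContinuousLinearMap.adjoint_inner_left _ _ _
  -- inverse facts
  have hYix₀ : Ring.inverse (Y x₀) = (1 : EuclideanSpace ℝ (Fin n) →L[ℝ] EuclideanSpace ℝ (Fin n)) := by
    rw [hYx₀, Ring.inverse_one]
  have hYiYapp : ∀ x > (0 : ℝ), ∀ v, Ring.inverse (Y x) (Y x v) = v := by
    intro x hx v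
    have h1 : Ring.inverse (Y x) * Y x = 1 := Ring.inverse_mul_cancel _ (hYu x hx)
    calc Ring.inverse (Y x) (Y x v) = (Ring.inverse (Y x) * Y x) v := rfl
      _ = v := by rw [h1]; rfl
  -- continuity
  have hYc : ContinuousOn Y (Ioi 0) := fun x hx => (hYd x hx).continuousAt.continuousWithinAt
  have hYic : ContinuousOn (fun s => Ring.inverse (Y s)) (Ioi (0 : ℝ)) := by
    intro x hx
    have h1 : ContinuousAt Ring.inverse (Y x) := by
      have := NormedRing.inverse_continuousAt (hYu x hx).unit
      rwa [IsUnit.unit_spec] at this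
    exact h1.comp_continuousWithinAt (hYc x hx)
  have hgc' : ContinuousOn g (Ioi 0) := hgcont.mono Ioi_subset_Ici_self
  -- the pairing identity
  have hpair : ∀ x > (0 : ℝ), ∀ (η u : EuclideanSpace ℝ (Fin n)),
      (inner ℝ (ContinuousLinearMap.adjoint (Ring.inverse (Y x)) η) (Y x u) : ℝ) = inner ℝ η u := by
    intro x hx η u
    rw [ContinuousLinearMap.adjoint_inner_left, hYiYapp x hx u]
  -- operator norm bounds for (P₅+P₆) ∘L (Y x)⁻¹
  have happ1 : ∀ w, (P₄ + P₅ + P₆) ((P₂ + P₃ + P₅ + P₆) w) = (P₅ + P₆) w := by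
    intro w
    rw [← ContinuousLinearMap.comp_apply, hPpQm]
  have happ2 : ∀ w, (P₂ + P₃ + P₅ + P₆) ((P₄ + P₅ + P₆) w) = (P₅ + P₆) w := by
    intro w
    rw [← ContinuousLinearMap.comp_apply, hQmPp]
  have hop1 : ∀ x ∈ Ioc (0 : ℝ) x₀,
      ‖(P₅ + P₆) ∘L Ring.inverse (Y x)‖
        ≤ (‖P₄ + P₅ + P₆‖ * C₀ * x₀ ^ (1 - α)) * x ^ (α - 1) := by
    intro x hx
    have h1 : (P₅ + P₆) ∘L Ring.inverse (Y x)
        = (P₄ + P₅ + P₆) ∘L (Y x₀ ∘L ((P₂ + P₃ + P₅ + P₆) ∘L Ring.inverse (Y x))) := by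
      rw [hYx₀, ContinuousLinearMap.one_def, ContinuousLinearMap.id_comp,
        ← ContinuousLinearMap.comp_assoc, hPpQm]
    have h2 : ‖Y x₀ ∘L (P₂ + P₃ + P₅ + P₆) ∘L Ring.inverse (Y x)‖ ≤ C₀ * (x₀ / x) ^ (1 - α) :=
      hQm x₀ x hx.1 hx.2 le_rfl
    have h3 : (x₀ / x) ^ (1 - α) = x₀ ^ (1 - α) * x ^ (α - 1) := by
      rw [Real.div_rpow hx₀.le hx.1.le, div_eq_mul_inv, ← Real.rpow_neg hx.1.le, neg_sub]
    calc ‖(P₅ + P₆) ∘L Ring.inverse (Y x)‖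
        = ‖(P₄ + P₅ + P₆) ∘L (Y x₀ ∘L ((P₂ + P₃ + P₅ + P₆) ∘L Ring.inverse (Y x)))‖ := by rw [h1]
      _ ≤ ‖P₄ + P₅ + P₆‖ * ‖Y x₀ ∘L (P₂ + P₃ + P₅ + P₆) ∘L Ring.inverse (Y x)‖ :=
          ContinuousLinearMap.opNorm_comp_le _ _
      _ ≤ ‖P₄ + P₅ + P₆‖ * (C₀ * (x₀ / x) ^ (1 - α)) :=
          mul_le_mul_of_nonneg_left h2 (norm_nonneg _)
      _ = (‖P₄ + P₅ + P₆‖ * C₀ * x₀ ^ (1 - α)) * x ^ (α - 1) := by rw [h3]; ring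
  have hop2 : ∀ x ∈ Ici x₀,
      ‖(P₅ + P₆) ∘L Ring.inverse (Y x)‖
        ≤ (‖P₂ + P₃ + P₅ + P₆‖ * Cs * Real.exp (γ * x₀)) * Real.exp (-γ * x) := by
    intro x hx
    have h1 : (P₅ + P₆) ∘L Ring.inverse (Y x)
        = (P₂ + P₃ + P₅ + P₆) ∘L (Y x₀ ∘L ((P₄ + P₅ + P₆) ∘L Ring.inverse (Y x))) := by
      rw [hYx₀, ContinuousLinearMap.one_def, ContinuousLinearMap.id_comp,
        ← ContinuousLinearMap.comp_assoc, hQmPp]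
    have h2 : ‖Y x₀ ∘L (P₄ + P₅ + P₆) ∘L Ring.inverse (Y x)‖ ≤ Cs * Real.exp (-(γ * (x - x₀))) :=
      hPp x₀ x le_rfl hx
    have h3 : Real.exp (-(γ * (x - x₀))) = Real.exp (γ * x₀) * Real.exp (-γ * x) := by
      rw [← Real.exp_add]; ring_nf
    calc ‖(P₅ + P₆) ∘L Ring.inverse (Y x)‖
        = ‖(P₂ + P₃ + P₅ + P₆) ∘L (Y x₀ ∘L ((P₄ + P₅ + P₆) ∘L Ring.inverse (Y x)))‖ := by rw [h1]
      _ ≤ ‖P₂ + P₃ + P₅ + P₆‖ * ‖Y x₀ ∘L (P₄ + P₅ + P₆) ∘L Ring.inverse (Y x)‖ :=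
          ContinuousLinearMap.opNorm_comp_le _ _
      _ ≤ ‖P₂ + P₃ + P₅ + P₆‖ * (Cs * Real.exp (-(γ * (x - x₀)))) :=
          mul_le_mul_of_nonneg_left h2 (norm_nonneg _)
      _ = (‖P₂ + P₃ + P₅ + P₆‖ * Cs * Real.exp (γ * x₀)) * Real.exp (-γ * x) := by rw [h3]; ring
  -- a generic integrability criterion
  have hgen : ∀ (h : ℝ → EuclideanSpace ℝ (Fin n)) (M0 : ℝ), 0 ≤ M0 →
      ContinuousOn h (Ioi 0) →
      (∀ x ∈ Ioi (0 : ℝ), ‖h x‖ ≤ M0 * ‖(P₅ + P₆) ∘L Ring.inverse (Y x)‖) →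
      IntegrableOn h (Ioi 0) := by
    intro h M0 hM0 hc hb
    have hIoc : IntegrableOn h (Ioc 0 x₀) := by
      apply Integrable.mono'
        (g := fun x => (M0 * (‖P₄ + P₅ + P₆‖ * C₀ * x₀ ^ (1 - α))) * x ^ (α - 1))
      · have h1 : IntegrableOn (fun x : ℝ => x ^ (α - 1)) (Ioc 0 x₀) := by
          have := intervalIntegral.intervalIntegrable_rpow' (a := 0) (b := x₀)
            (show (-1 : ℝ) < α - 1 by linarith)
          rwa [intervalIntegrable_iff_integrableOn_Ioc_of_le hx₀.le] at this
        exact h1.const_mul _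
      · exact (hc.mono Ioc_subset_Ioi_self).aestronglyMeasurable measurableSet_Ioc
      · rw [ae_restrict_iff' measurableSet_Ioc]
        filter_upwards with x hx
        calc ‖h x‖ ≤ M0 * ‖(P₅ + P₆) ∘L Ring.inverse (Y x)‖ := hb x hx.1
          _ ≤ M0 * ((‖P₄ + P₅ + P₆‖ * C₀ * x₀ ^ (1 - α)) * x ^ (α - 1)) :=
              mul_le_mul_of_nonneg_left (hop1 x hx) hM0
          _ = (M0 * (‖P₄ + P₅ + P₆‖ * C₀ * x₀ ^ (1 - α))) * x ^ (α - 1) := by ring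
    have hIoi : IntegrableOn h (Ioi x₀) := by
      apply Integrable.mono'
        (g := fun x => (M0 * (‖P₂ + P₃ + P₅ + P₆‖ * Cs * Real.exp (γ * x₀))) * Real.exp (-γ * x))
      · exact (exp_neg_integrableOn_Ioi x₀ hγ).const_mul _
      · exact (hc.mono (Ioi_subset_Ioi hx₀.le)).aestronglyMeasurable measurableSet_Ioi
      · rw [ae_restrict_iff' measurableSet_Ioi]
        filter_upwards with x hx
        calc ‖h x‖ ≤ M0 * ‖(P₅ + P₆) ∘L Ring.inverse (Y x)‖ := hb x (lt_trans hx₀ hx)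
          _ ≤ M0 * ((‖P₂ + P₃ + P₅ + P₆‖ * Cs * Real.exp (γ * x₀)) * Real.exp (-γ * x)) :=
              mul_le_mul_of_nonneg_left (hop2 x (mem_Ici.2 (le_of_lt hx))) hM0
          _ = (M0 * (‖P₂ + P₃ + P₅ + P₆‖ * Cs * Real.exp (γ * x₀))) * Real.exp (-γ * x) := by
              ring
    have := hIoc.union hIoi
    rwa [Ioc_union_Ioi_eq_Ioi hx₀.le] at this
  -- integrability of the key vector field F
  have hFint : IntegrableOn (fun s => ((P₅ + P₆) ∘L Ring.inverse (Y s)) (g s)) (Ioi (0 : ℝ)) := by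
    apply hgen _ Mg hMg0
    · exact (((ContinuousLinearMap.compL ℝ (EuclideanSpace ℝ (Fin n)) (EuclideanSpace ℝ (Fin n))
        (EuclideanSpace ℝ (Fin n)) (P₅ + P₆)).continuous.comp_continuousOn hYic).clm_apply hgc')
    · intro x hx
      calc ‖((P₅ + P₆) ∘L Ring.inverse (Y x)) (g x)‖
          ≤ ‖(P₅ + P₆) ∘L Ring.inverse (Y x)‖ * ‖g x‖ := ContinuousLinearMap.le_opNorm _ _
        _ ≤ ‖(P₅ + P₆) ∘L Ring.inverse (Y x)‖ * Mg :=
            mul_le_mul_of_nonneg_left (hMg x (le_of_lt hx)) (norm_nonneg _)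
        _ = Mg * ‖(P₅ + P₆) ∘L Ring.inverse (Y x)‖ := mul_comm _ _
  -- integrability of the adjoint solutions with data in range (P₅+P₆)
  have hAint : ∀ ζ : EuclideanSpace ℝ (Fin n),
      IntegrableOn (fun x => ContinuousLinearMap.adjoint (Ring.inverse (Y x)) ((P₅ + P₆) ζ))
        (Ioi (0 : ℝ)) := by
    intro ζ
    apply hgen _ ‖ζ‖ (norm_nonneg ζ)
    · exact (((ContinuousLinearMap.adjoint (𝕜 := ℝ) (E := EuclideanSpace ℝ (Fin n))
        (F := EuclideanSpace ℝ (Fin n))).continuous.comp_continuousOn hYic).clm_apply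
        continuousOn_const)
    · intro x hx
      have h1 : ContinuousLinearMap.adjoint (Ring.inverse (Y x)) ((P₅ + P₆) ζ)
          = ContinuousLinearMap.adjoint ((P₅ + P₆) ∘L Ring.inverse (Y x)) ζ := by
        rw [ContinuousLinearMap.adjoint_comp, hsa56, ContinuousLinearMap.comp_apply]
      rw [h1]
      calc ‖ContinuousLinearMap.adjoint ((P₅ + P₆) ∘L Ring.inverse (Y x)) ζ‖
          ≤ ‖ContinuousLinearMap.adjoint ((P₅ + P₆) ∘L Ring.inverse (Y x))‖ * ‖ζ‖ :=
            ContinuousLinearMap.le_opNorm _ _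
        _ = ‖(P₅ + P₆) ∘L Ring.inverse (Y x)‖ * ‖ζ‖ := by
            rw [LinearIsometryEquiv.norm_map]
        _ = ‖ζ‖ * ‖(P₅ + P₆) ∘L Ring.inverse (Y x)‖ := mul_comm _ _
  constructor
  · -- forward direction
    intro hL η₀ hη
    -- kill the (P₁+P₂+P₃)-component
    have hz1 : ∀ v, (inner ℝ η₀ ((P₁ + P₂ + P₃) v) : ℝ) = 0 := by
      intro v
      by_contra hc
      have hv : v ≠ 0 := by rintro rfl; simp at hc
      have hKpos : 0 < Cs * ‖v‖ := mul_pos hCs (norm_pos_iff.2 hv)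
      set c := |(inner ℝ η₀ ((P₁ + P₂ + P₃) v) : ℝ)| with hcdef
      have hcpos : 0 < c := abs_pos.2 hc
      have hlow : ∀ x ∈ Ici x₀,
          c / (Cs * ‖v‖) ≤ ‖ContinuousLinearMap.adjoint (Ring.inverse (Y x)) η₀‖ := by
        intro x hx
        have hxpos : (0 : ℝ) < x := lt_of_lt_of_le hx₀ hx
        have hYxu : ‖Y x ((P₁ + P₂ + P₃) v)‖ ≤ Cs * ‖v‖ := by
          have h1 : Y x ((P₁ + P₂ + P₃) v)
              = (Y x ∘L (P₁ + P₂ + P₃) ∘L Ring.inverse (Y x₀)) v := by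
            simp only [ContinuousLinearMap.comp_apply, hYix₀, ContinuousLinearMap.one_apply]
          have h2 : Real.exp (-(γ * (x - x₀))) ≤ 1 := by
            rw [Real.exp_le_one_iff]
            nlinarith [sub_nonneg.2 (mem_Ici.1 hx)]
          calc ‖Y x ((P₁ + P₂ + P₃) v)‖
              = ‖(Y x ∘L (P₁ + P₂ + P₃) ∘L Ring.inverse (Y x₀)) v‖ := by rw [h1]
            _ ≤ ‖Y x ∘L (P₁ + P₂ + P₃) ∘L Ring.inverse (Y x₀)‖ * ‖v‖ :=
                ContinuousLinearMap.le_opNorm _ _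
            _ ≤ (Cs * Real.exp (-(γ * (x - x₀)))) * ‖v‖ :=
                mul_le_mul_of_nonneg_right (hPm x x₀ le_rfl hx) (norm_nonneg _)
            _ ≤ Cs * ‖v‖ := by nlinarith [norm_nonneg v, Real.exp_pos (-(γ * (x - x₀)))]
        have hpc : c ≤ ‖ContinuousLinearMap.adjoint (Ring.inverse (Y x)) η₀‖ * (Cs * ‖v‖) := by
          have h2 : (inner ℝ η₀ ((P₁ + P₂ + P₃) v) : ℝ)
              = inner ℝ (ContinuousLinearMap.adjoint (Ring.inverse (Y x)) η₀)
                  (Y x ((P₁ + P₂ + P₃) v)) := (hpair x hxpos η₀ _).symm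
          calc c = |(inner ℝ (ContinuousLinearMap.adjoint (Ring.inverse (Y x)) η₀)
                (Y x ((P₁ + P₂ + P₃) v)) : ℝ)| := by rw [hcdef, h2]
            _ ≤ ‖ContinuousLinearMap.adjoint (Ring.inverse (Y x)) η₀‖
                  * ‖Y x ((P₁ + P₂ + P₃) v)‖ := abs_real_inner_le_norm _ _
            _ ≤ ‖ContinuousLinearMap.adjoint (Ring.inverse (Y x)) η₀‖ * (Cs * ‖v‖) :=
                mul_le_mul_of_nonneg_left hYxu (norm_nonneg _)
        exact (div_le_iff₀ hKpos).2 hpc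
      have hfI : IntegrableOn (fun x => ContinuousLinearMap.adjoint (Ring.inverse (Y x)) η₀)
          (Ici x₀) := hη.mono_set (fun y hy => lt_of_lt_of_le hx₀ hy)
      have hconst : Integrable (fun _ : ℝ => c / (Cs * ‖v‖)) (volume.restrict (Ici x₀)) := by
        apply Integrable.mono' hfI.norm aestronglyMeasurable_const
        rw [ae_restrict_iff' measurableSet_Ici]
        filter_upwards with x hx
        rw [Real.norm_of_nonneg (by positivity)]
        exact hlow x hx
      rw [integrable_const_iff] at hconst
      rcases hconst with h | h
      · exact absurd h (ne_of_gt (div_pos hcpos hKpos))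
      · have h := h.measure_univ_lt_top
        rw [Measure.restrict_apply_univ, Real.volume_Ici] at h
        exact absurd h (by simp)
    have hPm0 : (P₁ + P₂ + P₃) η₀ = 0 := by
      have h1 := hz1 ((P₁ + P₂ + P₃) η₀)
      rw [← hmove _ hsaPm] at h1
      exact inner_self_eq_zero.1 h1
    -- kill the (P₁+P₄)-component
    have hz2 : ∀ v, (inner ℝ η₀ ((P₁ + P₄) v) : ℝ) = 0 := by
      intro v
      by_contra hc
      have hv : v ≠ 0 := by rintro rfl; simp at hc
      have hKpos : 0 < C₀ * ‖v‖ := mul_pos hC₀ (norm_pos_iff.2 hv)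
      set c := |(inner ℝ η₀ ((P₁ + P₄) v) : ℝ)| with hcdef
      have hcpos : 0 < c := abs_pos.2 hc
      have hlow : ∀ x ∈ Ioo (0 : ℝ) x₀,
          x ^ (-1 : ℝ) ≤ C₀ * ‖v‖ / (c * x₀)
            * ‖ContinuousLinearMap.adjoint (Ring.inverse (Y x)) η₀‖ := by
        intro x hx
        obtain ⟨hx1, hx2⟩ := hx
        have hxne : x ≠ 0 := ne_of_gt hx1
        have hYxu : ‖Y x ((P₁ + P₄) v)‖ ≤ C₀ * (x / x₀) * ‖v‖ := by
          have h1 : Y x ((P₁ + P₄) v) = (Y x ∘L (P₁ + P₄) ∘L Ring.inverse (Y x₀)) v := by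
            simp only [ContinuousLinearMap.comp_apply, hYix₀, ContinuousLinearMap.one_apply]
          have h2 : (x / x₀) ^ (1 + α) ≤ x / x₀ := by
            have h3 := Real.rpow_le_rpow_of_exponent_ge (y := 1 + α) (z := 1)
              (div_pos hx1 hx₀) ((div_le_one hx₀).2 hx2.le)
              (le_add_of_nonneg_right hα.le)
            rwa [Real.rpow_one] at h3
          calc ‖Y x ((P₁ + P₄) v)‖
              = ‖(Y x ∘L (P₁ + P₄) ∘L Ring.inverse (Y x₀)) v‖ := by rw [h1]
            _ ≤ ‖Y x ∘L (P₁ + P₄) ∘L Ring.inverse (Y x₀)‖ * ‖v‖ :=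
                ContinuousLinearMap.le_opNorm _ _
            _ ≤ (C₀ * (x / x₀) ^ (1 + α)) * ‖v‖ :=
                mul_le_mul_of_nonneg_right (hQp x x₀ hx1 hx2.le le_rfl) (norm_nonneg _)
            _ ≤ C₀ * (x / x₀) * ‖v‖ := by nlinarith [norm_nonneg v]
        have hbase : c ≤ ‖ContinuousLinearMap.adjoint (Ring.inverse (Y x)) η₀‖
            * (C₀ * (x / x₀) * ‖v‖) := by
          have h2 : (inner ℝ η₀ ((P₁ + P₄) v) : ℝ)
              = inner ℝ (ContinuousLinearMap.adjoint (Ring.inverse (Y x)) η₀)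
                  (Y x ((P₁ + P₄) v)) := (hpair x hx1 η₀ _).symm
          calc c = |(inner ℝ (ContinuousLinearMap.adjoint (Ring.inverse (Y x)) η₀)
                (Y x ((P₁ + P₄) v)) : ℝ)| := by rw [hcdef, h2]
            _ ≤ ‖ContinuousLinearMap.adjoint (Ring.inverse (Y x)) η₀‖
                  * ‖Y x ((P₁ + P₄) v)‖ := abs_real_inner_le_norm _ _
            _ ≤ ‖ContinuousLinearMap.adjoint (Ring.inverse (Y x)) η₀‖
                  * (C₀ * (x / x₀) * ‖v‖) := mul_le_mul_of_nonneg_left hYxu (norm_nonneg _)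
        have hbase' : c * x₀ ≤ ‖ContinuousLinearMap.adjoint (Ring.inverse (Y x)) η₀‖
            * (C₀ * ‖v‖) * x := by
          calc c * x₀ ≤ (‖ContinuousLinearMap.adjoint (Ring.inverse (Y x)) η₀‖
                * (C₀ * (x / x₀) * ‖v‖)) * x₀ := mul_le_mul_of_nonneg_right hbase hx₀.le
            _ = ‖ContinuousLinearMap.adjoint (Ring.inverse (Y x)) η₀‖ * (C₀ * ‖v‖) * x := by
                field_simp
        rw [Real.rpow_neg_one, div_mul_eq_mul_div,
          le_div_iff₀ (by positivity : (0 : ℝ) < c * x₀)]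
        calc x⁻¹ * (c * x₀)
            ≤ x⁻¹ * (‖ContinuousLinearMap.adjoint (Ring.inverse (Y x)) η₀‖ * (C₀ * ‖v‖) * x) :=
              mul_le_mul_of_nonneg_left hbase' (inv_nonneg.2 hx1.le)
          _ = C₀ * ‖v‖ * ‖ContinuousLinearMap.adjoint (Ring.inverse (Y x)) η₀‖ := by
              field_simp
      have hfI : IntegrableOn (fun x => ContinuousLinearMap.adjoint (Ring.inverse (Y x)) η₀)
          (Ioo 0 x₀) := hη.mono_set (fun y hy => hy.1)
      have h2 : IntegrableOn (fun x : ℝ => x ^ (-1 : ℝ)) (Ioo 0 x₀) := by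
        apply Integrable.mono' (hfI.norm.const_mul (C₀ * ‖v‖ / (c * x₀)))
        · exact (measurable_id.pow_const (-1 : ℝ)).aestronglyMeasurable
        · rw [ae_restrict_iff' measurableSet_Ioo]
          filter_upwards with x hx
          rw [Real.norm_of_nonneg (Real.rpow_nonneg hx.1.le _)]
          exact hlow x hx
      rw [intervalIntegral.integrableOn_Ioo_rpow_iff hx₀] at h2
      linarith
    have hQp0 : (P₁ + P₄) η₀ = 0 := by
      have h1 := hz2 ((P₁ + P₄) η₀)
      rw [← hmove _ hsaQp] at h1
      exact inner_self_eq_zero.1 h1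
    have hP1η : P₁ η₀ = 0 := by
      have h1 : P₁ ((P₁ + P₄) η₀) = P₁ η₀ := by
        rw [← ContinuousLinearMap.comp_apply, hP1Qp]
      rw [hQp0] at h1
      simpa using h1.symm
    have hη15 : η₀ = (P₅ + P₆) η₀ := by
      have hsum' : P₁ η₀ + P₂ η₀ + P₃ η₀ + P₄ η₀ + P₅ η₀ + P₆ η₀ = η₀ := by
        have := congrArg (fun T => T η₀) hsum
        simpa [ContinuousLinearMap.add_apply, ContinuousLinearMap.one_apply] using this
      have h23 : P₂ η₀ + P₃ η₀ = 0 := by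
        have h1 : P₁ η₀ + P₂ η₀ + P₃ η₀ = 0 := by
          simpa [ContinuousLinearMap.add_apply] using hPm0
        rw [hP1η] at h1
        simpa using h1
      have h4 : P₄ η₀ = 0 := by
        have h1 : P₁ η₀ + P₄ η₀ = 0 := by
          simpa [ContinuousLinearMap.add_apply] using hQp0
        rw [hP1η, zero_add] at h1
        exact h1
      have h56 : (P₅ + P₆) η₀ = P₅ η₀ + P₆ η₀ := by
        simp [ContinuousLinearMap.add_apply]
      rw [h56]
      calc η₀ = P₁ η₀ + P₂ η₀ + P₃ η₀ + P₄ η₀ + P₅ η₀ + P₆ η₀ := hsum'.symm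
        _ = P₁ η₀ + (P₂ η₀ + P₃ η₀) + P₄ η₀ + (P₅ η₀ + P₆ η₀) := by abel
        _ = P₅ η₀ + P₆ η₀ := by rw [hP1η, h23, h4]; simp
    -- conclude
    have heq : (fun x => (inner ℝ (ContinuousLinearMap.adjoint (Ring.inverse (Y x)) η₀)
          (g x) : ℝ))
        = fun x => (inner ℝ η₀ (((P₅ + P₆) ∘L Ring.inverse (Y x)) (g x)) : ℝ) := by
      funext x
      rw [ContinuousLinearMap.adjoint_inner_left, ContinuousLinearMap.comp_apply]
      conv_lhs => rw [hη15]
      exact hmove _ hsa56 _ _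
    rw [heq, integral_inner hFint, hL, inner_zero_right]
  · -- reverse direction
    intro hR
    have key : ∀ ζ : EuclideanSpace ℝ (Fin n),
        (inner ℝ ζ (∫ s in Ioi (0 : ℝ), ((P₅ + P₆) ∘L Ring.inverse (Y s)) (g s)) : ℝ) = 0 := by
      intro ζ
      have h0 := hR ((P₅ + P₆) ζ) (hAint ζ)
      have heq : (fun x => (inner ℝ (ContinuousLinearMap.adjoint (Ring.inverse (Y x))
            ((P₅ + P₆) ζ)) (g x) : ℝ))
          = fun x => (inner ℝ ζ (((P₅ + P₆) ∘L Ring.inverse (Y x)) (g x)) : ℝ) := by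
        funext x
        rw [ContinuousLinearMap.adjoint_inner_left, ContinuousLinearMap.comp_apply,
          hmove _ hsa56]
      rw [heq, integral_inner hFint] at h0
      exact h0
    have h1 := key (∫ s in Ioi (0 : ℝ), ((P₅ + P₆) ∘L Ring.inverse (Y s)) (g s))
    exact inner_self_eq_zero.1 h1
end

section
/- Assume additionally that C₇ := sup_{x ∈ (0,x₀]} ‖Y(x;x₀)P₅‖ < ∞. Then there exists a constant K₁ > 0, depending only on α, γ, x₀, C₀, C*, C₇ and the norms of the projectors, such that for every continuous bounded ḡ : [0,∞) → ℝⁿ satisfying ∫₀^{∞} P₆ Y(s;x₀)⁻¹ ḡ(s) ds = 0 (this integral converging absolutely) and for every x > 0: ‖∫₀^{∞} G(x,s) ḡ(s) ds‖ ≤ K₁ · sup_{s ≥ 0} ‖ḡ(s)‖. -/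
open MeasureTheory Set Filter
open scoped Topology

section MyHelpers
open Real

private lemma myIntOn_Ioc_rpow {β : ℝ} (hβ : 0 < β) {x : ℝ} (hx : 0 < x) :
    IntegrableOn (fun s : ℝ => s ^ (β - 1)) (Ioc 0 x) := by
  have h := intervalIntegral.intervalIntegrable_rpow' (a := 0) (b := x) (r := β - 1)
    (by linarith)
  rwa [intervalIntegrable_iff_integrableOn_Ioc_of_le hx.le] at h

private lemma myInt_Ioc_rpow {β : ℝ} (hβ : 0 < β) {x : ℝ} (hx : 0 < x) :
    ∫ s in Ioc 0 x, s ^ (β - 1) = x ^ β / β := by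
  rw [← intervalIntegral.integral_of_le hx.le, integral_rpow (Or.inl (by linarith))]
  rw [sub_add_cancel, Real.zero_rpow hβ.ne', sub_zero]

private lemma myIntOn_Ioi_rpow {α : ℝ} (hα : 0 < α) {x : ℝ} (hx : 0 < x) :
    IntegrableOn (fun s : ℝ => s ^ (-(1 + α))) (Ioi x) :=
  integrableOn_Ioi_rpow_of_lt (by linarith) hx

private lemma myInt_Ioi_rpow {α : ℝ} (hα : 0 < α) {x : ℝ} (hx : 0 < x) :
    ∫ s in Ioi x, s ^ (-(1 + α)) = x ^ (-α) / α := by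
  rw [integral_Ioi_rpow_of_lt (by linarith) hx]
  have h1 : -(1 + α) + 1 = -α := by ring
  rw [h1, div_neg, neg_div, neg_neg]

private lemma myIntOn_exp_tail {γ : ℝ} (hγ : 0 < γ) (a : ℝ) :
    IntegrableOn (fun s : ℝ => Real.exp (-(γ * (s - a)))) (Ioi a) := by
  have h := (exp_neg_integrableOn_Ioi a hγ).const_mul (Real.exp (γ * a))
  unfold IntegrableOn
  refine h.congr (Filter.Eventually.of_forall fun s => ?_)
  simp only [← Real.exp_add]
  ring_nf

private lemma myInt_exp_tail {γ : ℝ} (hγ : 0 < γ) (a : ℝ) :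
    ∫ s in Ioi a, Real.exp (-(γ * (s - a))) = 1 / γ := by
  have hd : ∀ s ∈ Ici a, HasDerivAt (fun t => -Real.exp (-(γ * (t - a))) / γ)
      (Real.exp (-(γ * (s - a)))) s := by
    intro s _
    have h1 : HasDerivAt (fun t : ℝ => -(γ * (t - a))) (-γ) s := by
      simpa [Pi.neg_def] using (((hasDerivAt_id s).sub_const a).const_mul γ).neg
    have := (h1.exp.neg).div_const γ
    simpa [hγ.ne'] using this
  have ht : Filter.Tendsto (fun t => -Real.exp (-(γ * (t - a))) / γ) Filter.atTop
      (nhds 0) := by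
    have h2 : Filter.Tendsto (fun t : ℝ => -(γ * (t - a))) Filter.atTop Filter.atBot := by
      have h3 : Filter.Tendsto (fun t : ℝ => γ * (t - a)) Filter.atTop Filter.atTop :=
        ((Filter.tendsto_atTop_add_const_right _ (-a) Filter.tendsto_id).const_mul_atTop hγ).congr
          (fun t => by simp only [id_eq]; ring)
      exact Filter.tendsto_neg_atBot_iff.mpr h3
    have := (Real.tendsto_exp_atBot.comp h2).neg.div_const γ
    simpa using this
  have := integral_Ioi_of_hasDerivAt_of_tendsto' hd (myIntOn_exp_tail hγ a) ht
  rw [this]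
  simp [neg_div]

private lemma myIntOn_exp_Ioc {γ : ℝ} (hγ : 0 < γ) (a b : ℝ) :
    IntegrableOn (fun s : ℝ => Real.exp (-(γ * (b - s)))) (Ioc a b) :=
  (Real.continuous_exp.comp (by continuity)).integrableOn_Ioc

private lemma myInt_exp_Ioc {γ : ℝ} (hγ : 0 < γ) {a b : ℝ} (hab : a ≤ b) :
    ∫ s in Ioc a b, Real.exp (-(γ * (b - s))) ≤ 1 / γ := by
  have hd : ∀ s ∈ uIcc a b, HasDerivAt (fun t => Real.exp (-(γ * (b - t))) / γ)
      (Real.exp (-(γ * (b - s)))) s := by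
    intro s _
    have h1 : HasDerivAt (fun t : ℝ => -(γ * (b - t))) γ s := by
      simpa [Pi.neg_def] using (((hasDerivAt_id s).const_sub b).const_mul γ).neg
    simpa [hγ.ne'] using h1.exp.div_const γ
  have hint : IntervalIntegrable (fun s => Real.exp (-(γ * (b - s)))) volume a b :=
    (Real.continuous_exp.comp (by continuity)).intervalIntegrable a b
  have hfc := intervalIntegral.integral_eq_sub_of_hasDerivAt hd hint
  rw [← intervalIntegral.integral_of_le hab, hfc]
  have h2 : Real.exp (-(γ * (b - a))) / γ ≥ 0 := by positivity
  have h3 : Real.exp (-(γ * (b - b))) / γ = 1 / γ := by simp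
  linarith

private lemma my_proj_facts {R : Type*} [Ring R] (P₁ P₂ P₃ P₄ P₅ P₆ : R)
    (hidem : ∀ i, ![P₁, P₂, P₃, P₄, P₅, P₆] i * ![P₁, P₂, P₃, P₄, P₅, P₆] i
      = ![P₁, P₂, P₃, P₄, P₅, P₆] i)
    (hdisj : ∀ i j, i ≠ j →
      ![P₁, P₂, P₃, P₄, P₅, P₆] i * ![P₁, P₂, P₃, P₄, P₅, P₆] j = 0) :
    ((P₁ + P₂ + P₃) * (P₂ + P₃ + P₅ + P₆) = P₂ + P₃) ∧ (P₅ * (P₂ + P₃ + P₅ + P₆) = P₅) ∧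
    (P₅ * (P₄ + P₅ + P₆) = P₅) ∧ ((P₁ + P₄) * P₄ = P₄) ∧ (P₄ * (P₄ + P₅ + P₆) = P₄) ∧
    (P₆ * P₆ = P₆) ∧ (P₅ * P₅ = P₅) := by
  have e22 : P₂ * P₂ = P₂ := by simpa using hidem 1
  have e33 : P₃ * P₃ = P₃ := by simpa using hidem 2
  have e44 : P₄ * P₄ = P₄ := by simpa using hidem 3
  have e55 : P₅ * P₅ = P₅ := by simpa using hidem 4
  have e66 : P₆ * P₆ = P₆ := by simpa using hidem 5
  have e12 : P₁ * P₂ = 0 := by simpa using hdisj 0 1 (by decide)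
  have e13 : P₁ * P₃ = 0 := by simpa using hdisj 0 2 (by decide)
  have e14 : P₁ * P₄ = 0 := by simpa using hdisj 0 3 (by decide)
  have e15 : P₁ * P₅ = 0 := by simpa using hdisj 0 4 (by decide)
  have e16 : P₁ * P₆ = 0 := by simpa using hdisj 0 5 (by decide)
  have e23 : P₂ * P₃ = 0 := by simpa using hdisj 1 2 (by decide)
  have e25 : P₂ * P₅ = 0 := by simpa using hdisj 1 4 (by decide)
  have e26 : P₂ * P₆ = 0 := by simpa using hdisj 1 5 (by decide)
  have e32 : P₃ * P₂ = 0 := by simpa using hdisj 2 1 (by decide)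
  have e35 : P₃ * P₅ = 0 := by simpa using hdisj 2 4 (by decide)
  have e36 : P₃ * P₆ = 0 := by simpa using hdisj 2 5 (by decide)
  have e45 : P₄ * P₅ = 0 := by simpa using hdisj 3 4 (by decide)
  have e46 : P₄ * P₆ = 0 := by simpa using hdisj 3 5 (by decide)
  have e52 : P₅ * P₂ = 0 := by simpa using hdisj 4 1 (by decide)
  have e53 : P₅ * P₃ = 0 := by simpa using hdisj 4 2 (by decide)
  have e54 : P₅ * P₄ = 0 := by simpa using hdisj 4 3 (by decide)
  have e56 : P₅ * P₆ = 0 := by simpa using hdisj 4 5 (by decide)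
  refine ⟨?_, ?_, ?_, ?_, ?_, e66, e55⟩ <;>
    simp [add_mul, mul_add, e22, e33, e44, e55, e66, e12, e13, e14, e15, e16, e23, e25,
      e26, e32, e35, e36, e45, e46, e52, e53, e54, e56]

end MyHelpers

set_option maxHeartbeats 4000000 in
/-- uniform bound `‖∫₀^∞ G(x,s) ḡ(s) ds‖ ≤ K₁ sup ‖ḡ‖` for all
continuous bounded `ḡ` satisfying the orthogonality condition
`∫₀^∞ P₆ Y(s;x₀)⁻¹ ḡ(s) ds = 0`. -/
theorem green_integral_uniform_bound (n : ℕ)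
    (A : EuclideanSpace ℝ (Fin n) →L[ℝ] EuclideanSpace ℝ (Fin n))
    (B : ℝ → EuclideanSpace ℝ (Fin n) →L[ℝ] EuclideanSpace ℝ (Fin n))
    (hBcont : ContinuousOn B (Set.Ioi 0)) (hBbdd : ∃ M, ∀ x > (0 : ℝ), ‖B x‖ ≤ M)
    (x₀ : ℝ) (hx₀ : 0 < x₀)
    (Y : ℝ → EuclideanSpace ℝ (Fin n) →L[ℝ] EuclideanSpace ℝ (Fin n))
    (hYd : ∀ x > (0 : ℝ), HasDerivAt Y ((x⁻¹ • A + B x) ∘L Y x) x)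
    (hYx₀ : Y x₀ = 1) (hYu : ∀ x > (0 : ℝ), IsUnit (Y x))
    (P₁ P₂ P₃ P₄ P₅ P₆ : EuclideanSpace ℝ (Fin n) →L[ℝ] EuclideanSpace ℝ (Fin n))
    (hsum : P₁ + P₂ + P₃ + P₄ + P₅ + P₆ = 1)
    (hidem : ∀ i, ![P₁, P₂, P₃, P₄, P₅, P₆] i ∘L ![P₁, P₂, P₃, P₄, P₅, P₆] i
      = ![P₁, P₂, P₃, P₄, P₅, P₆] i)
    (hdisj : ∀ i j, i ≠ j →
      ![P₁, P₂, P₃, P₄, P₅, P₆] i ∘L ![P₁, P₂, P₃, P₄, P₅, P₆] j = 0)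
    (C₀ α : ℝ) (hC₀ : 0 < C₀) (hα : 0 < α)
    (hQp : ∀ x s : ℝ, 0 < x → x ≤ s → s ≤ x₀ →
      ‖Y x ∘L (P₁ + P₄) ∘L Ring.inverse (Y s)‖ ≤ C₀ * (x / s) ^ (1 + α))
    (hQm : ∀ x s : ℝ, 0 < s → s ≤ x → x ≤ x₀ →
      ‖Y x ∘L (P₂ + P₃ + P₅ + P₆) ∘L Ring.inverse (Y s)‖ ≤ C₀ * (x / s) ^ (1 - α))
    (Cs γ : ℝ) (hCs : 0 < Cs) (hγ : 0 < γ)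
    (hPm : ∀ x s : ℝ, x₀ ≤ s → s ≤ x →
      ‖Y x ∘L (P₁ + P₂ + P₃) ∘L Ring.inverse (Y s)‖ ≤ Cs * Real.exp (-(γ * (x - s))))
    (hPp : ∀ x s : ℝ, x₀ ≤ x → x ≤ s →
      ‖Y x ∘L (P₄ + P₅ + P₆) ∘L Ring.inverse (Y s)‖ ≤ Cs * Real.exp (-(γ * (s - x))))
    -- the additional assumption C₇ = sup_{x ∈ (0,x₀]} ‖Y(x;x₀) P₅‖ < ∞
    (C₇ : ℝ) (hC₇ : ∀ x ∈ Set.Ioc (0 : ℝ) x₀, ‖Y x ∘L P₅‖ ≤ C₇) :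
    ∃ K₁ > (0 : ℝ),
      ∀ g : ℝ → EuclideanSpace ℝ (Fin n), ∀ mg : ℝ,
        ContinuousOn g (Set.Ici 0) →
        (∀ s ≥ (0 : ℝ), ‖g s‖ ≤ mg) →
        IntegrableOn (fun s => (P₆ ∘L Ring.inverse (Y s)) (g s)) (Set.Ioi 0) →
        (∫ s in Set.Ioi (0 : ℝ), (P₆ ∘L Ring.inverse (Y s)) (g s)) = 0 →
        ∀ x > (0 : ℝ),
          ‖∫ s in Set.Ioi (0 : ℝ), (greenG Y x₀ P₁ P₂ P₃ P₄ P₅ P₆ x s) (g s)‖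
            ≤ K₁ * mg := by
  classical
  obtain ⟨fPmQm, f5Qm, f5Pp, fQp4, f4Pp, f66, f55⟩ :=
    my_proj_facts P₁ P₂ P₃ P₄ P₅ P₆ hidem hdisj
  have hC₇0 : 0 ≤ C₇ := le_trans (norm_nonneg _) (hC₇ x₀ ⟨hx₀, le_rfl⟩)
  set cP5 : ℝ := C₇ * ‖P₅‖ with hcP5def
  have hcP5n : 0 ≤ cP5 := mul_nonneg hC₇0 (norm_nonneg _)
  set tA : ℝ := C₀ * x₀ / α + cP5 * C₀ * x₀ / α with htAdef
  set tC : ℝ := (C₀ * ‖P₄‖ + cP5) * Cs / γ with htCdef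
  set tD : ℝ := Cs * C₀ * x₀ / α with htDdef
  set tE : ℝ := Cs / γ with htEdef
  have htAn : 0 ≤ tA := add_nonneg (by positivity)
    (div_nonneg (mul_nonneg (mul_nonneg hcP5n hC₀.le) hx₀.le) hα.le)
  have htCn : 0 ≤ tC :=
    div_nonneg (mul_nonneg (add_nonneg (by positivity) hcP5n) hCs.le) hγ.le
  have htDn : 0 ≤ tD := by positivity
  have htEn : 0 ≤ tE := by positivity
  refine ⟨1 + (tA + tA + tC) + (tD + tE + tE), by linarith, ?_⟩
  intro g mg hgc hgb hP6i hP6o x hx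
  have hmg : 0 ≤ mg := le_trans (norm_nonneg _) (hgb 0 le_rfl)
  by_cases hInt : IntegrableOn (fun s => (greenG Y x₀ P₁ P₂ P₃ P₄ P₅ P₆ x s) (g s)) (Ioi 0)
  swap
  · rw [integral_undef hInt]
    simp only [norm_zero]
    exact mul_nonneg (by linarith) hmg
  -- common facts
  have hrpow_div : ∀ a : ℝ, 0 < a → ∀ s : ℝ, 0 < s → ∀ e : ℝ,
      (a / s) ^ e = a ^ e * s ^ (-e) := by
    intro a ha s hs e
    rw [Real.div_rpow ha.le hs.le, Real.rpow_neg hs.le, div_eq_mul_inv]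
  have hpow1 : ∀ a : ℝ, 0 < a → a ^ (1 - α) * a ^ α = a := by
    intro a ha
    rw [← Real.rpow_add ha]
    norm_num
  have hgs : ∀ s : ℝ, 0 < s → ‖g s‖ ≤ mg := fun s hs => hgb s hs.le
  have hne : ∀ᵐ s : ℝ, s ≠ x₀ := by
    have h0 : (volume : Measure ℝ) {x₀} = 0 := Real.volume_singleton
    exact ((measure_eq_zero_iff_ae_notMem (μ := (volume : Measure ℝ))).mp h0).mono
      (fun s hs => by simpa using hs)
  have NB1 : ∀ s : ℝ, 0 < s → s ≤ x₀ →
      ‖(P₂ + P₃ + P₅ + P₆) * Ring.inverse (Y s)‖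
        ≤ C₀ * (x₀ ^ (1 - α) * s ^ (α - 1)) := by
    intro s hs hsx₀
    have h : ‖Y x₀ * ((P₂ + P₃ + P₅ + P₆) * Ring.inverse (Y s))‖
        ≤ C₀ * (x₀ / s) ^ (1 - α) := hQm x₀ s hs hsx₀ le_rfl
    rwa [hYx₀, one_mul, hrpow_div x₀ hx₀ s hs, neg_sub] at h
  have NB2 : ∀ s : ℝ, x₀ ≤ s →
      ‖(P₄ + P₅ + P₆) * Ring.inverse (Y s)‖ ≤ Cs * Real.exp (-(γ * (s - x₀))) := by
    intro s hs
    have h : ‖Y x₀ * ((P₄ + P₅ + P₆) * Ring.inverse (Y s))‖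
        ≤ Cs * Real.exp (-(γ * (s - x₀))) := hPp x₀ s le_rfl hs
    rwa [hYx₀, one_mul] at h
  rcases le_or_gt x x₀ with hxx | hxx
  -- ================= CASE 1 : x ≤ x₀ =================
  · set φ : ℝ → EuclideanSpace ℝ (Fin n) :=
      fun s => ((Y x * P₆) * (P₆ * Ring.inverse (Y s))) (g s) with hφdef
    have hφint : IntegrableOn φ (Ioi 0) := (Y x * P₆).integrable_comp hP6i
    have hφ0 : (∫ s in Ioi 0, φ s) = 0 := by
      have h2 : (∫ s in Ioi 0, φ s)
          = (Y x * P₆) (∫ s in Ioi 0, (P₆ ∘L Ring.inverse (Y s)) (g s)) :=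
        ContinuousLinearMap.integral_comp_comm (Y x * P₆) hP6i
      rw [h2, hP6o, map_zero]
    set h₁ : ℝ → EuclideanSpace ℝ (Fin n) :=
      fun s => (greenG Y x₀ P₁ P₂ P₃ P₄ P₅ P₆ x s) (g s) + φ s with hh₁def
    have hh₁int : IntegrableOn h₁ (Ioi 0) := hInt.add hφint
    have key : (∫ s in Ioi (0:ℝ), (greenG Y x₀ P₁ P₂ P₃ P₄ P₅ P₆ x s) (g s))
        = ∫ s in Ioi (0:ℝ), h₁ s := by
      have h3 : (∫ s in Ioi (0:ℝ), h₁ s)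
          = (∫ s in Ioi (0:ℝ), (greenG Y x₀ P₁ P₂ P₃ P₄ P₅ P₆ x s) (g s))
            + ∫ s in Ioi (0:ℝ), φ s := integral_add hInt hφint
      rw [hφ0, add_zero] at h3
      exact h3.symm
    rw [key]
    -- operator identities
    have e6 : ∀ s : ℝ, (Y x * P₆) * (P₆ * Ring.inverse (Y s))
        = Y x * (P₆ * Ring.inverse (Y s)) := by
      intro s
      rw [← mul_assoc, mul_assoc (Y x), f66, mul_assoc]
    have I1 : ∀ s : ℝ, (Y x * P₅) * (P₅ * ((P₂ + P₃ + P₅ + P₆) * Ring.inverse (Y s)))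
        = Y x * (P₅ * Ring.inverse (Y s)) := by
      intro s
      rw [← mul_assoc P₅, f5Qm, ← mul_assoc, mul_assoc (Y x), f55, mul_assoc]
    have I2 : ∀ s : ℝ, (Y x * P₅) * (P₅ * ((P₄ + P₅ + P₆) * Ring.inverse (Y s)))
        = Y x * (P₅ * Ring.inverse (Y s)) := by
      intro s
      rw [← mul_assoc P₅, f5Pp, ← mul_assoc, mul_assoc (Y x), f55, mul_assoc]
    have I3 : ∀ s : ℝ, (Y x * (P₁ + P₄)) * (P₄ * ((P₄ + P₅ + P₆) * Ring.inverse (Y s)))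
        = Y x * (P₄ * Ring.inverse (Y s)) := by
      intro s
      rw [← mul_assoc P₄, f4Pp, ← mul_assoc, mul_assoc (Y x), fQp4, mul_assoc]
    -- norm bounds
    have bP5a : ∀ s : ℝ, 0 < s → s ≤ x₀ →
        ‖Y x * (P₅ * Ring.inverse (Y s))‖ ≤ cP5 * C₀ * (x₀ ^ (1 - α) * s ^ (α - 1)) := by
      intro s hs hsx₀
      rw [← I1 s]
      have c1 : ‖Y x * P₅‖ ≤ C₇ := hC₇ x ⟨hx, hxx⟩
      have c2 := NB1 s hs hsx₀
      have step : ‖(Y x * P₅) * (P₅ * ((P₂ + P₃ + P₅ + P₆) * Ring.inverse (Y s)))‖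
          ≤ ‖Y x * P₅‖ * (‖P₅‖ * ‖(P₂ + P₃ + P₅ + P₆) * Ring.inverse (Y s)‖) :=
        le_trans (norm_mul_le _ _)
          (mul_le_mul_of_nonneg_left (norm_mul_le _ _) (norm_nonneg _))
      refine step.trans ?_
      have inner : ‖P₅‖ * ‖(P₂ + P₃ + P₅ + P₆) * Ring.inverse (Y s)‖
          ≤ ‖P₅‖ * (C₀ * (x₀ ^ (1 - α) * s ^ (α - 1))) :=
        mul_le_mul_of_nonneg_left c2 (norm_nonneg _)
      have houter : ‖Y x * P₅‖ * (‖P₅‖ * ‖(P₂ + P₃ + P₅ + P₆) * Ring.inverse (Y s)‖)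
          ≤ C₇ * (‖P₅‖ * (C₀ * (x₀ ^ (1 - α) * s ^ (α - 1)))) :=
        mul_le_mul c1 inner (by positivity) hC₇0
      refine houter.trans_eq ?_
      rw [hcP5def]
      ring
    have bP5b : ∀ s : ℝ, x₀ ≤ s →
        ‖Y x * (P₅ * Ring.inverse (Y s))‖ ≤ cP5 * (Cs * Real.exp (-(γ * (s - x₀)))) := by
      intro s hs
      rw [← I2 s]
      have c1 : ‖Y x * P₅‖ ≤ C₇ := hC₇ x ⟨hx, hxx⟩
      have c2 := NB2 s hs
      have step : ‖(Y x * P₅) * (P₅ * ((P₄ + P₅ + P₆) * Ring.inverse (Y s)))‖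
          ≤ ‖Y x * P₅‖ * (‖P₅‖ * ‖(P₄ + P₅ + P₆) * Ring.inverse (Y s)‖) :=
        le_trans (norm_mul_le _ _)
          (mul_le_mul_of_nonneg_left (norm_mul_le _ _) (norm_nonneg _))
      refine step.trans ?_
      have inner : ‖P₅‖ * ‖(P₄ + P₅ + P₆) * Ring.inverse (Y s)‖
          ≤ ‖P₅‖ * (Cs * Real.exp (-(γ * (s - x₀)))) :=
        mul_le_mul_of_nonneg_left c2 (norm_nonneg _)
      have houter := mul_le_mul c1 inner (by positivity) hC₇0
      refine houter.trans_eq ?_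
      rw [hcP5def]
      ring
    have bP4 : ∀ s : ℝ, x₀ ≤ s →
        ‖Y x * (P₄ * Ring.inverse (Y s))‖
          ≤ C₀ * ‖P₄‖ * (Cs * Real.exp (-(γ * (s - x₀)))) := by
      intro s hs
      rw [← I3 s]
      have c1 : ‖Y x * (P₁ + P₄)‖ ≤ C₀ := by
        have h : ‖Y x * ((P₁ + P₄) * Ring.inverse (Y x₀))‖ ≤ C₀ * (x / x₀) ^ (1 + α) :=
          hQp x x₀ hx hxx le_rfl
        rw [hYx₀, Ring.inverse_one, mul_one] at h
        refine h.trans ?_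
        have h1 : (x / x₀) ^ (1 + α) ≤ 1 :=
          Real.rpow_le_one (by positivity) ((div_le_one hx₀).mpr hxx) (by linarith)
        exact mul_le_of_le_one_right hC₀.le h1
      have c2 := NB2 s hs
      have step : ‖(Y x * (P₁ + P₄)) * (P₄ * ((P₄ + P₅ + P₆) * Ring.inverse (Y s)))‖
          ≤ ‖Y x * (P₁ + P₄)‖ * (‖P₄‖ * ‖(P₄ + P₅ + P₆) * Ring.inverse (Y s)‖) :=
        le_trans (norm_mul_le _ _)
          (mul_le_mul_of_nonneg_left (norm_mul_le _ _) (norm_nonneg _))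
      refine step.trans ?_
      have inner : ‖P₄‖ * ‖(P₄ + P₅ + P₆) * Ring.inverse (Y s)‖
          ≤ ‖P₄‖ * (Cs * Real.exp (-(γ * (s - x₀)))) :=
        mul_le_mul_of_nonneg_left c2 (norm_nonneg _)
      have houter := mul_le_mul c1 inner (by positivity) hC₀.le
      refine houter.trans_eq ?_
      ring
    -- region A : Ioc 0 x
    have bndA : ‖∫ s in Ioc (0:ℝ) x, h₁ s‖ ≤ tA * mg := by
      have hFint : IntegrableOn
          (fun s : ℝ => (mg * (C₀ * x ^ (1 - α) + cP5 * C₀ * x₀ ^ (1 - α))) * s ^ (α - 1))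
          (Ioc 0 x) := (myIntOn_Ioc_rpow hα hx).const_mul _
      have hae : ∀ᵐ s ∂(volume.restrict (Ioc (0:ℝ) x)),
          ‖h₁ s‖ ≤ (mg * (C₀ * x ^ (1 - α) + cP5 * C₀ * x₀ ^ (1 - α))) * s ^ (α - 1) := by
        filter_upwards [ae_restrict_mem measurableSet_Ioc, ae_restrict_of_ae hne]
          with s hs hsne
        obtain ⟨hs0, hsx⟩ := hs
        have hsx₀ : s < x₀ := lt_of_le_of_ne (hsx.trans hxx) hsne
        have hG : greenG Y x₀ P₁ P₂ P₃ P₄ P₅ P₆ x s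
            = Y x * ((P₂ + P₃) * Ring.inverse (Y s)) := by
          unfold greenG
          rw [if_neg (fun hc => absurd hc.1 (not_le.mpr hsx₀)), if_pos ⟨hsx, hsx₀⟩]
          rfl
        have hop : Y x * ((P₂ + P₃) * Ring.inverse (Y s))
              + (Y x * P₆) * (P₆ * Ring.inverse (Y s))
            = Y x * ((P₂ + P₃ + P₅ + P₆) * Ring.inverse (Y s))
              - Y x * (P₅ * Ring.inverse (Y s)) := by
          rw [e6 s]
          noncomm_ring
        have hval : h₁ s = (Y x * ((P₂ + P₃ + P₅ + P₆) * Ring.inverse (Y s))) (g s)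
            - (Y x * (P₅ * Ring.inverse (Y s))) (g s) := by
          show (greenG Y x₀ P₁ P₂ P₃ P₄ P₅ P₆ x s) (g s) + φ s = _
          rw [hG, ← ContinuousLinearMap.sub_apply, ← hop, ContinuousLinearMap.add_apply]
        rw [hval]
        have hb1n : (0:ℝ) ≤ C₀ * (x ^ (1 - α) * s ^ (α - 1)) :=
          mul_nonneg hC₀.le
            (mul_nonneg (Real.rpow_nonneg hx.le _) (Real.rpow_nonneg hs0.le _))
        have b1 : ‖(Y x * ((P₂ + P₃ + P₅ + P₆) * Ring.inverse (Y s))) (g s)‖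
            ≤ (C₀ * (x ^ (1 - α) * s ^ (α - 1))) * mg := by
          refine le_trans (ContinuousLinearMap.le_opNorm _ _) ?_
          refine mul_le_mul ?_ (hgs s hs0) (norm_nonneg _) hb1n
          have h : ‖Y x * ((P₂ + P₃ + P₅ + P₆) * Ring.inverse (Y s))‖
              ≤ C₀ * (x / s) ^ (1 - α) := hQm x s hs0 hsx hxx
          rwa [hrpow_div x hx s hs0, neg_sub] at h
        have hb2n : (0:ℝ) ≤ cP5 * C₀ * (x₀ ^ (1 - α) * s ^ (α - 1)) :=
          mul_nonneg (mul_nonneg hcP5n hC₀.le)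
            (mul_nonneg (Real.rpow_nonneg hx₀.le _) (Real.rpow_nonneg hs0.le _))
        have b2 : ‖(Y x * (P₅ * Ring.inverse (Y s))) (g s)‖
            ≤ (cP5 * C₀ * (x₀ ^ (1 - α) * s ^ (α - 1))) * mg := by
          refine le_trans (ContinuousLinearMap.le_opNorm _ _) ?_
          exact mul_le_mul (bP5a s hs0 hsx₀.le) (hgs s hs0) (norm_nonneg _) hb2n
        refine le_trans (norm_sub_le _ _) ?_
        refine le_trans (add_le_add b1 b2) ?_
        apply le_of_eq
        ring
      refine le_trans (norm_integral_le_of_norm_le hFint hae) ?_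
      rw [integral_const_mul, myInt_Ioc_rpow hα hx]
      have g1 : C₀ * x ^ (1 - α) * x ^ α = C₀ * x := by
        rw [mul_assoc, hpow1 x hx]
      have g2 : cP5 * C₀ * x₀ ^ (1 - α) * x ^ α ≤ cP5 * C₀ * x₀ := by
        rw [mul_assoc]
        have hle : x ^ α ≤ x₀ ^ α := Real.rpow_le_rpow hx.le hxx hα.le
        have : x₀ ^ (1 - α) * x ^ α ≤ x₀ ^ (1 - α) * x₀ ^ α :=
          mul_le_mul_of_nonneg_left hle (Real.rpow_nonneg hx₀.le _)
        rw [hpow1 x₀ hx₀] at this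
        exact mul_le_mul_of_nonneg_left this (mul_nonneg hcP5n hC₀.le)
      have expand : (mg * (C₀ * x ^ (1 - α) + cP5 * C₀ * x₀ ^ (1 - α))) * (x ^ α / α)
          = mg * ((C₀ * x ^ (1 - α) * x ^ α + cP5 * C₀ * x₀ ^ (1 - α) * x ^ α) / α) := by
        ring
      rw [expand]
      have g1' : C₀ * x ^ (1 - α) * x ^ α ≤ C₀ * x₀ := by
        rw [g1]; exact mul_le_mul_of_nonneg_left hxx hC₀.le
      have hnum : (C₀ * x ^ (1 - α) * x ^ α + cP5 * C₀ * x₀ ^ (1 - α) * x ^ α) / α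
          ≤ (C₀ * x₀ + cP5 * C₀ * x₀) / α :=
        (div_le_div_iff_of_pos_right hα).mpr (add_le_add g1' g2)
      exact le_trans (mul_le_mul_of_nonneg_left hnum hmg) (le_of_eq (by rw [htAdef]; ring))
    -- region B : Ioc x x₀
    have bndB : ‖∫ s in Ioc x x₀, h₁ s‖ ≤ tA * mg := by
      have hi1 : IntegrableOn (fun s : ℝ => (mg * (C₀ * x ^ (1 + α))) * s ^ (-(1 + α)))
          (Ioc x x₀) :=
        ((myIntOn_Ioi_rpow hα hx).mono_set Ioc_subset_Ioi_self).const_mul _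
      have hi2 : IntegrableOn
          (fun s : ℝ => (mg * (cP5 * C₀ * x₀ ^ (1 - α))) * s ^ (α - 1)) (Ioc x x₀) :=
        ((myIntOn_Ioc_rpow hα hx₀).mono_set (Ioc_subset_Ioc_left hx.le)).const_mul _
      have hFint : IntegrableOn
          (fun s : ℝ => (mg * (C₀ * x ^ (1 + α))) * s ^ (-(1 + α))
            + (mg * (cP5 * C₀ * x₀ ^ (1 - α))) * s ^ (α - 1)) (Ioc x x₀) := hi1.add hi2
      have hae : ∀ᵐ s ∂(volume.restrict (Ioc x x₀)),
          ‖h₁ s‖ ≤ (mg * (C₀ * x ^ (1 + α))) * s ^ (-(1 + α))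
            + (mg * (cP5 * C₀ * x₀ ^ (1 - α))) * s ^ (α - 1) := by
        filter_upwards [ae_restrict_mem measurableSet_Ioc, ae_restrict_of_ae hne]
          with s hs hsne
        obtain ⟨hxs, hsx₀'⟩ := hs
        have hs0 : 0 < s := hx.trans hxs
        have hsx₀ : s < x₀ := lt_of_le_of_ne hsx₀' hsne
        have hG : greenG Y x₀ P₁ P₂ P₃ P₄ P₅ P₆ x s
            = -(Y x * ((P₁ + P₄ + P₅ + P₆) * Ring.inverse (Y s))) := by
          unfold greenG
          rw [if_neg (fun hc => absurd hc.1 (not_le.mpr hsx₀)),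
            if_neg (fun hc => absurd hc.1 (not_le.mpr hxs)), if_pos ⟨hxs, hsx₀⟩]
          rfl
        have hop : -(Y x * ((P₁ + P₄ + P₅ + P₆) * Ring.inverse (Y s)))
              + (Y x * P₆) * (P₆ * Ring.inverse (Y s))
            = -(Y x * ((P₁ + P₄) * Ring.inverse (Y s)))
              - Y x * (P₅ * Ring.inverse (Y s)) := by
          rw [e6 s]
          noncomm_ring
        have hval : h₁ s = -((Y x * ((P₁ + P₄) * Ring.inverse (Y s))) (g s))
            - (Y x * (P₅ * Ring.inverse (Y s))) (g s) := by
          show (greenG Y x₀ P₁ P₂ P₃ P₄ P₅ P₆ x s) (g s) + φ s = _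
          rw [hG, ← ContinuousLinearMap.neg_apply, ← ContinuousLinearMap.sub_apply,
            ← hop, ContinuousLinearMap.add_apply]
        rw [hval]
        have hb1n : (0:ℝ) ≤ C₀ * (x ^ (1 + α) * s ^ (-(1 + α))) :=
          mul_nonneg hC₀.le
            (mul_nonneg (Real.rpow_nonneg hx.le _) (Real.rpow_nonneg hs0.le _))
        have b1 : ‖(Y x * ((P₁ + P₄) * Ring.inverse (Y s))) (g s)‖
            ≤ (C₀ * (x ^ (1 + α) * s ^ (-(1 + α)))) * mg := by
          refine le_trans (ContinuousLinearMap.le_opNorm _ _) ?_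
          refine mul_le_mul ?_ (hgs s hs0) (norm_nonneg _) hb1n
          have h : ‖Y x * ((P₁ + P₄) * Ring.inverse (Y s))‖
              ≤ C₀ * (x / s) ^ (1 + α) := hQp x s hx hxs.le hsx₀.le
          rwa [hrpow_div x hx s hs0] at h
        have hb2n : (0:ℝ) ≤ cP5 * C₀ * (x₀ ^ (1 - α) * s ^ (α - 1)) :=
          mul_nonneg (mul_nonneg hcP5n hC₀.le)
            (mul_nonneg (Real.rpow_nonneg hx₀.le _) (Real.rpow_nonneg hs0.le _))
        have b2 : ‖(Y x * (P₅ * Ring.inverse (Y s))) (g s)‖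
            ≤ (cP5 * C₀ * (x₀ ^ (1 - α) * s ^ (α - 1))) * mg := by
          refine le_trans (ContinuousLinearMap.le_opNorm _ _) ?_
          exact mul_le_mul (bP5a s hs0 hsx₀.le) (hgs s hs0) (norm_nonneg _) hb2n
        refine le_trans (norm_sub_le _ _) ?_
        rw [norm_neg]
        refine le_trans (add_le_add b1 b2) ?_
        apply le_of_eq
        ring
      refine le_trans (norm_integral_le_of_norm_le hFint hae) ?_
      have hadd : (∫ s in Ioc x x₀, ((mg * (C₀ * x ^ (1 + α))) * s ^ (-(1 + α))
            + (mg * (cP5 * C₀ * x₀ ^ (1 - α))) * s ^ (α - 1)))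
          = (∫ s in Ioc x x₀, (mg * (C₀ * x ^ (1 + α))) * s ^ (-(1 + α)))
            + (∫ s in Ioc x x₀, (mg * (cP5 * C₀ * x₀ ^ (1 - α))) * s ^ (α - 1)) :=
        integral_add hi1 hi2
      rw [hadd, integral_const_mul, integral_const_mul]
      have hmono1 : (∫ s in Ioc x x₀, s ^ (-(1 + α))) ≤ x ^ (-α) / α := by
        rw [← myInt_Ioi_rpow hα hx]
        refine setIntegral_mono_set (myIntOn_Ioi_rpow hα hx) ?_
          (HasSubset.Subset.eventuallyLE Ioc_subset_Ioi_self)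
        filter_upwards [ae_restrict_mem measurableSet_Ioi] with s hs
        exact Real.rpow_nonneg (le_of_lt (hx.trans hs)) _
      have hmono2 : (∫ s in Ioc x x₀, s ^ (α - 1)) ≤ x₀ ^ α / α := by
        rw [← myInt_Ioc_rpow hα hx₀]
        refine setIntegral_mono_set (myIntOn_Ioc_rpow hα hx₀) ?_
          (HasSubset.Subset.eventuallyLE (Ioc_subset_Ioc_left hx.le))
        filter_upwards [ae_restrict_mem measurableSet_Ioc] with s hs
        exact Real.rpow_nonneg (le_of_lt hs.1) _
      have hc1n : (0:ℝ) ≤ mg * (C₀ * x ^ (1 + α)) :=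
        mul_nonneg hmg (mul_nonneg hC₀.le (Real.rpow_nonneg hx.le _))
      have hc2n : (0:ℝ) ≤ mg * (cP5 * C₀ * x₀ ^ (1 - α)) :=
        mul_nonneg hmg (mul_nonneg (mul_nonneg hcP5n hC₀.le) (Real.rpow_nonneg hx₀.le _))
      have step := add_le_add (mul_le_mul_of_nonneg_left hmono1 hc1n)
        (mul_le_mul_of_nonneg_left hmono2 hc2n)
      refine le_trans step ?_
      have gx : x ^ (1 + α) * x ^ (-α) = x := by
        rw [← Real.rpow_add hx]
        norm_num
      have e1 : mg * (C₀ * x ^ (1 + α)) * (x ^ (-α) / α) = mg * (C₀ * x / α) := by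
        rw [show mg * (C₀ * x ^ (1 + α)) * (x ^ (-α) / α)
            = mg * C₀ * (x ^ (1 + α) * x ^ (-α)) / α from by ring, gx]
        ring
      have e2 : mg * (cP5 * C₀ * x₀ ^ (1 - α)) * (x₀ ^ α / α)
          = mg * (cP5 * C₀ * x₀ / α) := by
        rw [show mg * (cP5 * C₀ * x₀ ^ (1 - α)) * (x₀ ^ α / α)
            = mg * (cP5 * C₀) * (x₀ ^ (1 - α) * x₀ ^ α) / α from by ring, hpow1 x₀ hx₀]
        ring
      rw [e1, e2]
      have hlast : mg * (C₀ * x / α) ≤ mg * (C₀ * x₀ / α) :=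
        mul_le_mul_of_nonneg_left
          ((div_le_div_iff_of_pos_right hα).mpr (mul_le_mul_of_nonneg_left hxx hC₀.le)) hmg
      refine le_trans (add_le_add hlast le_rfl) (le_of_eq ?_)
      rw [htAdef]
      ring
    -- region C : Ioi x₀
    have bndC : ‖∫ s in Ioi x₀, h₁ s‖ ≤ tC * mg := by
      have hFint : IntegrableOn
          (fun s : ℝ => (mg * ((C₀ * ‖P₄‖ + cP5) * Cs)) * Real.exp (-(γ * (s - x₀))))
          (Ioi x₀) := (myIntOn_exp_tail hγ x₀).const_mul _
      have hae : ∀ᵐ s ∂(volume.restrict (Ioi x₀)),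
          ‖h₁ s‖ ≤ (mg * ((C₀ * ‖P₄‖ + cP5) * Cs)) * Real.exp (-(γ * (s - x₀))) := by
        filter_upwards [ae_restrict_mem measurableSet_Ioi] with s hs
        have hs0 : 0 < s := hx₀.trans hs
        have hsx : ¬ s ≤ x := not_le.mpr (lt_of_le_of_lt hxx hs)
        have hG : greenG Y x₀ P₁ P₂ P₃ P₄ P₅ P₆ x s
            = -(Y x * ((P₄ + P₅ + P₆) * Ring.inverse (Y s))) := by
          unfold greenG
          rw [if_neg (fun hc => absurd hc.2 hsx), if_neg (fun hc => absurd hc.1 hsx),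
            if_neg (fun hc => absurd hc.2 (not_lt.mpr hs.le))]
          rfl
        have hop : -(Y x * ((P₄ + P₅ + P₆) * Ring.inverse (Y s)))
              + (Y x * P₆) * (P₆ * Ring.inverse (Y s))
            = -(Y x * (P₄ * Ring.inverse (Y s)))
              - Y x * (P₅ * Ring.inverse (Y s)) := by
          rw [e6 s]
          noncomm_ring
        have hval : h₁ s = -((Y x * (P₄ * Ring.inverse (Y s))) (g s))
            - (Y x * (P₅ * Ring.inverse (Y s))) (g s) := by
          show (greenG Y x₀ P₁ P₂ P₃ P₄ P₅ P₆ x s) (g s) + φ s = _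
          rw [hG, ← ContinuousLinearMap.neg_apply, ← ContinuousLinearMap.sub_apply,
            ← hop, ContinuousLinearMap.add_apply]
        rw [hval]
        have hexpn : (0:ℝ) ≤ Real.exp (-(γ * (s - x₀))) := (Real.exp_pos _).le
        have b1 : ‖(Y x * (P₄ * Ring.inverse (Y s))) (g s)‖
            ≤ (C₀ * ‖P₄‖ * (Cs * Real.exp (-(γ * (s - x₀))))) * mg := by
          refine le_trans (ContinuousLinearMap.le_opNorm _ _) ?_
          refine mul_le_mul (bP4 s hs.le) (hgs s hs0) (norm_nonneg _) ?_
          exact mul_nonneg (mul_nonneg hC₀.le (norm_nonneg _)) (mul_nonneg hCs.le hexpn)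
        have b2 : ‖(Y x * (P₅ * Ring.inverse (Y s))) (g s)‖
            ≤ (cP5 * (Cs * Real.exp (-(γ * (s - x₀))))) * mg := by
          refine le_trans (ContinuousLinearMap.le_opNorm _ _) ?_
          refine mul_le_mul (bP5b s hs.le) (hgs s hs0) (norm_nonneg _) ?_
          exact mul_nonneg hcP5n (mul_nonneg hCs.le hexpn)
        refine le_trans (norm_sub_le _ _) ?_
        rw [norm_neg]
        refine le_trans (add_le_add b1 b2) ?_
        apply le_of_eq
        ring
      refine le_trans (norm_integral_le_of_norm_le hFint hae) ?_
      rw [integral_const_mul, myInt_exp_tail hγ x₀]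
      apply le_of_eq
      rw [htCdef]
      ring
    -- assembling case 1
    have hsub1 : Ioc (0:ℝ) x ⊆ Ioi 0 := Ioc_subset_Ioi_self
    have hsub2 : Ioc x x₀ ⊆ Ioi (0:ℝ) := fun s hs => hx.trans hs.1
    have hsub3 : Ioi x₀ ⊆ Ioi (0:ℝ) := fun s hs => lt_trans hx₀ hs
    have hsplit : (∫ s in Ioi (0:ℝ), h₁ s)
        = (∫ s in Ioc (0:ℝ) x, h₁ s)
          + ((∫ s in Ioc x x₀, h₁ s) + (∫ s in Ioi x₀, h₁ s)) := by
      have d2 : Disjoint (Ioc x x₀) (Ioi x₀) :=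
        Set.disjoint_left.mpr (fun s hs hs' => absurd hs.2 (not_le.mpr hs'))
      have u2 : Ioc x x₀ ∪ Ioi x₀ = Ioi x := Set.Ioc_union_Ioi_eq_Ioi hxx
      have d1 : Disjoint (Ioc (0:ℝ) x) (Ioi x) :=
        Set.disjoint_left.mpr (fun s hs hs' => absurd hs.2 (not_le.mpr hs'))
      have u1 : Ioc (0:ℝ) x ∪ Ioi x = Ioi 0 := Set.Ioc_union_Ioi_eq_Ioi hx.le
      have i1a : IntegrableOn h₁ (Ioc (0:ℝ) x) := hh₁int.mono_set hsub1
      have i1b : IntegrableOn h₁ (Ioi x) := hh₁int.mono_set (Set.Ioi_subset_Ioi hx.le)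
      have i2a : IntegrableOn h₁ (Ioc x x₀) := hh₁int.mono_set hsub2
      have i2b : IntegrableOn h₁ (Ioi x₀) := hh₁int.mono_set hsub3
      have e3 : (∫ s in Ioi x, h₁ s)
          = (∫ s in Ioc x x₀, h₁ s) + (∫ s in Ioi x₀, h₁ s) := by
        rw [← u2]
        exact setIntegral_union d2 measurableSet_Ioi i2a i2b
      rw [← u1, setIntegral_union d1 measurableSet_Ioi i1a i1b, e3]
    rw [hsplit]
    refine le_trans (norm_add_le _ _) ?_
    refine le_trans
      (add_le_add bndA (le_trans (norm_add_le _ _) (add_le_add bndB bndC))) ?_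
    nlinarith [mul_nonneg htDn hmg, mul_nonneg htEn hmg, hmg,
      mul_nonneg htAn hmg, mul_nonneg htCn hmg]
  -- ================= CASE 2 : x₀ < x =================
  · have NB4 : ‖Y x * (P₁ + P₂ + P₃)‖ ≤ Cs := by
      have h : ‖Y x * ((P₁ + P₂ + P₃) * Ring.inverse (Y x₀))‖
          ≤ Cs * Real.exp (-(γ * (x - x₀))) := hPm x x₀ le_rfl hxx.le
      rw [hYx₀, Ring.inverse_one, mul_one] at h
      refine h.trans (mul_le_of_le_one_right hCs.le ?_)
      rw [Real.exp_le_one_iff]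
      have h2 : 0 ≤ γ * (x - x₀) := mul_nonneg hγ.le (by linarith)
      linarith
    have I4 : ∀ s : ℝ, (Y x * (P₁ + P₂ + P₃)) * ((P₂ + P₃ + P₅ + P₆) * Ring.inverse (Y s))
        = Y x * ((P₂ + P₃) * Ring.inverse (Y s)) := by
      intro s
      rw [← mul_assoc, mul_assoc (Y x), fPmQm, mul_assoc]
    -- region D : Ioc 0 x₀
    have bndD : ‖∫ s in Ioc (0:ℝ) x₀, (greenG Y x₀ P₁ P₂ P₃ P₄ P₅ P₆ x s) (g s)‖
        ≤ tD * mg := by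
      have hFint : IntegrableOn
          (fun s : ℝ => (mg * (Cs * C₀ * x₀ ^ (1 - α))) * s ^ (α - 1)) (Ioc 0 x₀) :=
        (myIntOn_Ioc_rpow hα hx₀).const_mul _
      have hae : ∀ᵐ s ∂(volume.restrict (Ioc (0:ℝ) x₀)),
          ‖(greenG Y x₀ P₁ P₂ P₃ P₄ P₅ P₆ x s) (g s)‖
            ≤ (mg * (Cs * C₀ * x₀ ^ (1 - α))) * s ^ (α - 1) := by
        filter_upwards [ae_restrict_mem measurableSet_Ioc, ae_restrict_of_ae hne]
          with s hs hsne
        obtain ⟨hs0, hsx₀'⟩ := hs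
        have hsx₀ : s < x₀ := lt_of_le_of_ne hsx₀' hsne
        have hG : greenG Y x₀ P₁ P₂ P₃ P₄ P₅ P₆ x s
            = Y x * ((P₂ + P₃) * Ring.inverse (Y s)) := by
          unfold greenG
          rw [if_neg (fun hc => absurd hc.1 (not_le.mpr hsx₀)),
            if_pos ⟨le_of_lt (lt_of_lt_of_le hsx₀ hxx.le), hsx₀⟩]
          rfl
        rw [hG, ← I4 s]
        refine le_trans (ContinuousLinearMap.le_opNorm _ _) ?_
        have hker : ‖(Y x * (P₁ + P₂ + P₃)) * ((P₂ + P₃ + P₅ + P₆) * Ring.inverse (Y s))‖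
            ≤ Cs * (C₀ * (x₀ ^ (1 - α) * s ^ (α - 1))) := by
          refine le_trans (norm_mul_le _ _) ?_
          exact mul_le_mul NB4 (NB1 s hs0 hsx₀.le) (norm_nonneg _) hCs.le
        have hbn : (0:ℝ) ≤ Cs * (C₀ * (x₀ ^ (1 - α) * s ^ (α - 1))) :=
          mul_nonneg hCs.le (mul_nonneg hC₀.le
            (mul_nonneg (Real.rpow_nonneg hx₀.le _) (Real.rpow_nonneg hs0.le _)))
        refine le_trans (mul_le_mul hker (hgs s hs0) (norm_nonneg _) hbn)
          (le_of_eq (by ring))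
      refine le_trans (norm_integral_le_of_norm_le hFint hae) ?_
      rw [integral_const_mul, myInt_Ioc_rpow hα hx₀,
        show mg * (Cs * C₀ * x₀ ^ (1 - α)) * (x₀ ^ α / α)
          = mg * (Cs * C₀) * (x₀ ^ (1 - α) * x₀ ^ α) / α from by ring, hpow1 x₀ hx₀]
      rw [htDdef]
      apply le_of_eq
      ring
    -- region E : Ioc x₀ x
    have bndE : ‖∫ s in Ioc x₀ x, (greenG Y x₀ P₁ P₂ P₃ P₄ P₅ P₆ x s) (g s)‖
        ≤ tE * mg := by
      have hFint : IntegrableOn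
          (fun s : ℝ => (mg * Cs) * Real.exp (-(γ * (x - s)))) (Ioc x₀ x) :=
        (myIntOn_exp_Ioc hγ x₀ x).const_mul _
      have hae : ∀ᵐ s ∂(volume.restrict (Ioc x₀ x)),
          ‖(greenG Y x₀ P₁ P₂ P₃ P₄ P₅ P₆ x s) (g s)‖
            ≤ (mg * Cs) * Real.exp (-(γ * (x - s))) := by
        filter_upwards [ae_restrict_mem measurableSet_Ioc] with s hs
        have hs0 : 0 < s := hx₀.trans hs.1
        have hG : greenG Y x₀ P₁ P₂ P₃ P₄ P₅ P₆ x s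
            = Y x * ((P₁ + P₂ + P₃) * Ring.inverse (Y s)) := by
          unfold greenG
          rw [if_pos ⟨hs.1.le, hs.2⟩]
          rfl
        rw [hG]
        refine le_trans (ContinuousLinearMap.le_opNorm _ _) ?_
        have hker : ‖Y x * ((P₁ + P₂ + P₃) * Ring.inverse (Y s))‖
            ≤ Cs * Real.exp (-(γ * (x - s))) := hPm x s hs.1.le hs.2
        refine le_trans (mul_le_mul hker (hgs s hs0) (norm_nonneg _)
          (mul_nonneg hCs.le (Real.exp_pos _).le)) (le_of_eq (by ring))
      refine le_trans (norm_integral_le_of_norm_le hFint hae) ?_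
      rw [integral_const_mul]
      refine le_trans (mul_le_mul_of_nonneg_left (myInt_exp_Ioc hγ hxx.le)
        (mul_nonneg hmg hCs.le)) (le_of_eq ?_)
      rw [htEdef]
      ring
    -- region F : Ioi x
    have bndF : ‖∫ s in Ioi x, (greenG Y x₀ P₁ P₂ P₃ P₄ P₅ P₆ x s) (g s)‖
        ≤ tE * mg := by
      have hFint : IntegrableOn
          (fun s : ℝ => (mg * Cs) * Real.exp (-(γ * (s - x)))) (Ioi x) :=
        (myIntOn_exp_tail hγ x).const_mul _
      have hae : ∀ᵐ s ∂(volume.restrict (Ioi x)),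
          ‖(greenG Y x₀ P₁ P₂ P₃ P₄ P₅ P₆ x s) (g s)‖
            ≤ (mg * Cs) * Real.exp (-(γ * (s - x))) := by
        filter_upwards [ae_restrict_mem measurableSet_Ioi] with s hs
        have hs0 : 0 < s := lt_trans hx hs
        have hG : greenG Y x₀ P₁ P₂ P₃ P₄ P₅ P₆ x s
            = -(Y x * ((P₄ + P₅ + P₆) * Ring.inverse (Y s))) := by
          unfold greenG
          rw [if_neg (fun hc => absurd hc.2 (not_le.mpr hs)),
            if_neg (fun hc => absurd hc.1 (not_le.mpr hs)),
            if_neg (fun hc => absurd hc.2 (not_lt.mpr (le_of_lt (lt_trans hxx hs))))]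
          rfl
        rw [hG, ContinuousLinearMap.neg_apply, norm_neg]
        refine le_trans (ContinuousLinearMap.le_opNorm _ _) ?_
        have hker : ‖Y x * ((P₄ + P₅ + P₆) * Ring.inverse (Y s))‖
            ≤ Cs * Real.exp (-(γ * (s - x))) := hPp x s hxx.le hs.le
        refine le_trans (mul_le_mul hker (hgs s hs0) (norm_nonneg _)
          (mul_nonneg hCs.le (Real.exp_pos _).le)) (le_of_eq (by ring))
      refine le_trans (norm_integral_le_of_norm_le hFint hae) ?_
      rw [integral_const_mul, myInt_exp_tail hγ x]
      rw [htEdef]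
      apply le_of_eq
      ring
    -- assembling case 2
    have hsub1 : Ioc (0:ℝ) x₀ ⊆ Ioi 0 := Ioc_subset_Ioi_self
    have hsub2 : Ioc x₀ x ⊆ Ioi (0:ℝ) := fun s hs => hx₀.trans hs.1
    have hsub3 : Ioi x ⊆ Ioi (0:ℝ) := fun s hs => lt_trans hx hs
    have hsplit : (∫ s in Ioi (0:ℝ), (greenG Y x₀ P₁ P₂ P₃ P₄ P₅ P₆ x s) (g s))
        = (∫ s in Ioc (0:ℝ) x₀, (greenG Y x₀ P₁ P₂ P₃ P₄ P₅ P₆ x s) (g s))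
          + ((∫ s in Ioc x₀ x, (greenG Y x₀ P₁ P₂ P₃ P₄ P₅ P₆ x s) (g s))
            + (∫ s in Ioi x, (greenG Y x₀ P₁ P₂ P₃ P₄ P₅ P₆ x s) (g s))) := by
      have d2 : Disjoint (Ioc x₀ x) (Ioi x) :=
        Set.disjoint_left.mpr (fun s hs hs' => absurd hs.2 (not_le.mpr hs'))
      have u2 : Ioc x₀ x ∪ Ioi x = Ioi x₀ := Set.Ioc_union_Ioi_eq_Ioi hxx.le
      have d1 : Disjoint (Ioc (0:ℝ) x₀) (Ioi x₀) :=
        Set.disjoint_left.mpr (fun s hs hs' => absurd hs.2 (not_le.mpr hs'))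
      have u1 : Ioc (0:ℝ) x₀ ∪ Ioi x₀ = Ioi 0 := Set.Ioc_union_Ioi_eq_Ioi hx₀.le
      have i1a := hInt.mono_set hsub1
      have i1b := hInt.mono_set (Set.Ioi_subset_Ioi hx₀.le)
      have i2a := hInt.mono_set hsub2
      have i2b := hInt.mono_set hsub3
      have e3 : (∫ s in Ioi x₀, (greenG Y x₀ P₁ P₂ P₃ P₄ P₅ P₆ x s) (g s))
          = (∫ s in Ioc x₀ x, (greenG Y x₀ P₁ P₂ P₃ P₄ P₅ P₆ x s) (g s))
            + (∫ s in Ioi x, (greenG Y x₀ P₁ P₂ P₃ P₄ P₅ P₆ x s) (g s)) := by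
        rw [← u2]
        exact setIntegral_union d2 measurableSet_Ioi i2a i2b
      rw [← u1, setIntegral_union d1 measurableSet_Ioi i1a i1b, e3]
    rw [hsplit]
    refine le_trans (norm_add_le _ _) ?_
    refine le_trans
      (add_le_add bndD (le_trans (norm_add_le _ _) (add_le_add bndE bndF))) ?_
    nlinarith [mul_nonneg htDn hmg, mul_nonneg htEn hmg, hmg,
      mul_nonneg htAn hmg, mul_nonneg htCn hmg]
end

section
/- There exists a constant K₂ > 0, depending only on α, γ, x₀, C₀, C* and ‖P₅‖, such that ∫₀^{∞} ‖P₅ Y(x;x₀)⁻¹‖ dx ≤ K₂; consequently, for every continuous bounded ḡ : [0,∞) → ℝⁿ the integral w := −∫₀^{∞} P₅ Y(x;x₀)⁻¹ ḡ(x) dx converges absolutely and ‖w‖ ≤ K₂ · sup_{x ≥ 0} ‖ḡ(x)‖. -/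
open MeasureTheory Set Filter
open scoped Topology

set_option maxHeartbeats 1000000 in
set_option synthInstance.maxHeartbeats 1000000 in
/-- `∫₀^∞ ‖P₅ Y(x;x₀)⁻¹‖ dx ≤ K₂ < ∞`; hence for every continuous
bounded `ḡ` the integral `w = −∫₀^∞ P₅ Y(x;x₀)⁻¹ ḡ(x) dx` converges absolutely and
`‖w‖ ≤ K₂ sup ‖ḡ‖`. -/
theorem P5_row_integrable (n : ℕ)
    (A : EuclideanSpace ℝ (Fin n) →L[ℝ] EuclideanSpace ℝ (Fin n))
    (B : ℝ → EuclideanSpace ℝ (Fin n) →L[ℝ] EuclideanSpace ℝ (Fin n))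
    (hBcont : ContinuousOn B (Set.Ioi 0)) (hBbdd : ∃ M, ∀ x > (0 : ℝ), ‖B x‖ ≤ M)
    (x₀ : ℝ) (hx₀ : 0 < x₀)
    (Y : ℝ → EuclideanSpace ℝ (Fin n) →L[ℝ] EuclideanSpace ℝ (Fin n))
    (hYd : ∀ x > (0 : ℝ), HasDerivAt Y ((x⁻¹ • A + B x) ∘L Y x) x)
    (hYx₀ : Y x₀ = 1) (hYu : ∀ x > (0 : ℝ), IsUnit (Y x))
    (P₁ P₂ P₃ P₄ P₅ P₆ : EuclideanSpace ℝ (Fin n) →L[ℝ] EuclideanSpace ℝ (Fin n))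
    (hsum : P₁ + P₂ + P₃ + P₄ + P₅ + P₆ = 1)
    (hidem : ∀ i, ![P₁, P₂, P₃, P₄, P₅, P₆] i ∘L ![P₁, P₂, P₃, P₄, P₅, P₆] i
      = ![P₁, P₂, P₃, P₄, P₅, P₆] i)
    (hdisj : ∀ i j, i ≠ j →
      ![P₁, P₂, P₃, P₄, P₅, P₆] i ∘L ![P₁, P₂, P₃, P₄, P₅, P₆] j = 0)
    (C₀ α : ℝ) (hC₀ : 0 < C₀) (hα : 0 < α)
    (hQp : ∀ x s : ℝ, 0 < x → x ≤ s → s ≤ x₀ →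
      ‖Y x ∘L (P₁ + P₄) ∘L Ring.inverse (Y s)‖ ≤ C₀ * (x / s) ^ (1 + α))
    (hQm : ∀ x s : ℝ, 0 < s → s ≤ x → x ≤ x₀ →
      ‖Y x ∘L (P₂ + P₃ + P₅ + P₆) ∘L Ring.inverse (Y s)‖ ≤ C₀ * (x / s) ^ (1 - α))
    (Cs γ : ℝ) (hCs : 0 < Cs) (hγ : 0 < γ)
    (hPm : ∀ x s : ℝ, x₀ ≤ s → s ≤ x →
      ‖Y x ∘L (P₁ + P₂ + P₃) ∘L Ring.inverse (Y s)‖ ≤ Cs * Real.exp (-(γ * (x - s))))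
    (hPp : ∀ x s : ℝ, x₀ ≤ x → x ≤ s →
      ‖Y x ∘L (P₄ + P₅ + P₆) ∘L Ring.inverse (Y s)‖ ≤ Cs * Real.exp (-(γ * (s - x)))) :
    ∃ K₂ > (0 : ℝ),
      IntegrableOn (fun x => ‖P₅ ∘L Ring.inverse (Y x)‖) (Set.Ioi 0) ∧
      (∫ x in Set.Ioi (0 : ℝ), ‖P₅ ∘L Ring.inverse (Y x)‖) ≤ K₂ ∧
      ∀ g : ℝ → EuclideanSpace ℝ (Fin n), ∀ mg : ℝ,
        ContinuousOn g (Set.Ici 0) →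
        (∀ x ≥ (0 : ℝ), ‖g x‖ ≤ mg) →
        IntegrableOn (fun x => (P₅ ∘L Ring.inverse (Y x)) (g x)) (Set.Ioi 0) ∧
        ‖-∫ x in Set.Ioi (0 : ℝ), (P₅ ∘L Ring.inverse (Y x)) (g x)‖ ≤ K₂ * mg := by
  -- projector identities
  have h55 : P₅ ∘L P₅ = P₅ := hidem 4
  have h52 : P₅ ∘L P₂ = 0 := hdisj 4 1 (by decide)
  have h53 : P₅ ∘L P₃ = 0 := hdisj 4 2 (by decide)
  have h54 : P₅ ∘L P₄ = 0 := hdisj 4 3 (by decide)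
  have h56 : P₅ ∘L P₆ = 0 := hdisj 4 5 (by decide)
  have hP5Qm : P₅ ∘L (P₂ + P₃ + P₅ + P₆) = P₅ := by
    simp only [ContinuousLinearMap.comp_add, h55, h52, h53, h54, h56]
    simp
  have hP5Pp : P₅ ∘L (P₄ + P₅ + P₆) = P₅ := by
    simp only [ContinuousLinearMap.comp_add, h55, h52, h53, h54, h56]
    simp
  -- continuity of the integrand
  set F : ℝ → EuclideanSpace ℝ (Fin n) →L[ℝ] EuclideanSpace ℝ (Fin n) :=
    fun x => P₅ ∘L Ring.inverse (Y x) with hF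
  have hFc : ContinuousOn F (Ioi 0) := by
    intro x hx
    have hY : ContinuousAt Y x := (hYd x hx).continuousAt
    have hinv : ContinuousAt Ring.inverse (Y x) := by
      have hu := hYu x hx
      have := NormedRing.inverse_continuousAt hu.unit
      rwa [IsUnit.unit_spec] at this
    exact (ContinuousAt.mul continuousAt_const (hinv.comp hY)).continuousWithinAt
  -- constants
  set c₁ : ℝ := ‖P₅‖ * C₀ with hc₁
  set c₂ : ℝ := ‖P₅‖ * Cs with hc₂
  have hc₁0 : 0 ≤ c₁ := mul_nonneg (norm_nonneg _) hC₀.le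
  have hc₂0 : 0 ≤ c₂ := mul_nonneg (norm_nonneg _) hCs.le
  -- pointwise bound on (0, x₀]
  have hbound1 : ∀ s ∈ Ioc (0:ℝ) x₀, ‖F s‖ ≤ c₁ * x₀ ^ (1 - α) * s ^ (α - 1) := by
    intro s hs
    have hq := hQm x₀ s hs.1 hs.2 le_rfl
    rw [hYx₀, ContinuousLinearMap.one_def, ContinuousLinearMap.id_comp] at hq
    have hre : F s = P₅ ∘L ((P₂ + P₃ + P₅ + P₆) ∘L Ring.inverse (Y s)) := by
      rw [hF, ← ContinuousLinearMap.comp_assoc, hP5Qm]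
    calc ‖F s‖ = ‖P₅ ∘L ((P₂ + P₃ + P₅ + P₆) ∘L Ring.inverse (Y s))‖ := by rw [hre]
      _ ≤ ‖P₅‖ * ‖(P₂ + P₃ + P₅ + P₆) ∘L Ring.inverse (Y s)‖ :=
          ContinuousLinearMap.opNorm_comp_le _ _
      _ ≤ ‖P₅‖ * (C₀ * (x₀ / s) ^ (1 - α)) :=
          mul_le_mul_of_nonneg_left hq (norm_nonneg _)
      _ = c₁ * x₀ ^ (1 - α) * s ^ (α - 1) := by
          rw [Real.div_rpow hx₀.le hs.1.le, div_eq_mul_inv,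
            ← Real.rpow_neg hs.1.le, neg_sub]
          ring
  -- pointwise bound on [x₀, ∞)
  have hbound2 : ∀ s ∈ Ioi x₀, ‖F s‖ ≤ c₂ * Real.exp (-(γ * (s - x₀))) := by
    intro s hs
    have hq := hPp x₀ s le_rfl (le_of_lt hs)
    rw [hYx₀, ContinuousLinearMap.one_def, ContinuousLinearMap.id_comp] at hq
    have hre : F s = P₅ ∘L ((P₄ + P₅ + P₆) ∘L Ring.inverse (Y s)) := by
      rw [hF, ← ContinuousLinearMap.comp_assoc, hP5Pp]
    calc ‖F s‖ = ‖P₅ ∘L ((P₄ + P₅ + P₆) ∘L Ring.inverse (Y s))‖ := by rw [hre]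
      _ ≤ ‖P₅‖ * ‖(P₄ + P₅ + P₆) ∘L Ring.inverse (Y s)‖ :=
          ContinuousLinearMap.opNorm_comp_le _ _
      _ ≤ ‖P₅‖ * (Cs * Real.exp (-(γ * (s - x₀)))) :=
          mul_le_mul_of_nonneg_left hq (norm_nonneg _)
      _ = c₂ * Real.exp (-(γ * (s - x₀))) := by rw [hc₂]; ring
  -- integrability of dominating functions
  have hg1int : IntegrableOn (fun s : ℝ => c₁ * x₀ ^ (1 - α) * s ^ (α - 1)) (Ioc 0 x₀) :=
    ((intervalIntegral.intervalIntegrable_rpow' (by linarith)).1).const_mul _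
  have hg2int : IntegrableOn (fun s : ℝ => Real.exp (-(γ * (s - x₀)))) (Ioi x₀) := by
    have heq : (fun s : ℝ => Real.exp (-(γ * (s - x₀))))
        = fun s => Real.exp (γ * x₀) * Real.exp (-γ * s) := by
      funext s; rw [← Real.exp_add]; ring_nf
    rw [heq]
    exact (exp_neg_integrableOn_Ioi x₀ hγ).const_mul _
  have hg2int' : IntegrableOn (fun s : ℝ => c₂ * Real.exp (-(γ * (s - x₀)))) (Ioi x₀) :=
    hg2int.const_mul _
  -- measurability of ‖F‖ on the pieces
  have hFm1 : AEStronglyMeasurable (fun s => ‖F s‖) (volume.restrict (Ioc 0 x₀)) :=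
    ((hFc.mono Ioc_subset_Ioi_self).norm).aestronglyMeasurable measurableSet_Ioc
  have hFm2 : AEStronglyMeasurable (fun s => ‖F s‖) (volume.restrict (Ioi x₀)) :=
    ((hFc.mono fun x hx => lt_trans hx₀ hx).norm).aestronglyMeasurable measurableSet_Ioi
  -- integrability of ‖F‖ on the pieces
  have hi1 : IntegrableOn (fun s => ‖F s‖) (Ioc 0 x₀) := by
    refine Integrable.mono' hg1int hFm1 ?_
    exact (ae_restrict_iff' measurableSet_Ioc).2
      (Filter.Eventually.of_forall fun s hs => by simpa using hbound1 s hs)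
  have hi2 : IntegrableOn (fun s => ‖F s‖) (Ioi x₀) := by
    refine Integrable.mono' hg2int' hFm2 ?_
    exact (ae_restrict_iff' measurableSet_Ioi).2
      (Filter.Eventually.of_forall fun s hs => by simpa using hbound2 s hs)
  have hiall : IntegrableOn (fun s => ‖F s‖) (Ioi 0) := by
    rw [← Ioc_union_Ioi_eq_Ioi hx₀.le]
    exact hi1.union hi2
  -- values of the dominating integrals
  have hval1 : ∫ s in Ioc (0:ℝ) x₀, s ^ (α - 1) = x₀ ^ α / α := by
    rw [← intervalIntegral.integral_of_le hx₀.le,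
      integral_rpow (Or.inl (by linarith)), sub_add_cancel]
    rw [Real.zero_rpow hα.ne', sub_zero]
  have hval2 : ∫ s in Ioi x₀, Real.exp (-(γ * (s - x₀))) = 1 / γ := by
    have hd : ∀ x ∈ Ici x₀, HasDerivAt (fun s => -Real.exp (-(γ * (s - x₀))) / γ)
        (Real.exp (-(γ * (x - x₀)))) x := by
      intro x _
      have h1 : HasDerivAt (fun s : ℝ => -(γ * (s - x₀))) (-γ) x := by
        exact ((((hasDerivAt_id x).sub_const x₀).const_mul γ).neg).congr_deriv (by ring)
      have h2 := (h1.exp.neg.div_const γ)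
      exact h2.congr_deriv (by rw [mul_neg, neg_neg, mul_div_assoc, div_self hγ.ne', mul_one])
    have htend : Tendsto (fun s => -Real.exp (-(γ * (s - x₀))) / γ) atTop (𝓝 0) := by
      have h0 : Tendsto (fun s : ℝ => s - x₀) atTop atTop :=
        tendsto_atTop_add_const_right _ (-x₀) tendsto_id
      have h1 : Tendsto (fun s : ℝ => -(γ * (s - x₀))) atTop atBot :=
        tendsto_neg_atBot_iff.mpr (h0.const_mul_atTop hγ)
      have h2 : Tendsto (fun s : ℝ => Real.exp (-(γ * (s - x₀)))) atTop (𝓝 0) :=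
        Real.tendsto_exp_atBot.comp h1
      simpa using (h2.neg.div_const γ)
    rw [integral_Ioi_of_hasDerivAt_of_tendsto' hd hg2int htend]
    simp
    field_simp
  -- the constant
  set K₂ : ℝ := c₁ * x₀ ^ (1 - α) * (x₀ ^ α / α) + c₂ * (1 / γ) + 1 with hK₂
  have hK₂pos : 0 < K₂ := by
    have h1 : 0 ≤ c₁ * x₀ ^ (1 - α) * (x₀ ^ α / α) := by positivity
    have h2 : 0 ≤ c₂ * (1 / γ) := by positivity
    rw [hK₂]; linarith
  -- the main integral bound
  have hIb : (∫ s in Ioi (0:ℝ), ‖F s‖) ≤ K₂ := by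
    rw [← Ioc_union_Ioi_eq_Ioi hx₀.le,
      setIntegral_union (Ioc_disjoint_Ioi le_rfl) measurableSet_Ioi hi1 hi2]
    have hb1 : (∫ s in Ioc (0:ℝ) x₀, ‖F s‖) ≤ c₁ * x₀ ^ (1 - α) * (x₀ ^ α / α) := by
      calc (∫ s in Ioc (0:ℝ) x₀, ‖F s‖)
          ≤ ∫ s in Ioc (0:ℝ) x₀, c₁ * x₀ ^ (1 - α) * s ^ (α - 1) :=
            setIntegral_mono_on hi1 hg1int measurableSet_Ioc hbound1
        _ = c₁ * x₀ ^ (1 - α) * (x₀ ^ α / α) := by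
            rw [MeasureTheory.integral_const_mul, hval1]
    have hb2 : (∫ s in Ioi x₀, ‖F s‖) ≤ c₂ * (1 / γ) := by
      calc (∫ s in Ioi x₀, ‖F s‖)
          ≤ ∫ s in Ioi x₀, c₂ * Real.exp (-(γ * (s - x₀))) :=
            setIntegral_mono_on hi2 hg2int' measurableSet_Ioi hbound2
        _ = c₂ * (1 / γ) := by rw [MeasureTheory.integral_const_mul, hval2]
    rw [hK₂]; linarith
  refine ⟨K₂, hK₂pos, hiall, hIb, ?_⟩
  intro g mg hgc hgb
  have hmg0 : 0 ≤ mg := le_trans (norm_nonneg _) (hgb 0 le_rfl)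
  have hHc : ContinuousOn (fun x => F x (g x)) (Ioi 0) :=
    hFc.clm_apply (hgc.mono Ioi_subset_Ici_self)
  have hHm : AEStronglyMeasurable (fun x => F x (g x)) (volume.restrict (Ioi 0)) :=
    hHc.aestronglyMeasurable measurableSet_Ioi
  have hHbound : ∀ x ∈ Ioi (0:ℝ), ‖F x (g x)‖ ≤ ‖F x‖ * mg := by
    intro x hx
    calc ‖F x (g x)‖ ≤ ‖F x‖ * ‖g x‖ := (F x).le_opNorm _
      _ ≤ ‖F x‖ * mg := mul_le_mul_of_nonneg_left (hgb x (le_of_lt hx)) (norm_nonneg _)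
  have hHint : IntegrableOn (fun x => F x (g x)) (Ioi 0) := by
    refine Integrable.mono' (hiall.mul_const mg) hHm ?_
    exact (ae_restrict_iff' measurableSet_Ioi).2
      (Filter.Eventually.of_forall fun x hx => hHbound x hx)
  refine ⟨hHint, ?_⟩
  rw [norm_neg]
  calc ‖∫ x in Ioi (0:ℝ), F x (g x)‖
      ≤ ∫ x in Ioi (0:ℝ), ‖F x (g x)‖ := norm_integral_le_integral_norm _
    _ ≤ ∫ x in Ioi (0:ℝ), ‖F x‖ * mg :=
        setIntegral_mono_on hHint.norm (hiall.mul_const mg) measurableSet_Ioi hHbound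
    _ = (∫ x in Ioi (0:ℝ), ‖F x‖) * mg := MeasureTheory.integral_mul_const _ _
    _ ≤ K₂ * mg := mul_le_mul_of_nonneg_right hIb hmg0
end
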